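/- arXiv:1407.0373 — 4 statements merged into one kernel-verified Lean document; each statement's English description precedes it below -/
import Mathlib

section
/- For every partition λ of length r, the interpolated Weyl dimension function dim X_λ(t) = ∏_{i=1}^r [(t/2 + λ_i − i)·C(λ_i + t − r − i − 1, λ_i)] / [(t/2 − i)·C(λ_i + r − i, λ_i)] · ∏_{1≤i<j≤r} (λ_i − λ_j + j − i)(λ_i + λ_j + t − i − j) / ((j − i)(t − i − j)) is a polynomial in t with rational coefficients that takes integer values at all sufficiently large integers t, hence takes integer values at every integer t. -/
/-- The generalized binomial coefficient `C(x,k) = x(x−1)⋯(x−k+1)/k!` as a rational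
function of `x : ℚ`. -/
def qbinom (x : ℚ) (k : ℕ) : ℚ :=
  (∏ i ∈ Finset.range k, (x - (i : ℚ))) / (Nat.factorial k : ℚ)

namespace Stmt3Aux

/-- `∏_{k<len} (t + a + k)` -/
def PP (t : ℚ) (a : ℤ) (len : ℕ) : ℚ := ∏ k ∈ Finset.range len, (t + a + k)

/-- `∏_{k<len} (a + k)` -/
def NP (a : ℤ) (len : ℕ) : ℚ := ∏ k ∈ Finset.range len, ((a : ℚ) + k)

lemma PP_add (t : ℚ) (a : ℤ) (l₁ l₂ : ℕ) :
    PP t a (l₁ + l₂) = PP t a l₁ * PP t (a + l₁) l₂ := by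
  unfold PP
  rw [Finset.prod_range_add]
  congr 1
  refine Finset.prod_congr rfl fun k _ => ?_
  push_cast
  ring

lemma PP_ne_zero {t : ℚ} (ht : ∀ n : ℤ, 2 * t ≠ (n : ℚ)) (a : ℤ) (len : ℕ) :
    PP t a len ≠ 0 := by
  refine Finset.prod_ne_zero_iff.mpr fun k _ => fun h => ?_
  apply ht (-2 * (a + k))
  push_cast
  linarith

lemma NP_factorial (m l : ℕ) :
    NP ((m : ℤ) + 1) l = (Nat.factorial (m+l) : ℚ) / (Nat.factorial m : ℚ) := by
  induction l with
  | zero => simp [NP, div_self (Nat.cast_ne_zero.mpr (Nat.factorial_ne_zero m) : (Nat.factorial m : ℚ) ≠ 0)]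
  | succ l ih =>
    rw [NP, Finset.prod_range_succ, ← NP, ih,
      show m + (l + 1) = (m + l) + 1 by ring, Nat.factorial_succ]
    have h : (Nat.factorial m : ℚ) ≠ 0 := Nat.cast_ne_zero.mpr (Nat.factorial_ne_zero m)
    field_simp
    push_cast
    ring

def G (t : ℚ) (m : ℤ) : ℚ :=
  if 0 ≤ m then (∏ k ∈ Finset.range m.toNat, (t + k)) / (Nat.factorial m.toNat : ℚ) else 0

lemma G_eq (t : ℚ) (m : ℕ) : G t (m : ℤ) = PP t 0 m / (Nat.factorial m : ℚ) := by
  rw [G, if_pos (Int.ofNat_nonneg m)]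
  simp [PP]

lemma G_neg (t : ℚ) {m : ℤ} (h : m < 0) : G t m = 0 := if_neg (not_le.mpr h)

end Stmt3Aux
namespace Stmt3Aux

/-- the row polynomial, in the variable `w = x + t/2` -/
noncomputable def PFp (t : ℚ) (r j₁ : ℕ) : Polynomial ℚ :=
  ((∏ d ∈ Finset.range (2*j₁), (Polynomial.X + Polynomial.C (t/2 - j₁ + d))) -
    ∏ d ∈ Finset.range (2*j₁), (Polynomial.X + Polynomial.C (-(t/2) - j₁ + 1 + d))) *
  ∏ k ∈ Finset.range (r - j₁), (Polynomial.X^2 - Polynomial.C ((t/2 - (j₁ + 1 + k))^2))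

lemma PFp_eval (t : ℚ) (r j₁ : ℕ) (hjr : j₁ ≤ r) (x : ℤ) :
    (PFp t r j₁).eval ((x : ℚ) + t/2) =
      (PP t (x - j₁) (2*j₁) - NP (x - j₁ + 1) (2*j₁)) *
      (NP (x + j₁ + 1) (r - j₁) * PP t (x - r) (r - j₁)) := by
  unfold PFp
  rw [Polynomial.eval_mul, Polynomial.eval_sub, Polynomial.eval_prod, Polynomial.eval_prod,
    Polynomial.eval_prod]
  have hA : (∏ d ∈ Finset.range (2*j₁),
      (Polynomial.X + Polynomial.C (t/2 - j₁ + d)).eval ((x : ℚ) + t/2)) = PP t (x - j₁) (2*j₁) := by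
    refine Finset.prod_congr rfl fun d _ => ?_
    simp only [Polynomial.eval_add, Polynomial.eval_X, Polynomial.eval_C]
    push_cast
    ring
  have hB : (∏ d ∈ Finset.range (2*j₁),
      (Polynomial.X + Polynomial.C (-(t/2) - j₁ + 1 + d)).eval ((x : ℚ) + t/2)) =
      NP (x - j₁ + 1) (2*j₁) := by
    refine Finset.prod_congr rfl fun d _ => ?_
    simp only [Polynomial.eval_add, Polynomial.eval_X, Polynomial.eval_C]
    push_cast
    ring
  have hE : (∏ k ∈ Finset.range (r - j₁),
      (Polynomial.X^2 - Polynomial.C ((t/2 - (j₁ + 1 + k))^2)).eval ((x : ℚ) + t/2)) =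
      NP (x + j₁ + 1) (r - j₁) * PP t (x - r) (r - j₁) := by
    rw [NP, PP,
      ← Finset.prod_range_reflect (fun k => t + ((x - r : ℤ) : ℚ) + k) (r - j₁),
      ← Finset.prod_mul_distrib]
    refine Finset.prod_congr rfl fun k hk => ?_
    have hk' : k < r - j₁ := Finset.mem_range.mp hk
    have hcast : ((r - j₁ - 1 - k : ℕ) : ℚ) = (r : ℚ) - j₁ - 1 - k := by
      have : (r - j₁ - 1 - k) + k + 1 + j₁ = r := by omega
      have := congrArg (fun n : ℕ => (n : ℚ)) this
      push_cast at this
      linarith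
    simp only [Polynomial.eval_sub, Polynomial.eval_pow, Polynomial.eval_X, Polynomial.eval_C]
    rw [hcast]
    push_cast
    ring
  rw [hA, hB, hE]

end Stmt3Aux
namespace Stmt3Aux

/-- the row scalar factor -/
noncomputable def ccq (t : ℚ) (r n : ℕ) : ℚ :=
  PP t (-(2*(r:ℤ))) n / (Nat.factorial n : ℚ) * (PP t (-(2*(r:ℤ))) (2*r))⁻¹

lemma PP_congr (t : ℚ) {a b : ℤ} {l₁ l₂ : ℕ} (h1 : a = b) (h2 : l₁ = l₂) :
    PP t a l₁ = PP t b l₂ := by rw [h1, h2]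

lemma PP_glue (t : ℚ) (a : ℤ) (l₁ l₂ : ℕ) (b : ℤ) (hb : b = a + l₁) :
    PP t a (l₁ + l₂) = PP t a l₁ * PP t b l₂ := by rw [PP_add, hb]

lemma subA (t : ℚ) (ht : ∀ n : ℤ, 2 * t ≠ (n : ℚ)) (r n j₁ : ℕ)
    (hjr : j₁ ≤ r) (hrn : r ≤ n + j₁) :
    G t ((n : ℤ) - r + j₁) =
      ccq t r n * (PP t ((n : ℤ) - r - j₁) (2*j₁) *
        (NP ((n : ℤ) - r + j₁ + 1) (r - j₁) * PP t ((n : ℤ) - r - r) (r - j₁))) := by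
  set m : ℕ := n + j₁ - r with hm
  have hmn : m + (r - j₁) = n := by omega
  have h1 : ((n : ℤ) - r + j₁) = (m : ℤ) := by push_cast; omega
  have h2 : ((n : ℤ) - r + j₁ + 1) = (m : ℤ) + 1 := by push_cast; omega
  have hNP : NP ((m : ℤ) + 1) (r - j₁) = (Nat.factorial n : ℚ) / (Nat.factorial m : ℚ) := by
    rw [NP_factorial, hmn]
  have key : PP t (-(2*(r:ℤ))) n * PP t ((n:ℤ) - r - r) (r - j₁) * PP t ((n:ℤ) - r - j₁) (2*j₁)
      = PP t (-(2*(r:ℤ))) (2*r) * PP t 0 m := by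
    have g1 : PP t (-(2*(r:ℤ))) (n + (r - j₁)) = PP t (-(2*(r:ℤ))) n * PP t ((n:ℤ) - r - r) (r - j₁) :=
      PP_glue t _ n (r - j₁) _ (by omega)
    have g2 : PP t (-(2*(r:ℤ))) (n + (r - j₁) + 2*j₁)
        = PP t (-(2*(r:ℤ))) (n + (r - j₁)) * PP t ((n:ℤ) - r - j₁) (2*j₁) :=
      PP_glue t _ (n + (r - j₁)) (2*j₁) _ (by omega)
    have g3 : PP t (-(2*(r:ℤ))) (2*r + m) = PP t (-(2*(r:ℤ))) (2*r) * PP t 0 m :=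
      PP_glue t _ (2*r) m _ (by omega)
    rw [← g1, ← g2, show n + (r - j₁) + 2*j₁ = 2*r + m by omega, g3]
  rw [h1, G_eq, hNP, ccq]
  have hf1 : (Nat.factorial n : ℚ) ≠ 0 := Nat.cast_ne_zero.mpr (Nat.factorial_ne_zero n)
  have hf2 : (Nat.factorial m : ℚ) ≠ 0 := Nat.cast_ne_zero.mpr (Nat.factorial_ne_zero m)
  have hp1 : PP t (-(2*(r:ℤ))) (2*r) ≠ 0 := PP_ne_zero ht _ _
  field_simp
  linear_combination -key

lemma subB (t : ℚ) (ht : ∀ n : ℤ, 2 * t ≠ (n : ℚ)) (r n j₁ : ℕ)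
    (hjr : j₁ ≤ r) (hrn : r + j₁ ≤ n) :
    G t ((n : ℤ) - r - j₁) =
      ccq t r n * (NP ((n : ℤ) - r - j₁ + 1) (2*j₁) *
        (NP ((n : ℤ) - r + j₁ + 1) (r - j₁) * PP t ((n : ℤ) - r - r) (r - j₁))) := by
  set m' : ℕ := n - j₁ - r with hm'
  set m : ℕ := n + j₁ - r with hm
  have hmn : m + (r - j₁) = n := by omega
  have hmm : m' + 2*j₁ = m := by omega
  have h1 : ((n : ℤ) - r - j₁) = (m' : ℤ) := by push_cast; omega
  have h2 : ((n : ℤ) - r - j₁ + 1) = (m' : ℤ) + 1 := by push_cast; omega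
  have h3 : ((n : ℤ) - r + j₁ + 1) = (m : ℤ) + 1 := by push_cast; omega
  have hNP1 : NP ((m' : ℤ) + 1) (2*j₁) = (Nat.factorial m : ℚ) / (Nat.factorial m' : ℚ) := by
    rw [NP_factorial, hmm]
  have hNP2 : NP ((m : ℤ) + 1) (r - j₁) = (Nat.factorial n : ℚ) / (Nat.factorial m : ℚ) := by
    rw [NP_factorial, hmn]
  have key : PP t (-(2*(r:ℤ))) n * PP t ((n:ℤ) - r - r) (r - j₁)
      = PP t (-(2*(r:ℤ))) (2*r) * PP t 0 m' := by
    have g1 : PP t (-(2*(r:ℤ))) (n + (r - j₁)) = PP t (-(2*(r:ℤ))) n * PP t ((n:ℤ) - r - r) (r - j₁) :=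
      PP_glue t _ n (r - j₁) _ (by omega)
    have g3 : PP t (-(2*(r:ℤ))) (2*r + m') = PP t (-(2*(r:ℤ))) (2*r) * PP t 0 m' :=
      PP_glue t _ (2*r) m' _ (by omega)
    rw [← g1, show n + (r - j₁) = 2*r + m' by omega, g3]
  rw [h1, h3, G_eq, hNP1, hNP2, ccq]
  have hf1 : (Nat.factorial n : ℚ) ≠ 0 := Nat.cast_ne_zero.mpr (Nat.factorial_ne_zero n)
  have hf2 : (Nat.factorial m : ℚ) ≠ 0 := Nat.cast_ne_zero.mpr (Nat.factorial_ne_zero m)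
  have hf3 : (Nat.factorial m' : ℚ) ≠ 0 := Nat.cast_ne_zero.mpr (Nat.factorial_ne_zero m')
  have hp1 : PP t (-(2*(r:ℤ))) (2*r) ≠ 0 := PP_ne_zero ht _ _
  field_simp
  linear_combination -key

/-- The key entry factorization. -/
lemma entry (t : ℚ) (ht : ∀ n : ℤ, 2 * t ≠ (n : ℚ)) (r n j₁ : ℕ)
    (hj₁ : 1 ≤ j₁) (hjr : j₁ ≤ r) :
    G t ((n : ℤ) - r + j₁) - G t ((n : ℤ) - r - j₁) =
      ccq t r n * (PFp t r j₁).eval ((((n : ℤ) - r : ℤ) : ℚ) + t/2) := by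
  rw [PFp_eval t r j₁ hjr]
  rcases lt_or_ge (n + j₁) r with hcase | hcase
  · -- both G vanish, NP (x+j₁+1) (r-j₁) = 0
    have hG1 : G t ((n : ℤ) - r + j₁) = 0 := G_neg t (by omega)
    have hG2 : G t ((n : ℤ) - r - j₁) = 0 := G_neg t (by omega)
    have hNP0 : NP ((n : ℤ) - r + j₁ + 1) (r - j₁) = 0 := by
      rw [NP]
      apply Finset.prod_eq_zero (i := r - n - j₁ - 1) (Finset.mem_range.mpr (by omega))
      have hz : ((r - n - j₁ - 1 : ℕ) : ℚ) = (r : ℚ) - n - j₁ - 1 := by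
        have h' : (r - n - j₁ - 1 : ℕ) + n + j₁ + 1 = r := by omega
        have := congrArg (fun z : ℕ => (z : ℚ)) h'
        push_cast at this
        linarith
      rw [hz]
      push_cast
      ring
    rw [hG1, hG2, hNP0]
    ring
  · rcases lt_or_ge n (r + j₁) with hcase2 | hcase2
    · -- x - j₁ < 0 : second G and the B product vanish
      have hG2 : G t ((n : ℤ) - r - j₁) = 0 := G_neg t (by omega)
      have hB0 : NP ((n : ℤ) - r - j₁ + 1) (2*j₁) = 0 := by
        rw [NP]
        apply Finset.prod_eq_zero (i := r + j₁ - 1 - n) (Finset.mem_range.mpr (by omega))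
        have hz : ((r + j₁ - 1 - n : ℕ) : ℚ) = (r : ℚ) + j₁ - 1 - n := by
          have h' : (r + j₁ - 1 - n : ℕ) + n + 1 = r + j₁ := by omega
          have := congrArg (fun z : ℕ => (z : ℚ)) h'
          push_cast at this
          linarith
        rw [hz]
        push_cast
        ring
      rw [hG2, hB0, sub_zero]
      have := subA t ht r n j₁ hjr hcase
      linear_combination this
    · -- generic case
      have hA := subA t ht r n j₁ hjr (by omega)
      have hB := subB t ht r n j₁ hjr hcase2
      linear_combination hA - hB
end Stmt3Aux
namespace Stmt3Aux

open Polynomial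

lemma coeff_comp_neg_X (P : Polynomial ℚ) (n : ℕ) :
    (P.comp (-X)).coeff n = (-1)^n * P.coeff n := by
  induction P using Polynomial.induction_on' with
  | add p q hp hq => simp [add_comp, hp, hq, mul_add]
  | monomial k a =>
    rw [← C_mul_X_pow_eq_monomial, mul_comp, C_comp, pow_comp, X_comp, neg_pow,
      show ((-1 : Polynomial ℚ)^k) = C ((-1)^k) by
        rw [show (-1 : Polynomial ℚ) = C (-1) by rw [map_neg, map_one], ← map_pow],
      ← mul_assoc, ← C_mul, coeff_C_mul, coeff_C_mul, coeff_X_pow]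
    by_cases h : n = k
    · subst h
      simp [mul_comm]
    · simp [h]

lemma PFp_comp_neg (t : ℚ) (r j₁ : ℕ) :
    (PFp t r j₁).comp (-X) = -(PFp t r j₁) := by
  unfold PFp
  rw [mul_comp, sub_comp, Polynomial.prod_comp, Polynomial.prod_comp, Polynomial.prod_comp]
  have hswap : ∀ (c : ℕ → ℚ) (L : ℕ),
      (∏ d ∈ Finset.range L, ((X + C (c d)).comp (-X))) =
      (-1)^L * ∏ d ∈ Finset.range L, (X - C (c d)) := by
    intro c L
    rw [show ((-1 : Polynomial ℚ)^L * ∏ d ∈ Finset.range L, (X - C (c d)))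
        = ∏ d ∈ Finset.range L, ((-1) * (X - C (c d))) by
      rw [Finset.prod_mul_distrib, Finset.prod_const, Finset.card_range]]
    refine Finset.prod_congr rfl fun d _ => ?_
    rw [add_comp, X_comp, C_comp]
    ring
  have hA : (∏ d ∈ Finset.range (2*j₁), ((X + C (t/2 - j₁ + d)).comp (-X)))
      = ∏ d ∈ Finset.range (2*j₁), (X + C (-(t/2) - j₁ + 1 + d)) := by
    rw [hswap, show ((-1 : Polynomial ℚ)^(2*j₁)) = 1 by rw [pow_mul]; norm_num, one_mul,
      ← Finset.prod_range_reflect]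
    refine Finset.prod_congr rfl fun d hd => ?_
    have hd' : d < 2*j₁ := Finset.mem_range.mp hd
    have hz : ((2*j₁ - 1 - d : ℕ) : ℚ) = 2*(j₁ : ℚ) - 1 - d := by
      have h' : (2*j₁ - 1 - d : ℕ) + d + 1 = 2*j₁ := by omega
      have := congrArg (fun z : ℕ => (z : ℚ)) h'
      push_cast at this
      linarith
    rw [hz, sub_eq_add_neg, ← C_neg]
    congr 2
    push_cast
    ring
  have hB : (∏ d ∈ Finset.range (2*j₁), ((X + C (-(t/2) - j₁ + 1 + d)).comp (-X)))
      = ∏ d ∈ Finset.range (2*j₁), (X + C (t/2 - j₁ + d)) := by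
    rw [hswap, show ((-1 : Polynomial ℚ)^(2*j₁)) = 1 by rw [pow_mul]; norm_num, one_mul,
      ← Finset.prod_range_reflect]
    refine Finset.prod_congr rfl fun d hd => ?_
    have hd' : d < 2*j₁ := Finset.mem_range.mp hd
    have hz : ((2*j₁ - 1 - d : ℕ) : ℚ) = 2*(j₁ : ℚ) - 1 - d := by
      have h' : (2*j₁ - 1 - d : ℕ) + d + 1 = 2*j₁ := by omega
      have := congrArg (fun z : ℕ => (z : ℚ)) h'
      push_cast at this
      linarith
    rw [hz, sub_eq_add_neg, ← C_neg]
    congr 2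
    push_cast
    ring
  have hE : (∏ k ∈ Finset.range (r - j₁), ((X^2 - C ((t/2 - (j₁ + 1 + k))^2)).comp (-X)))
      = ∏ k ∈ Finset.range (r - j₁), (X^2 - C ((t/2 - (j₁ + 1 + k))^2)) := by
    refine Finset.prod_congr rfl fun k _ => ?_
    rw [sub_comp, pow_comp, X_comp, C_comp]
    ring
  rw [hA, hB, hE]
  ring

lemma PFp_coeff_even (t : ℚ) (r j₁ k : ℕ) : (PFp t r j₁).coeff (2*k) = 0 := by
  have h := coeff_comp_neg_X (PFp t r j₁) (2*k)
  rw [PFp_comp_neg, coeff_neg, pow_mul] at h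
  norm_num at h
  linarith

lemma PFp_natDegree_le (t : ℚ) (r j₁ : ℕ) (hjr : j₁ ≤ r) :
    (PFp t r j₁).natDegree ≤ 2*r := by
  unfold PFp
  refine le_trans (natDegree_mul_le) ?_
  have h1 : ((∏ d ∈ Finset.range (2*j₁), (X + C (t/2 - j₁ + d))) -
      ∏ d ∈ Finset.range (2*j₁), (X + C (-(t/2) - j₁ + 1 + d))).natDegree ≤ 2*j₁ := by
    refine le_trans (natDegree_sub_le _ _) ?_
    refine max_le ?_ ?_ <;>
    · refine le_trans (natDegree_prod_le _ _) ?_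
      refine le_trans (Finset.sum_le_card_nsmul _ _ 1 fun d _ => ?_) (by simp)
      exact le_of_eq (natDegree_X_add_C _)
  have h2 : (∏ k ∈ Finset.range (r - j₁), (X^2 - C ((t/2 - (j₁ + 1 + k))^2))).natDegree
      ≤ 2*(r - j₁) := by
    refine le_trans (natDegree_prod_le _ _) ?_
    refine le_trans (Finset.sum_le_card_nsmul _ _ 2 fun d _ => ?_) (by simp [mul_comm])
    refine le_trans (natDegree_sub_le _ _) (max_le ?_ ?_)
    · exact le_of_eq (natDegree_X_pow 2)
    · simp only [natDegree_C]
      exact Nat.zero_le 2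
  omega

lemma PFp_eval_expand (t : ℚ) (r j₁ : ℕ) (hjr : j₁ ≤ r) (y : ℚ) :
    (PFp t r j₁).eval y =
      ∑ k ∈ Finset.range r, (PFp t r j₁).coeff (2*k+1) * (y * (y^2)^k) := by
  have hdeg : (PFp t r j₁).natDegree < 2*r + 1 :=
    Nat.lt_succ_of_le (PFp_natDegree_le t r j₁ hjr)
  rw [Polynomial.eval_eq_sum_range' hdeg]
  have hsub : (Finset.range r).image (fun k => 2*k+1) ⊆ Finset.range (2*r+1) := by
    intro n hn
    rcases Finset.mem_image.mp hn with ⟨k, hk, rfl⟩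
    exact Finset.mem_range.mpr (by have := Finset.mem_range.mp hk; omega)
  rw [← Finset.sum_subset hsub ?hzero]
  · rw [Finset.sum_image (fun a _ b _ h => by omega)]
    refine Finset.sum_congr rfl fun k _ => ?_
    ring
  case hzero =>
    intro n hn hnim
    rcases Nat.even_or_odd n with ⟨k, hk⟩ | ⟨k, hk⟩
    · rw [hk, show k + k = 2*k by ring, PFp_coeff_even, zero_mul]
    · exfalso
      apply hnim
      refine Finset.mem_image.mpr ⟨k, Finset.mem_range.mpr ?_, by omega⟩
      have := Finset.mem_range.mp hn
      omega

end Stmt3Aux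
namespace Stmt3Aux

open Polynomial Finset

noncomputable def Gpoly (m : ℤ) : Polynomial ℚ :=
  if 0 ≤ m then C ((Nat.factorial m.toNat : ℚ))⁻¹ * ∏ k ∈ Finset.range m.toNat, (X + C (k:ℚ))
  else 0

lemma Gpoly_eval (t : ℚ) (m : ℤ) : (Gpoly m).eval t = G t m := by
  unfold Gpoly G
  split_ifs with h
  · rw [eval_mul, eval_C, eval_prod, div_eq_inv_mul]
    congr 1
    exact Finset.prod_congr rfl fun k _ => by simp
  · simp

variable (r : ℕ) (lam : Fin r → ℕ)

def nn (i : Fin r) : ℕ := lam i + (r - ((i:ℕ)+1))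

noncomputable def pPoly : Polynomial ℚ :=
  (Matrix.of fun i j : Fin r =>
     Gpoly ((lam i : ℤ) - ((i:ℕ)+1) + ((j:ℕ)+1)) -
     Gpoly ((lam i : ℤ) - ((i:ℕ)+1) - ((j:ℕ)+1))).det

def Mq (t : ℚ) : Matrix (Fin r) (Fin r) ℚ :=
  Matrix.of fun i j =>
    G t ((lam i : ℤ) - ((i:ℕ)+1) + ((j:ℕ)+1)) - G t ((lam i : ℤ) - ((i:ℕ)+1) - ((j:ℕ)+1))

lemma pPoly_eval (t : ℚ) : (pPoly r lam).eval t = (Mq r lam t).det := by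
  unfold pPoly Mq
  rw [show ((Matrix.of fun i j : Fin r =>
      Gpoly ((lam i : ℤ) - ((i:ℕ)+1) + ((j:ℕ)+1)) -
      Gpoly ((lam i : ℤ) - ((i:ℕ)+1) - ((j:ℕ)+1))).det).eval t
    = (Polynomial.evalRingHom t) ((Matrix.of fun i j : Fin r =>
      Gpoly ((lam i : ℤ) - ((i:ℕ)+1) + ((j:ℕ)+1)) -
      Gpoly ((lam i : ℤ) - ((i:ℕ)+1) - ((j:ℕ)+1))).det) from rfl, RingHom.map_det]
  congr 1
  ext i j
  simp only [RingHom.mapMatrix_apply, Matrix.map_apply, Matrix.of_apply, coe_evalRingHom]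
  rw [eval_sub, Gpoly_eval, Gpoly_eval]

/-- the points `w_i = λ_i - i + t/2` -/
def ww (t : ℚ) (i : Fin r) : ℚ := (lam i : ℚ) - ((i:ℕ)+1) + t/2

lemma M_factor (t : ℚ) (ht : ∀ z : ℤ, 2*t ≠ (z:ℚ)) :
    Mq r lam t = Matrix.of (fun i j =>
      ccq t r (nn r lam i) *
        (Matrix.of fun i' j' : Fin r =>
          (PFp t r ((j':ℕ)+1)).eval (ww r lam t i')) i j) := by
  ext i j
  have hjr : (j:ℕ)+1 ≤ r := j.isLt
  have hent := entry t ht r (nn r lam i) ((j:ℕ)+1) (by omega) hjr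
  have hxi : ((nn r lam i : ℤ) - r) = (lam i : ℤ) - ((i:ℕ)+1) := by
    have : (i:ℕ)+1 ≤ r := i.isLt
    unfold nn
    omega
  rw [hxi] at hent
  have hwi : (((lam i : ℤ) - ((i:ℕ)+1) : ℤ) : ℚ) + t/2 = ww r lam t i := by
    unfold ww
    push_cast
    ring
  rw [hwi] at hent
  exact hent

lemma E_det (t : ℚ) (v : Fin r → ℚ) :
    (Matrix.of fun i j : Fin r => (PFp t r ((j:ℕ)+1)).eval (v i)).det =
      ((∏ i : Fin r, v i) * ∏ i : Fin r, ∏ j ∈ Finset.Ioi i, (v j ^ 2 - v i ^ 2)) *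
        (Matrix.of fun k j : Fin r => (PFp t r ((j:ℕ)+1)).coeff (2*(k:ℕ)+1)).det := by
  have hdecomp : (Matrix.of fun i j : Fin r => (PFp t r ((j:ℕ)+1)).eval (v i)) =
      (Matrix.diagonal v * Matrix.vandermonde (fun i => v i ^ 2)) *
        (Matrix.of fun k j : Fin r => (PFp t r ((j:ℕ)+1)).coeff (2*(k:ℕ)+1)) := by
    ext i j
    rw [Matrix.mul_apply]
    have hjr : (j:ℕ)+1 ≤ r := j.isLt
    rw [Matrix.of_apply, PFp_eval_expand t r ((j:ℕ)+1) hjr (v i),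
      ← Fin.sum_univ_eq_sum_range (fun k => (PFp t r ((j:ℕ)+1)).coeff (2*k+1) * (v i * (v i^2)^k)) r]
    refine Finset.sum_congr rfl fun k _ => ?_
    simp only [Matrix.diagonal_mul, Matrix.vandermonde, Matrix.of_apply]
    ring
  rw [hdecomp, Matrix.det_mul, Matrix.det_mul, Matrix.det_diagonal, Matrix.det_vandermonde]

lemma base_det (t : ℚ) : (Mq r (fun _ => 0) t).det = 1 := by
  have htri : (Mq r (fun _ => 0) t).BlockTriangular id := by
    intro i j hij
    have h1 : ((0:ℕ) : ℤ) - ((i:ℕ)+1) + ((j:ℕ)+1) < 0 := by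
      simp only [id] at hij
      have : (j:ℕ) < (i:ℕ) := hij
      omega
    have h2 : ((0:ℕ) : ℤ) - ((i:ℕ)+1) - ((j:ℕ)+1) < 0 := by omega
    show G t _ - G t _ = 0
    rw [G_neg t h1, G_neg t h2, sub_zero]
  rw [Matrix.det_of_upperTriangular htri]
  refine Finset.prod_eq_one fun i _ => ?_
  show G t _ - G t _ = 1
  have h1 : ((0:ℕ) : ℤ) - ((i:ℕ)+1) + ((i:ℕ)+1) = ((0:ℕ) : ℤ) := by ring
  have h2 : ((0:ℕ) : ℤ) - ((i:ℕ)+1) - ((i:ℕ)+1) < 0 := by omega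
  rw [h1, G_neg t h2, G_eq, sub_zero]
  simp [PP]

lemma det_chain (t : ℚ) (ht : ∀ z : ℤ, 2*t ≠ (z:ℚ)) :
    (Mq r lam t).det =
      ((∏ i : Fin r, (ccq t r (nn r lam i) * ww r lam t i)) /
        (∏ i : Fin r, (ccq t r (nn r (fun _ => 0) i) * ww r (fun _ => 0) t i))) *
      ((∏ i : Fin r, ∏ j ∈ Finset.Ioi i, (ww r lam t j ^ 2 - ww r lam t i ^ 2)) /
        (∏ i : Fin r, ∏ j ∈ Finset.Ioi i,
          (ww r (fun _ => 0) t j ^ 2 - ww r (fun _ => 0) t i ^ 2))) := by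
  have hdet : ∀ mu : Fin r → ℕ, (Mq r mu t).det =
      ((∏ i : Fin r, ccq t r (nn r mu i)) *
        ((∏ i : Fin r, ww r mu t i) *
          ∏ i : Fin r, ∏ j ∈ Finset.Ioi i, (ww r mu t j ^ 2 - ww r mu t i ^ 2))) *
        (Matrix.of fun k j : Fin r => (PFp t r ((j:ℕ)+1)).coeff (2*(k:ℕ)+1)).det := by
    intro mu
    rw [M_factor r mu t ht, Matrix.det_mul_column, E_det]
    ring
  have eqA := hdet lam
  have eqB := hdet (fun _ => 0)
  rw [base_det] at eqB
  set dA := (Matrix.of fun k j : Fin r => (PFp t r ((j:ℕ)+1)).coeff (2*(k:ℕ)+1)).det with hdA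
  set α := (∏ i : Fin r, ccq t r (nn r lam i)) *
      ((∏ i : Fin r, ww r lam t i) *
        ∏ i : Fin r, ∏ j ∈ Finset.Ioi i, (ww r lam t j ^ 2 - ww r lam t i ^ 2)) with hα
  set β := (∏ i : Fin r, ccq t r (nn r (fun _ => 0) i)) *
      ((∏ i : Fin r, ww r (fun _ => 0) t i) *
        ∏ i : Fin r, ∏ j ∈ Finset.Ioi i,
          (ww r (fun _ => 0) t j ^ 2 - ww r (fun _ => 0) t i ^ 2)) with hβ
  have hβne : β ≠ 0 := by
    intro h
    rw [h, zero_mul] at eqB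
    exact one_ne_zero eqB
  have hdAval : dA = β⁻¹ := by
    field_simp
    linarith [eqB]
  rw [eqA, hdAval, ← div_eq_mul_inv, div_mul_div_comm,
    Finset.prod_mul_distrib, Finset.prod_mul_distrib]
  congr 1
  · rw [hα]; ring
  · rw [hβ]; ring

end Stmt3Aux
namespace Stmt3Aux

open Polynomial Finset

variable (r : ℕ) (lam : Fin r → ℕ)

def Aterm (t : ℚ) (i : Fin r) : ℚ :=
  (t / 2 + (lam i : ℚ) - ((i : ℕ) + 1)) *
    qbinom ((lam i : ℚ) + t - (r : ℚ) - ((i : ℕ) + 1) - 1) (lam i)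

def Bterm (t : ℚ) (i : Fin r) : ℚ :=
  (t / 2 - ((i : ℕ) + 1)) * qbinom ((lam i : ℚ) + (r : ℚ) - ((i : ℕ) + 1)) (lam i)

def Cterm (t : ℚ) (i j : Fin r) : ℚ :=
  ((lam i : ℚ) - (lam j : ℚ) + ((j : ℕ) : ℚ) - ((i : ℕ) : ℚ)) *
    ((lam i : ℚ) + (lam j : ℚ) + t - ((i : ℕ) + 1) - ((j : ℕ) + 1))

def Dterm (t : ℚ) (i j : Fin r) : ℚ :=
  (((j : ℕ) : ℚ) - ((i : ℕ) : ℚ)) * (t - ((i : ℕ) + 1) - ((j : ℕ) + 1))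

lemma qbinom_t (t : ℚ) (i₁ l : ℕ) :
    qbinom ((l : ℚ) + t - (r : ℚ) - i₁ - 1) l = PP t (-(r:ℤ) - i₁) l / (Nat.factorial l : ℚ) := by
  unfold qbinom PP
  congr 1
  rw [← Finset.prod_range_reflect (fun k => t + ((-(r:ℤ) - i₁ : ℤ) : ℚ) + k) l]
  refine Finset.prod_congr rfl fun d hd => ?_
  have hd' : d < l := Finset.mem_range.mp hd
  have hz : ((l - 1 - d : ℕ) : ℚ) = (l : ℚ) - 1 - d := by
    have h' : (l - 1 - d : ℕ) + d + 1 = l := by omega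
    have := congrArg (fun z : ℕ => (z : ℚ)) h'
    push_cast at this
    linarith
  rw [hz]
  push_cast
  ring

lemma qbinom_nat (i₁ l n0 : ℕ) (h : n0 = r - i₁) (hir : i₁ ≤ r) :
    qbinom ((l : ℚ) + (r : ℚ) - i₁) l = (Nat.factorial (n0 + l) : ℚ) /
      ((Nat.factorial n0 : ℚ) * (Nat.factorial l : ℚ)) := by
  unfold qbinom
  rw [show (∏ d ∈ Finset.range l, ((l : ℚ) + (r : ℚ) - i₁ - d))
      = NP ((n0 : ℤ) + 1) l by
    rw [NP, ← Finset.prod_range_reflect (fun k => (((n0 : ℤ) + 1 : ℤ) : ℚ) + k) l]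
    refine Finset.prod_congr rfl fun d hd => ?_
    have hd' : d < l := Finset.mem_range.mp hd
    have hz : ((l - 1 - d : ℕ) : ℚ) = (l : ℚ) - 1 - d := by
      have h' : (l - 1 - d : ℕ) + d + 1 = l := by omega
      have := congrArg (fun z : ℕ => (z : ℚ)) h'
      push_cast at this
      linarith
    have hn0 : ((n0 : ℚ)) = (r : ℚ) - i₁ := by
      have h' : n0 + i₁ = r := by omega
      have := congrArg (fun z : ℕ => (z : ℚ)) h'
      push_cast at this
      linarith
    rw [hz]
    push_cast
    rw [hn0]
    ring
  , NP_factorial, div_div]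

lemma ccq_ne_zero (t : ℚ) (ht : ∀ z : ℤ, 2*t ≠ (z:ℚ)) (n : ℕ) : ccq t r n ≠ 0 := by
  unfold ccq
  have h1 : PP t (-(2*(r:ℤ))) n ≠ 0 := PP_ne_zero ht _ _
  have h2 : PP t (-(2*(r:ℤ))) (2*r) ≠ 0 := PP_ne_zero ht _ _
  have h3 : (Nat.factorial n : ℚ) ≠ 0 := Nat.cast_ne_zero.mpr (Nat.factorial_ne_zero n)
  positivity

lemma half_ne (t : ℚ) (ht : ∀ z : ℤ, 2*t ≠ (z:ℚ)) (a : ℤ) : t/2 + a ≠ 0 := by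
  intro h
  apply ht (-4*a)
  push_cast
  linarith

lemma lin_ne (t : ℚ) (ht : ∀ z : ℤ, 2*t ≠ (z:ℚ)) (a : ℤ) : t + a ≠ 0 := by
  intro h
  apply ht (-2*a)
  push_cast
  linarith

lemma ratio1 (t : ℚ) (ht : ∀ z : ℤ, 2*t ≠ (z:ℚ)) (i : Fin r) :
    Aterm r lam t i / Bterm r lam t i =
      (ccq t r (nn r lam i) * ww r lam t i) /
        (ccq t r (nn r (fun _ => 0) i) * ww r (fun _ => 0) t i) := by
  have hir : (i:ℕ)+1 ≤ r := i.isLt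
  set i₁ : ℕ := (i:ℕ)+1 with hi₁
  set l : ℕ := lam i with hl
  set n0 : ℕ := r - i₁ with hn0
  have hnn : nn r lam i = n0 + l := by unfold nn; omega
  have hnn0 : nn r (fun _ => 0) i = n0 := by simp [nn, hn0, hi₁]
  have hccsplit : ccq t r (n0 + l) =
      ccq t r n0 * PP t ((n0:ℤ) - 2*r) l *
        ((Nat.factorial n0 : ℚ) / (Nat.factorial (n0 + l) : ℚ)) := by
    unfold ccq
    have hg : PP t (-(2*(r:ℤ))) (n0 + l) = PP t (-(2*(r:ℤ))) n0 * PP t ((n0:ℤ) - 2*r) l :=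
      PP_glue t _ n0 l _ (by omega)
    rw [hg]
    have h3 : (Nat.factorial n0 : ℚ) ≠ 0 := Nat.cast_ne_zero.mpr (Nat.factorial_ne_zero n0)
    have h4 : (Nat.factorial (n0+l) : ℚ) ≠ 0 := Nat.cast_ne_zero.mpr (Nat.factorial_ne_zero _)
    have h2r : PP t (-(2*(r:ℤ))) (2*r) ≠ 0 := PP_ne_zero ht _ _
    field_simp
  have hw : ww r lam t i = t/2 + (l:ℚ) - i₁ := by unfold ww; push_cast; rw [hl, hi₁]; push_cast; ring
  have hw0 : ww r (fun _ => 0) t i = t/2 - (i₁:ℚ) := by unfold ww; push_cast; rw [hi₁]; push_cast; ring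
  have hqt : qbinom ((l : ℚ) + t - (r : ℚ) - i₁ - 1) l
      = PP t (-(r:ℤ) - i₁) l / (Nat.factorial l : ℚ) := qbinom_t r t i₁ l
  have hqn : qbinom ((l : ℚ) + (r : ℚ) - i₁) l = (Nat.factorial (n0 + l) : ℚ) /
      ((Nat.factorial n0 : ℚ) * (Nat.factorial l : ℚ)) := qbinom_nat r i₁ l n0 hn0 hir
  have hPPeq : PP t ((n0:ℤ) - 2*r) l = PP t (-(r:ℤ) - i₁) l := PP_congr t (by omega) rfl
  unfold Aterm Bterm
  rw [hnn, hnn0, hccsplit, hw, hw0, hPPeq]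
  rw [show (lam i : ℚ) = (l:ℚ) from rfl, show ((i:ℕ):ℚ) + 1 = (i₁:ℚ) by rw [hi₁]; push_cast; ring]
  rw [hqt, hqn]
  have h3 : (Nat.factorial n0 : ℚ) ≠ 0 := Nat.cast_ne_zero.mpr (Nat.factorial_ne_zero n0)
  have h4 : (Nat.factorial (n0+l) : ℚ) ≠ 0 := Nat.cast_ne_zero.mpr (Nat.factorial_ne_zero _)
  have h5 : (Nat.factorial l : ℚ) ≠ 0 := Nat.cast_ne_zero.mpr (Nat.factorial_ne_zero l)
  have h6 : ccq t r n0 ≠ 0 := ccq_ne_zero r t ht n0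
  have h7 : t/2 - (i₁:ℚ) ≠ 0 := by
    intro h
    simp only [hi₁] at h
    push_cast at h
    apply ht (4*((i:ℕ):ℤ) + 4)
    push_cast
    linarith
  have h8 : t/2 + (l:ℚ) - (i₁:ℚ) ≠ 0 := by
    intro h
    simp only [hi₁, hl] at h
    push_cast at h
    apply ht (4*((i:ℕ):ℤ) + 4 - 4*((lam i : ℕ):ℤ))
    push_cast
    linarith
  have h9 : PP t (-(r:ℤ) - i₁) l ≠ 0 := PP_ne_zero ht _ _
  rw [div_eq_div_iff (mul_ne_zero h7 (by
      rw [show ((Nat.factorial (n0+l) : ℚ) / ((Nat.factorial n0 : ℚ) * (Nat.factorial l : ℚ)))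
        = (Nat.factorial (n0+l) : ℚ) / ((Nat.factorial n0 : ℚ) * (Nat.factorial l : ℚ)) from rfl]
      exact div_ne_zero h4 (mul_ne_zero h3 h5)))
    (mul_ne_zero h6 h7)]
  field_simp

lemma ratio2 (t : ℚ) (ht : ∀ z : ℤ, 2*t ≠ (z:ℚ)) (i j : Fin r) (hij : i < j) :
    Cterm r lam t i j / Dterm r t i j =
      (ww r lam t j ^ 2 - ww r lam t i ^ 2) /
        (ww r (fun _ => 0) t j ^ 2 - ww r (fun _ => 0) t i ^ 2) := by
  have hij' : (i:ℕ) < (j:ℕ) := hij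
  have hd1 : (((j:ℕ):ℚ) - ((i:ℕ):ℚ)) ≠ 0 := by
    have : ((i:ℕ):ℚ) < ((j:ℕ):ℚ) := by exact_mod_cast hij'
    linarith
  have hd2 : (t - ((i:ℕ)+1) - ((j:ℕ)+1)) ≠ 0 := by
    have := lin_ne t ht (-(((i:ℕ):ℤ)+1) - (((j:ℕ):ℤ)+1))
    push_cast at this
    intro h
    apply this
    linarith
  have hw0 : ww r (fun _ => 0) t j ^ 2 - ww r (fun _ => 0) t i ^ 2
      = -((((j:ℕ):ℚ) - ((i:ℕ):ℚ)) * (t - ((i:ℕ)+1) - ((j:ℕ)+1))) := by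
    unfold ww
    push_cast
    ring
  have hw : ww r lam t j ^ 2 - ww r lam t i ^ 2
      = -(((lam i : ℚ) - (lam j : ℚ) + ((j:ℕ):ℚ) - ((i:ℕ):ℚ)) *
          ((lam i : ℚ) + (lam j : ℚ) + t - ((i:ℕ)+1) - ((j:ℕ)+1))) := by
    unfold ww
    push_cast
    ring
  unfold Cterm Dterm
  rw [hw, hw0, div_eq_div_iff (mul_ne_zero hd1 hd2) (by
    intro h
    rcases mul_eq_zero.mp (neg_eq_zero.mp h) with h' | h'
    · exact hd1 h'
    · exact hd2 h')]
  ring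

lemma prod_pairs (f : Fin r → Fin r → ℚ) :
    ∏ q ∈ Finset.univ.filter (fun q : Fin r × Fin r => q.1 < q.2), f q.1 q.2 =
    ∏ i : Fin r, ∏ j ∈ Finset.Ioi i, f i j := by
  rw [← Finset.prod_sigma (Finset.univ : Finset (Fin r)) (fun i => Finset.Ioi i)
    (fun q => f q.1 q.2)]
  refine Finset.prod_bij' (fun (q : Fin r × Fin r) (_ : q ∈ Finset.univ.filter
      (fun q : Fin r × Fin r => q.1 < q.2)) => (⟨q.1, q.2⟩ : Σ _ : Fin r, Fin r))
    (fun q _ => (q.1, q.2)) ?_ ?_ ?_ ?_ ?_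
  · intro q hq
    rw [Finset.mem_sigma]
    refine ⟨Finset.mem_univ _, Finset.mem_Ioi.mpr ?_⟩
    exact (Finset.mem_filter.mp hq).2
  · intro q hq
    rw [Finset.mem_sigma] at hq
    simp only [Finset.mem_filter, Finset.mem_univ, true_and]
    exact Finset.mem_Ioi.mp hq.2
  · intro q hq; rfl
  · intro q hq; rfl
  · intro q hq; rfl

end Stmt3Aux
namespace Stmt3Aux

open Polynomial Finset

variable (r : ℕ) (lam : Fin r → ℕ)

lemma good_eval (t : ℚ) (ht : ∀ z : ℤ, 2*t ≠ (z:ℚ)) :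
    (pPoly r lam).eval t =
      (∏ i : Fin r, Aterm r lam t i / Bterm r lam t i) *
      ∏ i : Fin r, ∏ j ∈ Finset.Ioi i, Cterm r lam t i j / Dterm r t i j := by
  rw [pPoly_eval, det_chain r lam t ht]
  congr 1
  · rw [← Finset.prod_div_distrib]
    exact Finset.prod_congr rfl fun i _ => (ratio1 r lam t ht i).symm
  · rw [← Finset.prod_div_distrib]
    refine Finset.prod_congr rfl fun i _ => ?_
    rw [← Finset.prod_div_distrib]
    exact Finset.prod_congr rfl fun j hj => (ratio2 r lam t ht i j (Finset.mem_Ioi.mp hj)).symm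

noncomputable def DdenP : Polynomial ℚ :=
  (∏ i : Fin r, (Polynomial.C (qbinom ((lam i : ℚ) + (r:ℚ) - ((i:ℕ)+1)) (lam i)) *
      (Polynomial.C (1/2 : ℚ) * Polynomial.X - Polynomial.C (((i:ℕ):ℚ)+1)))) *
  ∏ i : Fin r, ∏ j ∈ Finset.Ioi i,
    (Polynomial.C (((j:ℕ):ℚ) - ((i:ℕ):ℚ)) *
      (Polynomial.X - Polynomial.C ((((i:ℕ):ℚ)+1) + (((j:ℕ):ℚ)+1))))

noncomputable def NnumP : Polynomial ℚ :=
  (∏ i : Fin r, ((Polynomial.C (1/2 : ℚ) * Polynomial.X +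
        Polynomial.C ((lam i : ℚ) - (((i:ℕ):ℚ)+1))) *
      (Polynomial.C ((Nat.factorial (lam i) : ℚ))⁻¹ *
        ∏ d ∈ Finset.range (lam i),
          (Polynomial.X + Polynomial.C ((lam i : ℚ) - (r:ℚ) - (((i:ℕ):ℚ)+1) - 1 - d))))) *
  ∏ i : Fin r, ∏ j ∈ Finset.Ioi i,
    (Polynomial.C ((lam i : ℚ) - (lam j : ℚ) + ((j:ℕ):ℚ) - ((i:ℕ):ℚ)) *
      (Polynomial.X + Polynomial.C ((lam i : ℚ) + (lam j : ℚ) - (((i:ℕ):ℚ)+1) - (((j:ℕ):ℚ)+1))))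

lemma DdenP_eval (t : ℚ) : (DdenP r lam).eval t =
    (∏ i : Fin r, Bterm r lam t i) * ∏ i : Fin r, ∏ j ∈ Finset.Ioi i, Dterm r t i j := by
  unfold DdenP Bterm Dterm
  rw [eval_mul, eval_prod, eval_prod]
  congr 1
  · refine Finset.prod_congr rfl fun i _ => ?_
    simp only [eval_mul, eval_sub, eval_C, eval_X]
    ring
  · refine Finset.prod_congr rfl fun i _ => ?_
    rw [eval_prod]
    refine Finset.prod_congr rfl fun j _ => ?_
    simp only [eval_mul, eval_sub, eval_C, eval_X]
    ring

lemma NnumP_eval (t : ℚ) : (NnumP r lam).eval t =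
    (∏ i : Fin r, Aterm r lam t i) * ∏ i : Fin r, ∏ j ∈ Finset.Ioi i, Cterm r lam t i j := by
  unfold NnumP Aterm Cterm qbinom
  rw [eval_mul, eval_prod, eval_prod]
  congr 1
  · refine Finset.prod_congr rfl fun i _ => ?_
    simp only [eval_mul, eval_add, eval_C, eval_X, eval_prod]
    rw [div_eq_inv_mul]
    have : (∏ d ∈ Finset.range (lam i),
        (t + ((lam i : ℚ) - (r:ℚ) - (((i:ℕ):ℚ)+1) - 1 - d))) =
        ∏ d ∈ Finset.range (lam i),
          (((lam i : ℚ) + t - (r:ℚ) - (((i:ℕ):ℚ)+1) - 1) - d) := by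
      exact Finset.prod_congr rfl fun d _ => by ring
    rw [this]
    ring
  · refine Finset.prod_congr rfl fun i _ => ?_
    rw [eval_prod]
    refine Finset.prod_congr rfl fun j _ => ?_
    simp only [eval_mul, eval_add, eval_C, eval_X]
    ring

lemma Bterm_ne (t : ℚ) (i : Fin r) (h7 : t / 2 - (((i:ℕ):ℚ)+1) ≠ 0) :
    Bterm r lam t i ≠ 0 := by
  unfold Bterm
  refine mul_ne_zero h7 ?_
  have harg : ((lam i : ℚ) + (r:ℚ) - (((i:ℕ):ℚ)+1))
      = ((lam i : ℚ) + (r:ℚ) - ((((i:ℕ)+1 : ℕ)):ℚ)) := by push_cast; ring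
  rw [harg, qbinom_nat r ((i:ℕ)+1) (lam i) (r - ((i:ℕ)+1)) rfl i.isLt]
  have h3 : (0:ℚ) < (Nat.factorial (r - ((i:ℕ)+1) + lam i) : ℚ) := by
    exact_mod_cast Nat.factorial_pos _
  have h4 : (0:ℚ) < (Nat.factorial (r - ((i:ℕ)+1)) : ℚ) := by
    exact_mod_cast Nat.factorial_pos _
  have h5 : (0:ℚ) < (Nat.factorial (lam i) : ℚ) := by exact_mod_cast Nat.factorial_pos _
  positivity

lemma Dterm_ne (t : ℚ) (i j : Fin r) (hij : i < j) (h2 : t - ((i:ℕ)+1) - ((j:ℕ)+1) ≠ 0) :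
    Dterm r t i j ≠ 0 := by
  unfold Dterm
  refine mul_ne_zero ?_ h2
  have hij' : (i:ℕ) < (j:ℕ) := hij
  have : ((i:ℕ):ℚ) < ((j:ℕ):ℚ) := by exact_mod_cast hij'
  intro h
  linarith

lemma bridge : pPoly r lam * DdenP r lam = NnumP r lam := by
  apply Polynomial.eq_of_infinite_eval_eq
  have hsub : Set.range (fun n : ℕ => (n:ℚ) + 1/3) ⊆
      {x | Polynomial.eval x (pPoly r lam * DdenP r lam) = Polynomial.eval x (NnumP r lam)} := by
    rintro _ ⟨n, rfl⟩
    set t : ℚ := (n:ℚ) + 1/3 with hts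
    have ht : ∀ z : ℤ, 2*t ≠ (z:ℚ) := by
      intro z h
      rw [hts] at h
      have h3 : (3*z : ℚ) = 6*(n:ℚ) + 2 := by push_cast; linarith
      have h4 : (3*z : ℤ) = 6*(n:ℤ) + 2 := by exact_mod_cast h3
      omega
    show Polynomial.eval t _ = Polynomial.eval t _
    rw [eval_mul, good_eval r lam t ht, DdenP_eval, NnumP_eval]
    have hBne : ∀ i : Fin r, Bterm r lam t i ≠ 0 := by
      intro i
      refine Bterm_ne r lam t i ?_
      intro h
      apply ht (4*((i:ℕ):ℤ) + 4)
      push_cast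
      linear_combination 4 * h
    have hDne : ∀ i j : Fin r, j ∈ Finset.Ioi i → Dterm r t i j ≠ 0 := by
      intro i j hj
      refine Dterm_ne r t i j (Finset.mem_Ioi.mp hj) ?_
      intro h
      apply ht (2*((i:ℕ):ℤ) + 2*((j:ℕ):ℤ) + 4)
      push_cast
      linear_combination 2 * h
    have hPB : (∏ i : Fin r, Bterm r lam t i) ≠ 0 :=
      Finset.prod_ne_zero_iff.mpr fun i _ => hBne i
    have hPD : (∏ i : Fin r, ∏ j ∈ Finset.Ioi i, Dterm r t i j) ≠ 0 :=
      Finset.prod_ne_zero_iff.mpr fun i _ =>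
        Finset.prod_ne_zero_iff.mpr fun j hj => hDne i j hj
    rw [Finset.prod_div_distrib]
    rw [show (∏ i : Fin r, ∏ j ∈ Finset.Ioi i, (Cterm r lam t i j / Dterm r t i j))
        = (∏ i : Fin r, ∏ j ∈ Finset.Ioi i, Cterm r lam t i j) /
          (∏ i : Fin r, ∏ j ∈ Finset.Ioi i, Dterm r t i j) by
      rw [← Finset.prod_div_distrib]
      exact Finset.prod_congr rfl fun i _ => Finset.prod_div_distrib _ _]
    field_simp
  exact Set.Infinite.mono hsub (Set.infinite_range_of_injective (fun a b h => by
    have : (a:ℚ) = (b:ℚ) := by linarith [h]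
    exact_mod_cast this))

end Stmt3Aux
namespace Stmt3Aux

open Polynomial Finset

lemma asc_prod (x : ℚ) (l : ℕ) :
    ∏ k ∈ Finset.range l, (x + k) = (ascPochhammer ℚ l).eval x := by
  induction l with
  | zero => simp
  | succ l ih =>
    rw [Finset.prod_range_succ, ih, ascPochhammer_succ_right, eval_mul, eval_add, eval_X,
      eval_natCast]

lemma G_int (m a : ℤ) : ∃ z : ℤ, G (m:ℚ) a = (z:ℚ) := by
  by_cases h : 0 ≤ a
  · refine ⟨Ring.choose (m + a.toNat - 1) a.toNat, ?_⟩
    rw [G, if_pos h, asc_prod, ← ascPochhammer_map (Int.castRingHom ℚ), Polynomial.eval_map,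
      show ((m:ℚ)) = (Int.castRingHom ℚ) m from rfl, Polynomial.eval₂_at_apply]
    have h1 : (ascPochhammer ℤ a.toNat).eval m
        = (descPochhammer ℤ a.toNat).eval (m + a.toNat - 1) := by
      rw [descPochhammer_eval_eq_ascPochhammer]
      congr 1
      push_cast
      ring
    rw [h1, Polynomial.eval_eq_smeval, Ring.descPochhammer_eq_factorial_smul_choose]
    have hf : (Nat.factorial a.toNat : ℚ) ≠ 0 :=
      Nat.cast_ne_zero.mpr (Nat.factorial_ne_zero _)
    push_cast [nsmul_eq_mul]
    field_simp
    simp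
  · exact ⟨0, by rw [G_neg _ (not_le.mp h)]; simp⟩

variable (r : ℕ) (lam : Fin r → ℕ)

lemma pPoly_int (m : ℤ) : ∃ z : ℤ, (pPoly r lam).eval (m:ℚ) = (z:ℚ) := by
  classical
  have hent : ∀ i j : Fin r, ∃ z : ℤ, (Mq r lam (m:ℚ)) i j = (z:ℚ) := by
    intro i j
    obtain ⟨z1, hz1⟩ := G_int m ((lam i : ℤ) - ((i:ℕ)+1) + ((j:ℕ)+1))
    obtain ⟨z2, hz2⟩ := G_int m ((lam i : ℤ) - ((i:ℕ)+1) - ((j:ℕ)+1))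
    refine ⟨z1 - z2, ?_⟩
    rw [Mq, Matrix.of_apply, hz1, hz2]
    push_cast
    ring
  choose Z hZ using hent
  refine ⟨(Matrix.of Z).det, ?_⟩
  rw [pPoly_eval,
    show ((((Matrix.of Z).det : ℤ)):ℚ) = (Int.castRingHom ℚ) (Matrix.of Z).det from rfl,
    RingHom.map_det]
  congr 1
  ext i j
  simp only [RingHom.mapMatrix_apply, Matrix.map_apply, Matrix.of_apply, eq_intCast]
  exact hZ i j

end Stmt3Aux


/-- For every partition `λ = (λ_1 ≥ … ≥ λ_r ≥ 0)`, the interpolated Weyl dimension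
function
`dim X_λ(t) = ∏_{i=1}^r [(t/2+λ_i−i)·C(λ_i+t−r−i−1,λ_i)] / [(t/2−i)·C(λ_i+r−i,λ_i)]
  · ∏_{i<j} (λ_i−λ_j+j−i)(λ_i+λ_j+t−i−j)/((j−i)(t−i−j))`
is a polynomial in `t` with rational coefficients (agreeing with the displayed rational
expression away from the poles of the denominators) which takes integer values at every
integer `t`. -/
theorem stmt_3 (r : ℕ) (lam : Fin r → ℕ) (hanti : Antitone lam) :
    ∃ p : Polynomial ℚ,
      (∀ t : ℚ,
        (∀ i : Fin r, t / 2 - ((i : ℕ) + 1) ≠ 0) →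
        (∀ i j : Fin r, i < j → t - ((i : ℕ) + 1) - ((j : ℕ) + 1) ≠ 0) →
        p.eval t =
          (∏ i : Fin r,
            ((t / 2 + (lam i : ℚ) - ((i : ℕ) + 1)) *
                qbinom ((lam i : ℚ) + t - (r : ℚ) - ((i : ℕ) + 1) - 1) (lam i)) /
              ((t / 2 - ((i : ℕ) + 1)) *
                qbinom ((lam i : ℚ) + (r : ℚ) - ((i : ℕ) + 1)) (lam i))) *
          ∏ q ∈ Finset.univ.filter (fun q : Fin r × Fin r => q.1 < q.2),
            (((lam q.1 : ℚ) - (lam q.2 : ℚ) + ((q.2 : ℕ) : ℚ) - ((q.1 : ℕ) : ℚ)) *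
                ((lam q.1 : ℚ) + (lam q.2 : ℚ) + t - ((q.1 : ℕ) + 1) - ((q.2 : ℕ) + 1))) /
              ((((q.2 : ℕ) : ℚ) - ((q.1 : ℕ) : ℚ)) *
                (t - ((q.1 : ℕ) + 1) - ((q.2 : ℕ) + 1)))) ∧
      (∀ m : ℤ, ∃ z : ℤ, p.eval (m : ℚ) = (z : ℚ)) := by
  open Stmt3Aux Finset Polynomial in
  refine ⟨Stmt3Aux.pPoly r lam, ?_, fun m => Stmt3Aux.pPoly_int r lam m⟩
  intro t h1 h2
  show (Stmt3Aux.pPoly r lam).eval t =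
    (∏ i : Fin r, Stmt3Aux.Aterm r lam t i / Stmt3Aux.Bterm r lam t i) *
    ∏ q ∈ Finset.univ.filter (fun q : Fin r × Fin r => q.1 < q.2),
      Stmt3Aux.Cterm r lam t q.1 q.2 / Stmt3Aux.Dterm r t q.1 q.2
  rw [Stmt3Aux.prod_pairs r (fun i j => Stmt3Aux.Cterm r lam t i j / Stmt3Aux.Dterm r t i j)]
  have hBne : ∀ i : Fin r, Stmt3Aux.Bterm r lam t i ≠ 0 :=
    fun i => Stmt3Aux.Bterm_ne r lam t i (h1 i)
  have hDne : ∀ i j : Fin r, j ∈ Finset.Ioi i → Stmt3Aux.Dterm r t i j ≠ 0 :=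
    fun i j hj => Stmt3Aux.Dterm_ne r t i j (Finset.mem_Ioi.mp hj)
      (h2 i j (Finset.mem_Ioi.mp hj))
  have hPB : (∏ i : Fin r, Stmt3Aux.Bterm r lam t i) ≠ 0 :=
    Finset.prod_ne_zero_iff.mpr fun i _ => hBne i
  have hPD : (∏ i : Fin r, ∏ j ∈ Finset.Ioi i, Stmt3Aux.Dterm r t i j) ≠ 0 :=
    Finset.prod_ne_zero_iff.mpr fun i _ =>
      Finset.prod_ne_zero_iff.mpr fun j hj => hDne i j hj
  have hkey := congrArg (Polynomial.eval t) (Stmt3Aux.bridge r lam)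
  rw [Polynomial.eval_mul, Stmt3Aux.DdenP_eval, Stmt3Aux.NnumP_eval] at hkey
  rw [Finset.prod_div_distrib]
  rw [show (∏ i : Fin r, ∏ j ∈ Finset.Ioi i,
        (Stmt3Aux.Cterm r lam t i j / Stmt3Aux.Dterm r t i j))
      = (∏ i : Fin r, ∏ j ∈ Finset.Ioi i, Stmt3Aux.Cterm r lam t i j) /
        (∏ i : Fin r, ∏ j ∈ Finset.Ioi i, Stmt3Aux.Dterm r t i j) by
    rw [← Finset.prod_div_distrib]
    exact Finset.prod_congr rfl fun i _ => Finset.prod_div_distrib _ _]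
  rw [div_mul_div_comm, eq_div_iff (mul_ne_zero hPB hPD)]
  linear_combination hkey
end

section
/- For partitions λ of length r and μ of length s, the function dim X_{λ,μ}(t) = d_λ d_μ ∏_{i=1}^r C(t+λ_i−i−s, λ_i)/C(λ_i+r−i, λ_i) · ∏_{j=1}^s C(t+μ_j−j−r, μ_j)/C(μ_j+s−j, μ_j) · ∏_{i=1}^r ∏_{j=1}^s (t+1+λ_i+μ_j−i−j)/(t+1−i−j), where d_λ = ∏_{1≤i<j≤r} (λ_i−λ_j+j−i)/(j−i), is a polynomial in t that takes integer values at all integers t. -/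
/-- `d_λ = ∏_{1≤i<j≤r} (λ_i−λ_j+j−i)/(j−i)`, the Weyl dimension of the irreducible
`GL_{|λ|}`-representation of highest weight `λ`. -/
def weylDim (r : ℕ) (lam : Fin r → ℕ) : ℚ :=
  ∏ q ∈ Finset.univ.filter (fun q : Fin r × Fin r => q.1 < q.2),
    ((lam q.1 : ℚ) - (lam q.2 : ℚ) + ((q.2 : ℕ) : ℚ) - ((q.1 : ℕ) : ℚ)) /
      (((q.2 : ℕ) : ℚ) - ((q.1 : ℕ) : ℚ))

/-- The interpolated Weyl dimension
`dim X_{λ,μ}(t) = d_λ d_μ ∏_i C(t+λ_i−i−s,λ_i)/C(λ_i+r−i,λ_i)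
 · ∏_j C(t+μ_j−j−r,μ_j)/C(μ_j+s−j,μ_j) · ∏_{i,j} (t+1+λ_i+μ_j−i−j)/(t+1−i−j)`. -/
def dimX (r s : ℕ) (lam : Fin r → ℕ) (mu : Fin s → ℕ) (t : ℚ) : ℚ :=
  weylDim r lam * weylDim s mu *
    (∏ i : Fin r,
      qbinom (t + (lam i : ℚ) - ((i : ℕ) + 1) - (s : ℚ)) (lam i) /
        qbinom ((lam i : ℚ) + (r : ℚ) - ((i : ℕ) + 1)) (lam i)) *
    (∏ j : Fin s,
      qbinom (t + (mu j : ℚ) - ((j : ℕ) + 1) - (r : ℚ)) (mu j) /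
        qbinom ((mu j : ℚ) + (s : ℚ) - ((j : ℕ) + 1)) (mu j)) *
    ∏ i : Fin r, ∏ j : Fin s,
      (t + 1 + (lam i : ℚ) + (mu j : ℚ) - ((i : ℕ) + 1) - ((j : ℕ) + 1)) /
        (t + 1 - ((i : ℕ) + 1) - ((j : ℕ) + 1))

open Finset Polynomial Filter

namespace Stmt4


variable {M : Type*} [CommMonoid M]

lemma filter_range_lt (n j : ℕ) (hj : j ≤ n) :
    (Finset.range n).filter (fun i => i < j) = Finset.range j := by
  ext i; simp only [Finset.mem_filter, Finset.mem_range]; omega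

lemma inner_ite (n j : ℕ) (hj : j ≤ n) (f : ℕ → M) :
    (∏ i ∈ range n, if i < j then f i else 1) = ∏ i ∈ range j, f i := by
  rw [← Finset.prod_filter, filter_range_lt n j hj]

lemma prod_triangle (n : ℕ) (g : ℕ → ℕ → M) :
    ∏ p ∈ (range n ×ˢ range n).filter (fun p => p.1 < p.2), g p.1 p.2
      = ∏ j ∈ range n, ∏ i ∈ range j, g i j := by
  rw [Finset.prod_filter,
    Finset.prod_product_right' _ _ (fun i j => if i < j then g i j else 1)]
  refine Finset.prod_congr rfl fun j hj => ?_
  exact inner_ite n j (le_of_lt (mem_range.mp hj)) (fun i => g i j)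

lemma double_fin_to_range (n : ℕ) (h : ℕ → ℕ → M) :
    (∏ j : Fin n, ∏ i : Fin n, h (i : ℕ) (j : ℕ))
      = ∏ j ∈ range n, ∏ i ∈ range n, h i j := by
  rw [← Fin.prod_univ_eq_prod_range (fun j => ∏ i ∈ range n, h i j) n]
  exact Finset.prod_congr rfl fun j _ =>
    Fin.prod_univ_eq_prod_range (fun i => h i j) n

lemma prod_finpairs (n : ℕ) (g : ℕ → ℕ → M) :
    ∏ q ∈ (Finset.univ : Finset (Fin n × Fin n)).filter (fun q => q.1 < q.2),
        g q.1 q.2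
      = ∏ j ∈ range n, ∏ i ∈ range j, g i j := by
  rw [Finset.prod_filter]
  rw [show (Finset.univ : Finset (Fin n × Fin n)) = Finset.univ ×ˢ Finset.univ by
    simp]
  rw [Finset.prod_product' _ _ (fun i j : Fin n => if i < j then g i j else 1)]
  rw [Finset.prod_comm]
  simp only [Fin.lt_def]
  rw [double_fin_to_range n (fun i j => if i < j then g i j else 1)]
  exact Finset.prod_congr rfl fun j hj =>
    inner_ite n j (le_of_lt (mem_range.mp hj)) (fun i => g i j)

lemma prod_Ioi_triangle (n : ℕ) (g : ℕ → ℕ → M) :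
    ∏ i : Fin n, ∏ j ∈ Finset.Ioi i, g (i : ℕ) (j : ℕ)
      = ∏ j ∈ range n, ∏ i ∈ range j, g i j := by
  rw [← prod_finpairs n g]
  rw [Finset.prod_filter]
  rw [show (Finset.univ : Finset (Fin n × Fin n)) = Finset.univ ×ˢ Finset.univ by
    simp]
  rw [Finset.prod_product' _ _ (fun i j : Fin n => if i < j then g i j else 1)]
  refine Finset.prod_congr rfl fun i _ => ?_
  rw [show Finset.Ioi i = Finset.univ.filter (fun j => i < j) by ext j; simp]
  rw [Finset.prod_filter]

lemma prod_triangle_reflect (n : ℕ) (g : ℕ → ℕ → M) :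
    (∏ j ∈ range n, ∏ i ∈ range j, g (n - 1 - j) (n - 1 - i))
      = ∏ j ∈ range n, ∏ i ∈ range j, g i j := by
  rw [← prod_triangle n (fun i j => g (n - 1 - j) (n - 1 - i)), ← prod_triangle n g]
  refine Finset.prod_nbij' (fun p => (n - 1 - p.2, n - 1 - p.1))
    (fun p => (n - 1 - p.2, n - 1 - p.1)) ?_ ?_ ?_ ?_ ?_ <;>
    intro p hp <;>
    simp only [mem_filter, mem_product, mem_range] at hp ⊢
  · omega
  · omega
  · obtain ⟨⟨h1, h2⟩, h3⟩ := hp; simp only [Prod.ext_iff]; constructor <;> omega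
  · obtain ⟨⟨h1, h2⟩, h3⟩ := hp; simp only [Prod.ext_iff]; constructor <;> omega

lemma prod_triangle_add (a b : ℕ) (f : ℕ → ℕ → M) :
    (∏ j ∈ range (a + b), ∏ i ∈ range j, f i j)
      = ((∏ j ∈ range a, ∏ i ∈ range j, f i j)
          * ∏ j ∈ range b, ∏ i ∈ range a, f i (a + j))
        * ∏ j ∈ range b, ∏ i ∈ range j, f (a + i) (a + j) := by
  rw [Finset.prod_range_add (fun j => ∏ i ∈ range j, f i j) a b]
  rw [mul_assoc, ← Finset.prod_mul_distrib]
  congr 1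
  refine Finset.prod_congr rfl fun j _ => ?_
  rw [Finset.prod_range_add (fun i => f i (a + j)) a j]

lemma prod_asc_swap (x : ℚ) (a b : ℕ) :
    (∏ j ∈ range b, (x + a + j)) * ∏ k ∈ range a, (x + k)
      = (∏ k ∈ range a, (x + b + k)) * ∏ j ∈ range b, (x + j) := by
  have h1 := Finset.prod_range_add (fun t => x + t) a b
  have h2 := Finset.prod_range_add (fun t => x + t) b a
  push_cast at h1 h2
  simp only [← add_assoc] at h1 h2
  rw [Nat.add_comm a b, h2] at h1
  linear_combination -h1




lemma exists_int_ratio_vdm (n : ℕ) (b : ℕ → ℤ) :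
    ∃ z : ℤ, (∏ j ∈ range n, ∏ i ∈ range j, ((b i : ℚ) - (b j : ℚ)))
      = (z : ℚ) * ∏ j ∈ range n, ∏ i ∈ range j, ((j : ℚ) - (i : ℚ)) := by
  rcases n with _ | n
  · exact ⟨1, by simp⟩
  · have hdet : (Matrix.vandermonde (fun i : Fin (n + 1) => -(b (i : ℕ)))).det
        = ∏ j ∈ range (n + 1), ∏ i ∈ range j, (b i - b j) := by
      rw [Matrix.det_vandermonde]
      rw [← prod_Ioi_triangle (n + 1) (fun i j => b i - b j)]
      exact Finset.prod_congr rfl fun i _ => Finset.prod_congr rfl fun j _ => by ring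
    have hsf : ((Nat.superFactorial n : ℤ))
        = ∏ j ∈ range (n + 1), ∏ i ∈ range j, ((j : ℤ) - (i : ℤ)) := by
      have h1 := Matrix.det_vandermonde_id_eq_superFactorial (R := ℤ) n
      rw [Matrix.det_vandermonde] at h1
      rw [← h1, ← prod_Ioi_triangle (n + 1) (fun i j => (j : ℤ) - (i : ℤ))]
    obtain ⟨z, hz⟩ := Matrix.superFactorial_dvd_vandermonde_det
      (fun i : Fin (n + 1) => -(b (i : ℕ)))
    refine ⟨z, ?_⟩
    have key : (∏ j ∈ range (n + 1), ∏ i ∈ range j, (b i - b j))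
        = z * ∏ j ∈ range (n + 1), ∏ i ∈ range j, ((j : ℤ) - (i : ℤ)) := by
      rw [← hdet, ← hsf, hz]; ring
    calc (∏ j ∈ range (n+1), ∏ i ∈ range j, ((b i : ℚ) - (b j : ℚ)))
        = ((∏ j ∈ range (n+1), ∏ i ∈ range j, (b i - b j) : ℤ) : ℚ) := by
          push_cast; rfl
      _ = (z : ℚ) * ∏ j ∈ range (n+1), ∏ i ∈ range j, ((j : ℚ) - (i : ℚ)) := by
          rw [key]; push_cast; rfl



lemma eval_map_rat_real (S : ℚ[X]) (x : ℚ) :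
    (S.map (algebraMap ℚ ℝ)).eval ((x : ℝ)) = ((S.eval x : ℚ) : ℝ) := by
  rw [show ((x : ℝ)) = algebraMap ℚ ℝ x from (eq_ratCast (algebraMap ℚ ℝ) x).symm]
  rw [Polynomial.eval_map, Polynomial.eval₂_hom]
  exact congrArg _ rfl |>.trans (eq_ratCast (algebraMap ℚ ℝ) _)

lemma int_mul_eval (q : ℚ[X]) :
    ∃ c : ℤ, c ≠ 0 ∧ ∀ x : ℤ, ∃ w : ℤ, (c : ℚ) * q.eval (x : ℚ) = w := by
  obtain ⟨c, hc⟩ := IsLocalization.integerNormalization_map_to_map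
    (nonZeroDivisors ℤ) q
  refine ⟨(c : ℤ), nonZeroDivisors.coe_ne_zero c, fun x => ?_⟩
  refine ⟨(IsLocalization.integerNormalization (nonZeroDivisors ℤ) q).eval x, ?_⟩
  have h1 : ((IsLocalization.integerNormalization (nonZeroDivisors ℤ) q).map
      (algebraMap ℤ ℚ)).eval ((x : ℤ) : ℚ)
      = ((c : ℤ) : ℚ) * q.eval (x : ℚ) := by
    rw [hc]; simp [Polynomial.eval_smul, zsmul_eq_mul]
  rw [← h1, show ((x : ℤ) : ℚ) = algebraMap ℤ ℚ x by simp,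
    Polynomial.eval_map, Polynomial.eval₂_hom]
  simp

lemma dvd_of_int_tail (N D : ℚ[X]) (hD : D.Monic) (n0 : ℕ)
    (hne : ∀ n : ℕ, n0 ≤ n → D.eval (n : ℚ) ≠ 0)
    (h : ∀ n : ℕ, n0 ≤ n → ∃ z : ℤ, N.eval (n : ℚ) = D.eval (n : ℚ) * z) :
    D ∣ N := by
  rw [← Polynomial.modByMonic_eq_zero_iff_dvd hD]
  by_contra hR
  set R := N %ₘ D with hRdef
  set q := N /ₘ D with hqdef
  have hdegR : R.degree < D.degree := Polynomial.degree_modByMonic_lt N hD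
  have hNqR : ∀ x : ℚ, N.eval x = D.eval x * q.eval x + R.eval x := by
    intro x
    conv_lhs => rw [← Polynomial.modByMonic_add_div N D]
    simp only [eval_add, eval_mul]; ring
  obtain ⟨cq, hcq0, hcq⟩ := int_mul_eval q
  obtain ⟨cr, hcr0, hcr⟩ := int_mul_eval R
  set c : ℤ := cq * cr with hcdef
  have hc0 : (c : ℚ) ≠ 0 := Int.cast_ne_zero.mpr (mul_ne_zero hcq0 hcr0)
  have key : ∀ n : ℕ, n0 ≤ n → R.eval (n : ℚ) ≠ 0 →
      |D.eval (n : ℚ)| ≤ |(c : ℚ)| * |R.eval (n : ℚ)| := by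
    intro n hn hRn
    obtain ⟨z, hz⟩ := h n hn
    have hrz : R.eval (n : ℚ) = D.eval (n : ℚ) * ((z : ℚ) - q.eval (n : ℚ)) := by
      have := hNqR (n : ℚ); rw [hz] at this; linear_combination -this
    obtain ⟨wq, hwq⟩ := hcq (n : ℤ)
    have hwq' : (cq : ℚ) * q.eval (n : ℚ) = wq := by
      rw [← hwq]; norm_cast
    have hw : (c : ℚ) * ((z : ℚ) - q.eval (n : ℚ)) = ((cq * cr * z - cr * wq : ℤ) : ℚ) := by
      have hcast : ((cq * cr * z - cr * wq : ℤ) : ℚ)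
          = (cq : ℚ) * (cr : ℚ) * (z : ℚ) - (cr : ℚ) * (wq : ℚ) := by push_cast; ring
      rw [hcast, ← hwq', hcdef]
      push_cast
      ring
    have hzq : (z : ℚ) - q.eval (n : ℚ) ≠ 0 := by
      intro h0; apply hRn; rw [hrz, h0, mul_zero]
    have hwne : (cq * cr * z - cr * wq : ℤ) ≠ 0 := by
      intro h0
      apply mul_ne_zero hc0 hzq
      rw [hw, h0, Int.cast_zero]
    have h1le : (1 : ℚ) ≤ |(c : ℚ)| * |(z : ℚ) - q.eval (n : ℚ)| := by
      rw [← abs_mul, hw]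
      have := Int.one_le_abs hwne
      calc (1 : ℚ) = ((1 : ℤ) : ℚ) := by norm_cast
        _ ≤ ((|cq * cr * z - cr * wq| : ℤ) : ℚ) := by exact_mod_cast this
        _ = |((cq * cr * z - cr * wq : ℤ) : ℚ)| := by push_cast; rfl
    calc |D.eval (n : ℚ)| = |D.eval (n : ℚ)| * 1 := by ring
      _ ≤ |D.eval (n : ℚ)| * (|(c : ℚ)| * |(z : ℚ) - q.eval (n : ℚ)|) := by
          exact mul_le_mul_of_nonneg_left h1le (abs_nonneg _)
      _ = |(c : ℚ)| * |R.eval (n : ℚ)| := by rw [hrz, abs_mul]; ring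
  -- analytic contradiction
  set S : ℚ[X] := C ((c : ℚ)) * R with hSdef
  have hdegS : S.degree < D.degree := by
    rw [hSdef, Polynomial.degree_C_mul hc0]; exact hdegR
  set Sr := S.map (algebraMap ℚ ℝ) with hSr
  set Dr := D.map (algebraMap ℚ ℝ) with hDr
  have hinj := (algebraMap ℚ ℝ).injective
  have hdegSr : Sr.degree < Dr.degree := by
    rw [hSr, hDr, Polynomial.degree_map_eq_of_injective hinj,
      Polynomial.degree_map_eq_of_injective hinj]
    exact hdegS
  have htend : Tendsto (fun x : ℝ => Sr.eval x / Dr.eval x) atTop (nhds 0) :=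
    Polynomial.div_tendsto_zero_of_degree_lt Sr Dr hdegSr
  have htendN : Tendsto (fun n : ℕ => Sr.eval (n : ℝ) / Dr.eval (n : ℝ)) atTop (nhds 0) :=
    htend.comp tendsto_natCast_atTop_atTop
  have hball := htendN.eventually (Metric.ball_mem_nhds (0 : ℝ) one_pos)
  rw [Filter.eventually_atTop] at hball
  obtain ⟨N1, hN1⟩ := hball
  -- pick n beyond max with R.eval n ≠ 0
  have hroots : ({x : ℚ | R.IsRoot x}).Finite :=
    Polynomial.finite_setOf_isRoot hR
  have hfin : ({n : ℕ | R.eval (n : ℚ) = 0}).Finite := by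
    have : ({n : ℕ | R.eval (n : ℚ) = 0}) = (fun n : ℕ => (n : ℚ)) ⁻¹' {x : ℚ | R.IsRoot x} := by
      ext n; simp [Polynomial.IsRoot]
    rw [this]
    exact Set.Finite.preimage (Function.Injective.injOn Nat.cast_injective) hroots
  have hinf : ({n : ℕ | R.eval (n : ℚ) ≠ 0}).Infinite := by
    have := hfin.infinite_compl
    convert this using 1
    ext n; simp
  obtain ⟨n, hn_mem, hn_gt⟩ := hinf.exists_gt (max n0 N1)
  have hn0 : n0 ≤ n := le_of_lt (lt_of_le_of_lt (le_max_left _ _) hn_gt)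
  have hN1n : N1 ≤ n := le_of_lt (lt_of_le_of_lt (le_max_right _ _) hn_gt)
  have hDn := hne n hn0
  have hkey := key n hn0 hn_mem
  -- |S/D| at n is < 1 but ≥ 1
  have hlt := hN1 n hN1n
  rw [Real.dist_eq, sub_zero] at hlt
  have hSevalr : Sr.eval (n : ℝ) = ((S.eval (n : ℚ) : ℚ) : ℝ) := by
    rw [hSr, show ((n : ℝ)) = (((n : ℚ) : ℝ)) by push_cast; rfl]
    exact eval_map_rat_real S (n : ℚ)
  have hDevalr : Dr.eval (n : ℝ) = ((D.eval (n : ℚ) : ℚ) : ℝ) := by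
    rw [hDr, show ((n : ℝ)) = (((n : ℚ) : ℝ)) by push_cast; rfl]
    exact eval_map_rat_real D (n : ℚ)
  rw [hSevalr, hDevalr] at hlt
  have hratio : (1 : ℝ) ≤ |((S.eval (n : ℚ) : ℚ) : ℝ) / ((D.eval (n : ℚ) : ℚ) : ℝ)| := by
    rw [← Rat.cast_div, ← Rat.cast_abs]
    have h1 : (1 : ℚ) ≤ |S.eval (n : ℚ) / D.eval (n : ℚ)| := by
      rw [abs_div]
      rw [le_div_iff₀ (abs_pos.mpr hDn), one_mul]
      have : S.eval (n : ℚ) = (c : ℚ) * R.eval (n : ℚ) := by simp [hSdef]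
      rw [this, abs_mul]
      exact hkey
    exact_mod_cast h1
  exact absurd hlt (not_lt.mpr hratio)



lemma tail_int_values (n0 : ℕ) :
    ∀ (d : ℕ) (p : ℚ[X]), p.natDegree ≤ d →
      (∀ n : ℕ, n0 ≤ n → ∃ z : ℤ, p.eval (n : ℚ) = z) →
      ∀ m : ℤ, ∃ z : ℤ, p.eval (m : ℚ) = z := by
  intro d
  induction d with
  | zero =>
    intro p hdeg h m
    have hp : p = C (p.coeff 0) := Polynomial.eq_C_of_natDegree_le_zero hdeg
    obtain ⟨z, hz⟩ := h n0 le_rfl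
    rw [hp] at hz ⊢
    simp only [eval_C] at hz ⊢
    exact ⟨z, hz⟩
  | succ d ih =>
    intro p hdeg h m
    set q : ℚ[X] := p.comp (X + 1) - p with hqdef
    have hqeval : ∀ x : ℚ, q.eval x = p.eval (x + 1) - p.eval x := by
      intro x; simp [hqdef, Polynomial.eval_comp]
    have hqdeg : q.natDegree ≤ d := by
      rcases eq_or_ne q 0 with h0 | h0
      · simp [h0]
      rcases Nat.lt_or_ge p.natDegree (d + 1) with hlt | hge
      · have h1 : (p.comp (X + 1)).natDegree ≤ d := by
          rw [Polynomial.natDegree_comp]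
          have : (X + 1 : ℚ[X]).natDegree = 1 := by
            rw [show (X + 1 : ℚ[X]) = X + C 1 by simp]
            exact Polynomial.natDegree_X_add_C 1
          rw [this, mul_one]; omega
        calc q.natDegree ≤ max (p.comp (X + 1)).natDegree p.natDegree :=
              Polynomial.natDegree_sub_le _ _
          _ ≤ d := by omega
      · have hpd : p.natDegree = d + 1 := le_antisymm hdeg hge
        have hpne : p ≠ 0 := fun h0' => by simp [h0'] at hpd
        have hXdeg : (X + 1 : ℚ[X]).natDegree = 1 := by
          rw [show (X + 1 : ℚ[X]) = X + C 1 by simp]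
          exact Polynomial.natDegree_X_add_C 1
        have hcompdeg : (p.comp (X + 1)).natDegree = p.natDegree := by
          rw [Polynomial.natDegree_comp, hXdeg, mul_one]
        have hcomplc : (p.comp (X + 1)).leadingCoeff = p.leadingCoeff := by
          rw [Polynomial.leadingCoeff_comp (by rw [hXdeg]; omega)]
          have : (X + 1 : ℚ[X]).leadingCoeff = 1 := by
            rw [show (X + 1 : ℚ[X]) = X + C 1 by simp]
            exact Polynomial.monic_X_add_C 1
          rw [this, one_pow, mul_one]
        have hcompne : p.comp (X + 1) ≠ 0 := by
          intro h0'
          apply hpne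
          rw [← Polynomial.leadingCoeff_eq_zero, ← hcomplc, h0',
            Polynomial.leadingCoeff_zero]
        have hdegeq : (p.comp (X + 1)).degree = p.degree := by
          rw [Polynomial.degree_eq_natDegree hpne, Polynomial.degree_eq_natDegree hcompne,
            hcompdeg]
        have hdlt : q.degree < p.degree := by
          rw [hqdef]
          calc (p.comp (X + 1) - p).degree < (p.comp (X + 1)).degree :=
                Polynomial.degree_sub_lt hdegeq hcompne hcomplc
            _ = p.degree := hdegeq
        have := Polynomial.natDegree_lt_natDegree h0 hdlt
        omega
    have hqtail : ∀ n : ℕ, n0 ≤ n → ∃ z : ℤ, q.eval (n : ℚ) = z := by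
      intro n hn
      obtain ⟨z1, hz1⟩ := h (n + 1) (by omega)
      obtain ⟨z2, hz2⟩ := h n hn
      refine ⟨z1 - z2, ?_⟩
      rw [hqeval, show ((n : ℚ) + 1) = ((n + 1 : ℕ) : ℚ) by push_cast; ring, hz1, hz2]
      push_cast; ring
    have IHq : ∀ m : ℤ, ∃ z : ℤ, q.eval (m : ℚ) = z := ih q hqdeg hqtail
    have down : ∀ k : ℕ, ∃ z : ℤ, p.eval ((n0 : ℚ) - k) = z := by
      intro k
      induction k with
      | zero => simpa using h n0 le_rfl
      | succ k ihk =>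
        obtain ⟨zp, hzp⟩ := ihk
        obtain ⟨zq, hzq⟩ := IHq ((n0 : ℤ) - (k + 1))
        have hcast : (((n0 : ℤ) - (k + 1) : ℤ) : ℚ) = (n0 : ℚ) - ((k : ℚ) + 1) := by
          push_cast; ring
        rw [hcast] at hzq
        have hx : ((n0 : ℚ) - ((k : ℚ) + 1)) + 1 = (n0 : ℚ) - k := by ring
        have := hqeval ((n0 : ℚ) - ((k : ℚ) + 1))
        rw [hx] at this
        refine ⟨zp - zq, ?_⟩
        have : p.eval ((n0 : ℚ) - ((k : ℚ) + 1)) = p.eval ((n0 : ℚ) - k) - q.eval ((n0 : ℚ) - ((k : ℚ) + 1)) := by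
          rw [this]; ring
        rw [show ((n0 : ℚ) - ((k : ℕ) + 1 : ℕ)) = ((n0 : ℚ) - ((k : ℚ) + 1)) by push_cast; ring]
        rw [this, hzp, hzq]
        push_cast; ring
    rcases le_or_gt (n0 : ℤ) m with hm | hm
    · obtain ⟨n, rfl⟩ := Int.eq_ofNat_of_zero_le (le_trans (Int.ofNat_nonneg n0) hm)
      have : n0 ≤ n := by exact_mod_cast hm
      obtain ⟨z, hz⟩ := h n this
      exact ⟨z, by rw [show ((n : ℤ) : ℚ) = (n : ℚ) by push_cast; rfl]; exact hz⟩
    · set k := (n0 - m).toNat with hk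
      have hk' : (k : ℤ) = (n0 : ℤ) - m := Int.toNat_of_nonneg (by omega)
      have hmk : (m : ℚ) = (n0 : ℚ) - k := by
        have : ((k : ℤ) : ℚ) = ((n0 : ℤ) : ℚ) - (m : ℚ) := by rw [hk']; push_cast; ring
        push_cast at this; linarith
      rw [hmk]
      exact down k

def ext (r : ℕ) (lam : Fin r → ℕ) : ℕ → ℕ := fun i => if h : i < r then lam ⟨i, h⟩ else 0

def Aq (r : ℕ) (f : ℕ → ℕ) : ℚ :=
  ∏ j ∈ range r, ∏ i ∈ range j, ((f i : ℚ) - (f j : ℚ) + (j : ℚ) - (i : ℚ))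
def Dq (r : ℕ) : ℚ := ∏ j ∈ range r, ∏ i ∈ range j, ((j : ℚ) - (i : ℚ))
def Blq (r : ℕ) (f : ℕ → ℕ) : ℚ :=
  ∏ i ∈ range r, ∏ k ∈ range (f i), ((r : ℚ) - (i : ℚ) + (k : ℚ))
def X1aq (r m : ℕ) (f : ℕ → ℕ) : ℚ :=
  ∏ i ∈ range r, ∏ j ∈ range m, ((r : ℚ) - (i : ℚ) + (f i : ℚ) + (j : ℚ))
def N1q (r m : ℕ) (f : ℕ → ℕ) : ℚ :=
  ∏ i ∈ range r, ∏ k ∈ range (f i), ((r : ℚ) - (i : ℚ) + (m : ℚ) + (k : ℚ))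
def C1aq (r m : ℕ) : ℚ :=
  ∏ i ∈ range r, ∏ j ∈ range m, ((r : ℚ) - (i : ℚ) + (j : ℚ))
def X1bq (r s m : ℕ) (f g : ℕ → ℕ) : ℚ :=
  ∏ i ∈ range r, ∏ j ∈ range s,
    ((r : ℚ) + (m : ℚ) + (s : ℚ) - 1 - (i : ℚ) - (j : ℚ) + (f i : ℚ) + (g j : ℚ))
def DpEq (r s m : ℕ) : ℚ :=
  ∏ i ∈ range r, ∏ j ∈ range s, ((r : ℚ) + (m : ℚ) + (s : ℚ) - 1 - (i : ℚ) - (j : ℚ))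

lemma X_mul_B (r m : ℕ) (f : ℕ → ℕ) :
    X1aq r m f * Blq r f = N1q r m f * C1aq r m := by
  unfold X1aq Blq N1q C1aq
  rw [← Finset.prod_mul_distrib, ← Finset.prod_mul_distrib]
  exact Finset.prod_congr rfl fun i _ => prod_asc_swap ((r : ℚ) - (i : ℚ)) (f i) m

noncomputable def NpP (r s : ℕ) (f g : ℕ → ℕ) : ℚ[X] :=
  (∏ i ∈ range r, ∏ k ∈ range (f i), (X - C ((s : ℚ) + (i : ℚ) - (k : ℚ))))
    * (∏ j ∈ range s, ∏ k ∈ range (g j), (X - C ((r : ℚ) + (j : ℚ) - (k : ℚ))))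
    * ∏ i ∈ range r, ∏ j ∈ range s,
        (X - C ((i : ℚ) + (j : ℚ) + 1 - (f i : ℚ) - (g j : ℚ)))

noncomputable def DpP (r s : ℕ) : ℚ[X] :=
  ∏ i ∈ range r, ∏ j ∈ range s, (X - C ((i : ℚ) + (j : ℚ) + 1))

lemma DpP_monic (r s : ℕ) : (DpP r s).Monic :=
  monic_prod_of_monic _ _ fun _ _ => monic_prod_of_monic _ _ fun _ _ => monic_X_sub_C _

lemma NpP_eval (r s : ℕ) (f g : ℕ → ℕ) (t : ℚ) :
    (NpP r s f g).eval t
      = (∏ i ∈ range r, ∏ k ∈ range (f i), (t - ((s : ℚ) + (i : ℚ) - (k : ℚ))))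
        * (∏ j ∈ range s, ∏ k ∈ range (g j), (t - ((r : ℚ) + (j : ℚ) - (k : ℚ))))
        * ∏ i ∈ range r, ∏ j ∈ range s,
            (t - ((i : ℚ) + (j : ℚ) + 1 - (f i : ℚ) - (g j : ℚ))) := by
  simp [NpP, eval_prod]

lemma DpP_eval (r s : ℕ) (t : ℚ) :
    (DpP r s).eval t = ∏ i ∈ range r, ∏ j ∈ range s, (t - ((i : ℚ) + (j : ℚ) + 1)) := by
  simp [DpP, eval_prod]

lemma NpP_eval_n (r s m : ℕ) (f g : ℕ → ℕ) :
    (NpP r s f g).eval ((r + s + m : ℕ) : ℚ)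
      = N1q r m f * N1q s m g * X1bq r s m f g := by
  rw [NpP_eval]
  congr 1
  · congr 1
    · refine Finset.prod_congr rfl fun i _ => Finset.prod_congr rfl fun k _ => by
        push_cast; ring
    · refine Finset.prod_congr rfl fun j _ => Finset.prod_congr rfl fun k _ => by
        push_cast; ring
  · refine Finset.prod_congr rfl fun i _ => Finset.prod_congr rfl fun j _ => by
      push_cast; ring

lemma DpP_eval_n (r s m : ℕ) :
    (DpP r s).eval ((r + s + m : ℕ) : ℚ) = DpEq r s m := by
  rw [DpP_eval]
  refine Finset.prod_congr rfl fun i _ => Finset.prod_congr rfl fun j _ => by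
    push_cast [DpEq]; ring

lemma weylDim_eq (r : ℕ) (lam : Fin r → ℕ) :
    weylDim r lam = Aq r (ext r lam) / Dq r := by
  unfold weylDim
  rw [Finset.prod_div_distrib]
  congr 1
  · calc ∏ q ∈ Finset.univ.filter (fun q : Fin r × Fin r => q.1 < q.2),
          ((lam q.1 : ℚ) - (lam q.2 : ℚ) + ((q.2 : ℕ) : ℚ) - ((q.1 : ℕ) : ℚ))
        = ∏ q ∈ Finset.univ.filter (fun q : Fin r × Fin r => q.1 < q.2),
            ((ext r lam q.1 : ℚ) - (ext r lam q.2 : ℚ) + ((q.2 : ℕ) : ℚ) - ((q.1 : ℕ) : ℚ)) := by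
          refine Finset.prod_congr rfl fun q _ => by simp [ext]
      _ = Aq r (ext r lam) :=
          prod_finpairs r (fun a b => ((ext r lam a : ℚ) - (ext r lam b : ℚ) + (b : ℚ) - (a : ℚ)))
  · exact prod_finpairs r (fun a b => ((b : ℚ) - (a : ℚ)))

lemma Dq_pos (r : ℕ) : 0 < Dq r := by
  refine Finset.prod_pos fun j _ => Finset.prod_pos fun i hi => ?_
  have := Finset.mem_range.mp hi
  have h : (i : ℚ) < (j : ℚ) := by exact_mod_cast this
  linarith

lemma Blq_pos (r : ℕ) (f : ℕ → ℕ) : 0 < Blq r f := by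
  refine Finset.prod_pos fun i hi => Finset.prod_pos fun k _ => ?_
  have := Finset.mem_range.mp hi
  have h : (i : ℚ) < (r : ℚ) := by exact_mod_cast this
  have h2 : (0 : ℚ) ≤ (k : ℚ) := Nat.cast_nonneg k
  linarith

lemma C1aq_pos (r m : ℕ) : 0 < C1aq r m := by
  refine Finset.prod_pos fun i hi => Finset.prod_pos fun j _ => ?_
  have := Finset.mem_range.mp hi
  have h : (i : ℚ) < (r : ℚ) := by exact_mod_cast this
  have h2 : (0 : ℚ) ≤ (j : ℚ) := Nat.cast_nonneg j
  linarith

lemma DpEq_pos (r s m : ℕ) : 0 < DpEq r s m := by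
  refine Finset.prod_pos fun i hi => Finset.prod_pos fun j hj => ?_
  have h1 : i + 1 ≤ r := Finset.mem_range.mp hi
  have h2 : j + 1 ≤ s := Finset.mem_range.mp hj
  have h1' : (i : ℚ) + 1 ≤ (r : ℚ) := by exact_mod_cast h1
  have h2' : (j : ℚ) + 1 ≤ (s : ℚ) := by exact_mod_cast h2
  have h3 : (0 : ℚ) ≤ (m : ℚ) := Nat.cast_nonneg m
  linarith

section qbin

lemma qbinom_ratio (t : ℚ) (a b i lv : ℕ) (hi : i < a) :
    qbinom (t + (lv : ℚ) - ((i : ℚ) + 1) - (b : ℚ)) lv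
        / qbinom ((lv : ℚ) + (a : ℚ) - ((i : ℚ) + 1)) lv
      = (∏ k ∈ range lv, (t - ((b : ℚ) + (i : ℚ) - (k : ℚ))))
        / ∏ k ∈ range lv, ((a : ℚ) - (i : ℚ) + (k : ℚ)) := by
  unfold qbinom
  rw [div_div_div_comm, div_self (by exact_mod_cast Nat.factorial_ne_zero lv), div_one]
  congr 1
  · rw [← Finset.prod_range_reflect (fun k => t - ((b : ℚ) + (i : ℚ) - (k : ℚ))) lv]
    refine Finset.prod_congr rfl fun k hk => ?_
    have hklt := Finset.mem_range.mp hk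
    have hcast : ((lv - 1 - k : ℕ) : ℚ) = (lv : ℚ) - 1 - (k : ℚ) := by
      have h' : lv - 1 - k = lv - (1 + k) := by omega
      rw [h', Nat.cast_sub (by omega)]
      push_cast; ring
    rw [hcast]; ring
  · rw [← Finset.prod_range_reflect (fun k => (a : ℚ) - (i : ℚ) + (k : ℚ)) lv]
    refine Finset.prod_congr rfl fun k hk => ?_
    have hklt := Finset.mem_range.mp hk
    have hcast : ((lv - 1 - k : ℕ) : ℚ) = (lv : ℚ) - 1 - (k : ℚ) := by
      have h' : lv - 1 - k = lv - (1 + k) := by omega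
      rw [h', Nat.cast_sub (by omega)]
      push_cast; ring
    rw [hcast]; ring

end qbin

lemma dimX_eq (r s : ℕ) (lam : Fin r → ℕ) (mu : Fin s → ℕ) (t : ℚ) :
    dimX r s lam mu t
      = ((C (weylDim r lam * weylDim s mu
              / (Blq r (ext r lam) * Blq s (ext s mu)))
          * NpP r s (ext r lam) (ext s mu)).eval t) / (DpP r s).eval t := by
  set f := ext r lam with hf
  set g := ext s mu with hg
  rw [eval_mul, eval_C, NpP_eval, DpP_eval]
  unfold dimX
  -- first product
  have h1 : (∏ i : Fin r,
      qbinom (t + (lam i : ℚ) - ((i : ℕ) + 1) - (s : ℚ)) (lam i) /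
        qbinom ((lam i : ℚ) + (r : ℚ) - ((i : ℕ) + 1)) (lam i))
      = (∏ i ∈ range r, ∏ k ∈ range (f i), (t - ((s : ℚ) + (i : ℚ) - (k : ℚ))))
        / Blq r f := by
    unfold Blq
    rw [← Finset.prod_div_distrib]
    rw [← Fin.prod_univ_eq_prod_range (fun i =>
      (∏ k ∈ range (f i), (t - ((s : ℚ) + (i : ℚ) - (k : ℚ))))
        / ∏ k ∈ range (f i), ((r : ℚ) - (i : ℚ) + (k : ℚ))) r]
    refine Finset.prod_congr rfl fun i _ => ?_
    have hfi : f (i : ℕ) = lam i := by simp [hf, ext, i.isLt]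
    rw [hfi] at *
    rw [← qbinom_ratio t r s (i : ℕ) (lam i) i.isLt, hfi]
  have h2 : (∏ j : Fin s,
      qbinom (t + (mu j : ℚ) - ((j : ℕ) + 1) - (r : ℚ)) (mu j) /
        qbinom ((mu j : ℚ) + (s : ℚ) - ((j : ℕ) + 1)) (mu j))
      = (∏ j ∈ range s, ∏ k ∈ range (g j), (t - ((r : ℚ) + (j : ℚ) - (k : ℚ))))
        / Blq s g := by
    unfold Blq
    rw [← Finset.prod_div_distrib]
    rw [← Fin.prod_univ_eq_prod_range (fun j =>
      (∏ k ∈ range (g j), (t - ((r : ℚ) + (j : ℚ) - (k : ℚ))))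
        / ∏ k ∈ range (g j), ((s : ℚ) - (j : ℚ) + (k : ℚ))) s]
    refine Finset.prod_congr rfl fun j _ => ?_
    have hgj : g (j : ℕ) = mu j := by simp [hg, ext, j.isLt]
    rw [hgj] at *
    rw [← qbinom_ratio t s r (j : ℕ) (mu j) j.isLt, hgj]
  have h3 : (∏ i : Fin r, ∏ j : Fin s,
      (t + 1 + (lam i : ℚ) + (mu j : ℚ) - ((i : ℕ) + 1) - ((j : ℕ) + 1)) /
        (t + 1 - ((i : ℕ) + 1) - ((j : ℕ) + 1)))
      = (∏ i ∈ range r, ∏ j ∈ range s,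
          (t - ((i : ℚ) + (j : ℚ) + 1 - (f i : ℚ) - (g j : ℚ))))
        / ∏ i ∈ range r, ∏ j ∈ range s, (t - ((i : ℚ) + (j : ℚ) + 1)) := by
    rw [← Finset.prod_div_distrib]
    rw [← Fin.prod_univ_eq_prod_range (fun i =>
      (∏ j ∈ range s, (t - ((i : ℚ) + (j : ℚ) + 1 - (f i : ℚ) - (g j : ℚ))))
        / ∏ j ∈ range s, (t - ((i : ℚ) + (j : ℚ) + 1))) r]
    refine Finset.prod_congr rfl fun i _ => ?_
    rw [← Finset.prod_div_distrib]
    rw [← Fin.prod_univ_eq_prod_range (fun j =>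
      (t - ((i : ℚ) + (j : ℚ) + 1 - (f (i : ℕ) : ℚ) - (g j : ℚ)))
        / (t - ((i : ℚ) + (j : ℚ) + 1))) s]
    refine Finset.prod_congr rfl fun j _ => ?_
    have hfi : f (i : ℕ) = lam i := by simp [hf, ext, i.isLt]
    have hgj : g (j : ℕ) = mu j := by simp [hg, ext, j.isLt]
    rw [hfi, hgj]
    congr 1 <;> ring
  rw [h1, h2, h3, weylDim_eq r lam, weylDim_eq s mu, ← hf, ← hg]
  simp only [div_eq_mul_inv, mul_inv]
  ring

lemma cast_smj (s j : ℕ) (hj : j < s) :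
    ((s - 1 - j : ℕ) : ℚ) = (s : ℚ) - 1 - (j : ℚ) := by
  have h' : s - 1 - j = s - (1 + j) := by omega
  rw [h', Nat.cast_sub (by omega)]
  push_cast; ring

def bzF (r s m : ℕ) (f g : ℕ → ℕ) : ℕ → ℤ := fun i =>
  if i < r then (f i : ℤ) - i
  else if i < r + m then -(i : ℤ)
  else -(g (r + (m + s) - 1 - i) : ℤ) - i

lemma Pb_eq (r s m : ℕ) (f g : ℕ → ℕ) :
    (∏ j ∈ range (r + (m + s)), ∏ i ∈ range j,
        ((bzF r s m f g i : ℚ) - (bzF r s m f g j : ℚ)))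
      = Aq r f * X1aq r m f * X1bq r s m f g * Dq m * X1aq s m g * Aq s g := by
  set b : ℕ → ℤ := bzF r s m f g with hb
  have hbL : ∀ i, i < r → b i = (f i : ℤ) - i := fun i hi => by
    simp only [hb, bzF, if_pos hi]
  have hbM : ∀ i, i < m → b (r + i) = -((r + i : ℕ) : ℤ) := fun i hi => by
    simp only [hb, bzF]; rw [if_neg (by omega), if_pos (by omega)]
  have hbR : ∀ j, j < s →
      b (r + (m + j)) = -(g (s - 1 - j) : ℤ) - ((r + (m + j) : ℕ) : ℤ) := fun j hj => by
    simp only [hb, bzF]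
    rw [if_neg (by omega), if_neg (by omega),
      show r + (m + s) - 1 - (r + (m + j)) = s - 1 - j by omega]
  rw [prod_triangle_add r (m + s) (fun i j => ((b i : ℚ) - (b j : ℚ)))]
  rw [Finset.prod_range_add (fun j => ∏ i ∈ range r, ((b i : ℚ) - (b (r + j) : ℚ))) m s]
  rw [prod_triangle_add m s (fun i j => ((b (r + i) : ℚ) - (b (r + j) : ℚ)))]
  have hT1 : (∏ j ∈ range r, ∏ i ∈ range j, ((b i : ℚ) - (b j : ℚ))) = Aq r f := by
    unfold Aq
    refine Finset.prod_congr rfl fun j hj => Finset.prod_congr rfl fun i hi => ?_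
    have hj' := mem_range.mp hj
    have hi' := mem_range.mp hi
    rw [hbL i (by omega), hbL j (by omega)]
    push_cast; ring
  have hT2a : (∏ j ∈ range m, ∏ i ∈ range r, ((b i : ℚ) - (b (r + j) : ℚ)))
      = X1aq r m f := by
    rw [Finset.prod_comm]
    unfold X1aq
    refine Finset.prod_congr rfl fun i hi => Finset.prod_congr rfl fun j hj => ?_
    rw [hbL i (mem_range.mp hi), hbM j (mem_range.mp hj)]
    push_cast; ring
  have hT2b : (∏ j ∈ range s, ∏ i ∈ range r, ((b i : ℚ) - (b (r + (m + j)) : ℚ)))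
      = X1bq r s m f g := by
    calc (∏ j ∈ range s, ∏ i ∈ range r, ((b i : ℚ) - (b (r + (m + j)) : ℚ)))
        = ∏ j ∈ range s, (fun j' : ℕ => ∏ i ∈ range r,
            ((f i : ℚ) + (g j' : ℚ) + ((r : ℚ) + (m : ℚ) + (s : ℚ) - 1 - (j' : ℚ)) - (i : ℚ)))
            (s - 1 - j) := by
          refine Finset.prod_congr rfl fun j hj => ?_
          have hjs := mem_range.mp hj
          simp only
          refine Finset.prod_congr rfl fun i hi => ?_
          rw [hbL i (mem_range.mp hi), hbR j hjs, cast_smj s j hjs]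
          push_cast; ring
      _ = ∏ j ∈ range s, ∏ i ∈ range r,
            ((f i : ℚ) + (g j : ℚ) + ((r : ℚ) + (m : ℚ) + (s : ℚ) - 1 - (j : ℚ)) - (i : ℚ)) :=
          Finset.prod_range_reflect (fun j' : ℕ => ∏ i ∈ range r,
            ((f i : ℚ) + (g j' : ℚ) + ((r : ℚ) + (m : ℚ) + (s : ℚ) - 1 - (j' : ℚ)) - (i : ℚ))) s
      _ = X1bq r s m f g := by
          unfold X1bq
          rw [Finset.prod_comm]
          exact Finset.prod_congr rfl fun j _ => Finset.prod_congr rfl fun i _ => by ring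
  have hT3a : (∏ j ∈ range m, ∏ i ∈ range j, ((b (r + i) : ℚ) - (b (r + j) : ℚ))) = Dq m := by
    unfold Dq
    refine Finset.prod_congr rfl fun j hj => Finset.prod_congr rfl fun i hi => ?_
    have hj' := mem_range.mp hj
    have hi' := mem_range.mp hi
    rw [hbM i (by omega), hbM j (by omega)]
    push_cast; ring
  have hT3b : (∏ j ∈ range s, ∏ i ∈ range m, ((b (r + i) : ℚ) - (b (r + (m + j)) : ℚ)))
      = X1aq s m g := by
    calc (∏ j ∈ range s, ∏ i ∈ range m, ((b (r + i) : ℚ) - (b (r + (m + j)) : ℚ)))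
        = ∏ j ∈ range s, (fun j' : ℕ => ∏ i ∈ range m,
            ((s : ℚ) - (j' : ℚ) + (g j' : ℚ) + (i : ℚ))) (s - 1 - j) := by
          refine Finset.prod_congr rfl fun j hj => ?_
          have hjs := mem_range.mp hj
          simp only
          calc (∏ i ∈ range m, ((b (r + i) : ℚ) - (b (r + (m + j)) : ℚ)))
              = ∏ i ∈ range m, (fun i' : ℕ => ((g (s - 1 - j) : ℚ) + (j : ℚ) + 1 + (i' : ℚ)))
                  (m - 1 - i) := by
                refine Finset.prod_congr rfl fun i hi => ?_
                have him := mem_range.mp hi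
                simp only
                rw [hbM i him, hbR j hjs, cast_smj m i him]
                push_cast; ring
            _ = ∏ i ∈ range m, ((g (s - 1 - j) : ℚ) + (j : ℚ) + 1 + (i : ℚ)) :=
                Finset.prod_range_reflect
                  (fun i' : ℕ => ((g (s - 1 - j) : ℚ) + (j : ℚ) + 1 + (i' : ℚ))) m
            _ = ∏ i ∈ range m, ((s : ℚ) - ((s - 1 - j : ℕ) : ℚ) + (g (s - 1 - j) : ℚ) + (i : ℚ)) := by
                refine Finset.prod_congr rfl fun i _ => ?_
                rw [cast_smj s j hjs]; ring
      _ = ∏ j ∈ range s, ∏ i ∈ range m, ((s : ℚ) - (j : ℚ) + (g j : ℚ) + (i : ℚ)) :=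
          Finset.prod_range_reflect (fun j' : ℕ => ∏ i ∈ range m,
            ((s : ℚ) - (j' : ℚ) + (g j' : ℚ) + (i : ℚ))) s
      _ = X1aq s m g := rfl
  have hT3c : (∏ j ∈ range s, ∏ i ∈ range j,
      ((b (r + (m + i)) : ℚ) - (b (r + (m + j)) : ℚ))) = Aq s g := by
    calc (∏ j ∈ range s, ∏ i ∈ range j, ((b (r + (m + i)) : ℚ) - (b (r + (m + j)) : ℚ)))
        = ∏ j ∈ range s, ∏ i ∈ range j,
            (fun a b' => (g a : ℚ) - (g b' : ℚ) + (b' : ℚ) - (a : ℚ)) (s - 1 - j) (s - 1 - i) := by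
          refine Finset.prod_congr rfl fun j hj => Finset.prod_congr rfl fun i hi => ?_
          have hjs := mem_range.mp hj
          have his := mem_range.mp hi
          simp only
          rw [hbR i (by omega), hbR j (by omega), cast_smj s i (by omega),
            cast_smj s j (by omega)]
          push_cast; ring
      _ = ∏ j ∈ range s, ∏ i ∈ range j,
            ((g i : ℚ) - (g j : ℚ) + (j : ℚ) - (i : ℚ)) :=
          prod_triangle_reflect s (fun a b' => (g a : ℚ) - (g b' : ℚ) + (b' : ℚ) - (a : ℚ))
      _ = Aq s g := rfl
  rw [hT1, hT2a, hT2b, hT3a, hT3b, hT3c]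
  ring

lemma Pc_eq (r s m : ℕ) :
    (∏ j ∈ range (r + (m + s)), ∏ i ∈ range j, ((j : ℚ) - (i : ℚ)))
      = Dq r * C1aq r m * DpEq r s m * Dq m * C1aq s m * Dq s := by
  rw [prod_triangle_add r (m + s) (fun i j => ((j : ℚ) - (i : ℚ)))]
  rw [Finset.prod_range_add (fun j => ∏ i ∈ range r, (((r + j : ℕ) : ℚ) - (i : ℚ))) m s]
  rw [prod_triangle_add m s (fun i j => (((r + j : ℕ) : ℚ) - ((r + i : ℕ) : ℚ)))]
  have hT1 : (∏ j ∈ range r, ∏ i ∈ range j, ((j : ℚ) - (i : ℚ))) = Dq r := rfl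
  have hT2a : (∏ j ∈ range m, ∏ i ∈ range r, (((r + j : ℕ) : ℚ) - (i : ℚ))) = C1aq r m := by
    rw [Finset.prod_comm]
    unfold C1aq
    refine Finset.prod_congr rfl fun i _ => Finset.prod_congr rfl fun j _ => by
      push_cast; ring
  have hT2b : (∏ j ∈ range s, ∏ i ∈ range r, (((r + (m + j) : ℕ) : ℚ) - (i : ℚ)))
      = DpEq r s m := by
    calc (∏ j ∈ range s, ∏ i ∈ range r, (((r + (m + j) : ℕ) : ℚ) - (i : ℚ)))
        = ∏ j ∈ range s, (fun j' : ℕ => ∏ i ∈ range r,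
            ((r : ℚ) + (m : ℚ) + (s : ℚ) - 1 - (i : ℚ) - (j' : ℚ))) (s - 1 - j) := by
          refine Finset.prod_congr rfl fun j hj => ?_
          have hjs := mem_range.mp hj
          simp only
          refine Finset.prod_congr rfl fun i _ => ?_
          rw [cast_smj s j hjs]
          push_cast; ring
      _ = ∏ j ∈ range s, ∏ i ∈ range r,
            ((r : ℚ) + (m : ℚ) + (s : ℚ) - 1 - (i : ℚ) - (j : ℚ)) :=
          Finset.prod_range_reflect (fun j' : ℕ => ∏ i ∈ range r,
            ((r : ℚ) + (m : ℚ) + (s : ℚ) - 1 - (i : ℚ) - (j' : ℚ))) s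
      _ = DpEq r s m := by
          unfold DpEq
          rw [Finset.prod_comm]
  have hT3a : (∏ j ∈ range m, ∏ i ∈ range j, (((r + j : ℕ) : ℚ) - ((r + i : ℕ) : ℚ)))
      = Dq m := by
    unfold Dq
    refine Finset.prod_congr rfl fun j _ => Finset.prod_congr rfl fun i _ => by
      push_cast; ring
  have hT3b : (∏ j ∈ range s, ∏ i ∈ range m, (((r + (m + j) : ℕ) : ℚ) - ((r + i : ℕ) : ℚ)))
      = C1aq s m := by
    calc (∏ j ∈ range s, ∏ i ∈ range m, (((r + (m + j) : ℕ) : ℚ) - ((r + i : ℕ) : ℚ)))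
        = ∏ j ∈ range s, (fun j' : ℕ => ∏ i ∈ range m,
            ((s : ℚ) - (j' : ℚ) + (i : ℚ))) (s - 1 - j) := by
          refine Finset.prod_congr rfl fun j hj => ?_
          have hjs := mem_range.mp hj
          simp only
          calc (∏ i ∈ range m, (((r + (m + j) : ℕ) : ℚ) - ((r + i : ℕ) : ℚ)))
              = ∏ i ∈ range m, (fun i' : ℕ => ((j : ℚ) + 1 + (i' : ℚ))) (m - 1 - i) := by
                refine Finset.prod_congr rfl fun i hi => ?_
                have him := mem_range.mp hi
                simp only
                rw [cast_smj m i him]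
                push_cast; ring
            _ = ∏ i ∈ range m, ((j : ℚ) + 1 + (i : ℚ)) :=
                Finset.prod_range_reflect (fun i' : ℕ => ((j : ℚ) + 1 + (i' : ℚ))) m
            _ = ∏ i ∈ range m, ((s : ℚ) - ((s - 1 - j : ℕ) : ℚ) + (i : ℚ)) := by
                refine Finset.prod_congr rfl fun i _ => ?_
                rw [cast_smj s j hjs]; ring
      _ = ∏ j ∈ range s, ∏ i ∈ range m, ((s : ℚ) - (j : ℚ) + (i : ℚ)) :=
          Finset.prod_range_reflect (fun j' : ℕ => ∏ i ∈ range m,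
            ((s : ℚ) - (j' : ℚ) + (i : ℚ))) s
      _ = C1aq s m := rfl
  have hT3c : (∏ j ∈ range s, ∏ i ∈ range j, (((r + (m + j) : ℕ) : ℚ) - ((r + (m + i) : ℕ) : ℚ)))
      = Dq s := by
    unfold Dq
    refine Finset.prod_congr rfl fun j _ => Finset.prod_congr rfl fun i _ => by
      push_cast; ring
  rw [hT1, hT2a, hT2b, hT3a, hT3b, hT3c]
  ring


lemma step2 (r s : ℕ) (lam : Fin r → ℕ) (mu : Fin s → ℕ) (m : ℕ) :
    ∃ z : ℤ,
      (C (weylDim r lam * weylDim s mu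
            / (Blq r (ext r lam) * Blq s (ext s mu)))
        * NpP r s (ext r lam) (ext s mu)).eval ((r + s + m : ℕ) : ℚ)
      = (DpP r s).eval ((r + s + m : ℕ) : ℚ) * z := by
  obtain ⟨z, hz⟩ := exists_int_ratio_vdm (r + (m + s)) (bzF r s m (ext r lam) (ext s mu))
  rw [Pb_eq r s m (ext r lam) (ext s mu), Pc_eq r s m] at hz
  refine ⟨z, ?_⟩
  rw [eval_mul, eval_C, NpP_eval_n, DpP_eval_n]
  rw [weylDim_eq r lam, weylDim_eq s mu]
  have hD1 := (Dq_pos r).ne'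
  have hD2 := (Dq_pos s).ne'
  have hDm := (Dq_pos m).ne'
  have hB1 := (Blq_pos r (ext r lam)).ne'
  have hB2 := (Blq_pos s (ext s mu)).ne'
  have hC1 := (C1aq_pos r m).ne'
  have hC2 := (C1aq_pos s m).ne'
  have hXB1 := X_mul_B r m (ext r lam)
  have hXB2 := X_mul_B s m (ext s mu)
  have hmul : (Aq r (ext r lam) * Aq s (ext s mu)
        * (N1q r m (ext r lam) * N1q s m (ext s mu) * X1bq r s m (ext r lam) (ext s mu)))
        * (C1aq r m * C1aq s m * Dq m)
      = (DpEq r s m * (z : ℚ)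
          * (Dq r * Dq s * Blq r (ext r lam) * Blq s (ext s mu)))
        * (C1aq r m * C1aq s m * Dq m) := by
    linear_combination
      (-(Aq r (ext r lam) * Aq s (ext s mu) * X1bq r s m (ext r lam) (ext s mu)
          * Dq m * C1aq s m * N1q s m (ext s mu))) * hXB1
      + (-(Aq r (ext r lam) * Aq s (ext s mu) * X1bq r s m (ext r lam) (ext s mu)
          * Dq m * X1aq r m (ext r lam) * Blq r (ext r lam))) * hXB2
      + (Blq r (ext r lam) * Blq s (ext s mu)) * hz
  have hcancel := mul_right_cancel₀
    (mul_ne_zero (mul_ne_zero hC1 hC2) hDm) hmul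
  field_simp
  linear_combination hcancel

end Stmt4

open Stmt4 in
/-- For partitions `λ` of length `r` and `μ` of length `s`, the function
`dim X_{λ,μ}(t)` is a polynomial in `t` (agreeing with the rational expression away
from the poles `t = i + j − 1`) which takes integer values at every integer `t`. -/
theorem stmt_4 (r s : ℕ) (lam : Fin r → ℕ) (mu : Fin s → ℕ)
    (hlam : Antitone lam) (hmu : Antitone mu) :
    ∃ p : Polynomial ℚ,
      (∀ t : ℚ,
        (∀ (i : Fin r) (j : Fin s), t + 1 - ((i : ℕ) + 1) - ((j : ℕ) + 1) ≠ 0) →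
        p.eval t = dimX r s lam mu t) ∧
      (∀ m : ℤ, ∃ z : ℤ, p.eval (m : ℚ) = (z : ℚ)) := by
  have hne : ∀ n : ℕ, r + s ≤ n → (DpP r s).eval (n : ℚ) ≠ 0 := by
    intro n hn
    obtain ⟨m, rfl⟩ := Nat.exists_eq_add_of_le hn
    rw [DpP_eval_n]
    exact (DpEq_pos r s m).ne'
  have hint : ∀ n : ℕ, r + s ≤ n →
      ∃ z : ℤ, (C (weylDim r lam * weylDim s mu
            / (Blq r (ext r lam) * Blq s (ext s mu)))
          * NpP r s (ext r lam) (ext s mu)).eval (n : ℚ)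
        = (DpP r s).eval (n : ℚ) * z := by
    intro n hn
    obtain ⟨m, rfl⟩ := Nat.exists_eq_add_of_le hn
    exact step2 r s lam mu m
  have hdvd : DpP r s ∣ (C (weylDim r lam * weylDim s mu
        / (Blq r (ext r lam) * Blq s (ext s mu)))
      * NpP r s (ext r lam) (ext s mu)) :=
    dvd_of_int_tail _ _ (DpP_monic r s) (r + s) hne hint
  obtain ⟨p, hp⟩ := hdvd
  refine ⟨p, ?_, ?_⟩
  · intro t ht
    have hD : (DpP r s).eval t ≠ 0 := by
      rw [DpP_eval]
      refine Finset.prod_ne_zero_iff.mpr fun i hi => Finset.prod_ne_zero_iff.mpr fun j hj => ?_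
      have h2 := ht ⟨i, Finset.mem_range.mp hi⟩ ⟨j, Finset.mem_range.mp hj⟩
      simp only [Fin.val_mk] at h2
      intro h0
      exact h2 (by linear_combination h0)
    have h1 := dimX_eq r s lam mu t
    rw [hp, eval_mul, mul_div_cancel_left₀ _ hD] at h1
    exact h1.symm
  · refine tail_int_values (r + s) p.natDegree p le_rfl ?_
    intro n hn
    obtain ⟨z, hz⟩ := hint n hn
    rw [hp, eval_mul] at hz
    exact ⟨z, mul_left_cancel₀ (hne n hn) hz⟩
end

section
/- For n a positive integer and partitions λ, μ with |λ| = |μ| and lengths r + s ≤ n, the specialization dim X_{λ,μ}(n) of the interpolated dimension polynomial equals the dimension of the irreducible GL_n-representation with highest weight [λ,μ]_n = (λ_1,...,λ_r, 0,...,0, −μ_s,...,−μ_1) given by the Weyl dimension formula ∏_{1≤i<j≤n} (a_i − a_j + j − i)/(j − i), where a = [λ,μ]_n. -/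
/-- The extension of `λ : Fin r → ℕ` by zero to all of `ℕ` (as integers). -/
def extZ (r : ℕ) (lam : Fin r → ℕ) (k : ℕ) : ℤ :=
  if h : k < r then (lam ⟨k, h⟩ : ℤ) else 0

/-- The highest weight `[λ,μ]_n = (λ_1,…,λ_r,0,…,0,−μ_s,…,−μ_1)` of `GL_n`. -/
def hw (r s n : ℕ) (lam : Fin r → ℕ) (mu : Fin s → ℕ) (i : Fin n) : ℤ :=
  extZ r lam i - extZ s mu (n - 1 - (i : ℕ))

open Finset

/-! ### Auxiliary lemmas -/

/-- The extension of `λ` by zero, as a natural number valued function. -/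
def nextFn (r : ℕ) (lam : Fin r → ℕ) (k : ℕ) : ℕ :=
  if h : k < r then lam ⟨k, h⟩ else 0

lemma nextFn_ge (r : ℕ) (lam : Fin r → ℕ) (k : ℕ) (h : r ≤ k) : nextFn r lam k = 0 :=
  dif_neg (by omega)

lemma nextFn_fin (r : ℕ) (lam : Fin r → ℕ) (i : Fin r) : nextFn r lam i = lam i := by
  simp [nextFn, i.isLt]

lemma extZ_cast (r : ℕ) (lam : Fin r → ℕ) (k : ℕ) :
    ((extZ r lam k : ℤ) : ℚ) = ((nextFn r lam k : ℕ) : ℚ) := by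
  unfold extZ nextFn; split <;> simp

lemma filter_lt_range (n j : ℕ) (h : j ≤ n) : (range n).filter (· < j) = range j := by
  ext x; simp only [Finset.mem_filter, Finset.mem_range]; omega

lemma pair_prod (n : ℕ) (f : ℕ → ℕ → ℚ) :
    ∏ q ∈ Finset.univ.filter (fun q : Fin n × Fin n => q.1 < q.2), f q.1 q.2
      = ∏ j ∈ range n, ∏ i ∈ range j, f i j := by
  rw [Finset.prod_filter, Fintype.prod_prod_type]
  rw [Finset.prod_comm (s := (univ : Finset (Fin n))) (t := (univ : Finset (Fin n)))
    (f := fun i j : Fin n => if i < j then f i j else 1)]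
  simp only [Fin.lt_def]
  rw [Fin.prod_univ_eq_prod_range (fun j => ∏ x : Fin n, if (x:ℕ) < j then f x j else 1) n]
  refine Finset.prod_congr rfl fun j hj => ?_
  rw [Fin.prod_univ_eq_prod_range (fun i => if i < j then f i j else 1) n]
  rw [← Finset.prod_filter, filter_lt_range n j (le_of_lt (Finset.mem_range.mp hj))]

lemma tri_eq_pairs (m : ℕ) (f : ℕ → ℕ → ℚ) :
    ∏ j ∈ range m, ∏ i ∈ range j, f i j
      = ∏ p ∈ (range m ×ˢ range m).filter (fun p => p.1 < p.2), f p.1 p.2 := by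
  rw [Finset.prod_filter, Finset.prod_product]
  rw [Finset.prod_comm (s := range m) (t := range m)
    (f := fun i j : ℕ => if i < j then f i j else 1)]
  refine Finset.prod_congr rfl fun j hj => ?_
  rw [← Finset.prod_filter, filter_lt_range m j (le_of_lt (Finset.mem_range.mp hj))]

lemma tri_reflect (m : ℕ) (f : ℕ → ℕ → ℚ) :
    ∏ j ∈ range m, ∏ i ∈ range j, f i j
      = ∏ j ∈ range m, ∏ i ∈ range j, f (m-1-j) (m-1-i) := by
  rw [tri_eq_pairs m f, tri_eq_pairs m (fun i j => f (m-1-j) (m-1-i))]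
  refine Finset.prod_nbij' (fun p => (m-1-p.2, m-1-p.1)) (fun p => (m-1-p.2, m-1-p.1)) ?_ ?_ ?_ ?_ ?_
  · intro p hp; simp only [Finset.mem_filter, Finset.mem_product, Finset.mem_range] at *; omega
  · intro p hp; simp only [Finset.mem_filter, Finset.mem_product, Finset.mem_range] at *; omega
  · intro p hp; simp only [Finset.mem_filter, Finset.mem_product, Finset.mem_range] at hp
    ext <;> simp <;> omega
  · intro p hp; simp only [Finset.mem_filter, Finset.mem_product, Finset.mem_range] at hp
    ext <;> simp <;> omega
  · intro p hp; simp only [Finset.mem_filter, Finset.mem_product, Finset.mem_range] at hp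
    simp only []
    congr 1 <;> omega

lemma qbinom_nat_pos (N k : ℕ) (h : k ≤ N) : 0 < qbinom (N : ℚ) k := by
  unfold qbinom
  apply div_pos
  · apply Finset.prod_pos
    intro i hi
    have : i < N := lt_of_lt_of_le (Finset.mem_range.mp hi) h
    have : (i:ℚ) < N := by exact_mod_cast this
    linarith
  · exact_mod_cast Nat.factorial_pos k

lemma qbinom_succ (x : ℚ) (k : ℕ) :
    qbinom (x + 1) k * (x + 1 - k) = qbinom x k * (x + 1) := by
  unfold qbinom
  rw [div_mul_eq_mul_div, div_mul_eq_mul_div]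
  congr 1
  have h1 : ∏ i ∈ range (k+1), (x + 1 - (i:ℚ)) = (∏ i ∈ range k, (x + 1 - (i:ℚ))) * (x + 1 - k) :=
    Finset.prod_range_succ _ k
  have h2 : ∏ i ∈ range (k+1), (x + 1 - (i:ℚ))
      = (∏ i ∈ range k, (x + 1 - ((i+1:ℕ):ℚ))) * (x + 1 - (0:ℕ)) :=
    Finset.prod_range_succ' _ k
  have h3 : ∀ i ∈ range k, (x + 1 - ((i+1:ℕ):ℚ)) = x - (i:ℚ) := by
    intro i _; push_cast; ring
  rw [Finset.prod_congr rfl h3] at h2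
  rw [h1] at h2
  push_cast at h2 ⊢
  linarith [h2]

lemma core_prod (l c : ℕ) (hc : 1 ≤ c) (N : ℕ) :
    ∏ k ∈ range N, (((l:ℚ) + c + k) / ((c:ℚ) + k))
      = qbinom ((l:ℚ) + c + N - 1) l / qbinom ((l:ℚ) + c - 1) l := by
  have hD : qbinom ((l:ℚ) + c - 1) l ≠ 0 := by
    have h1 := qbinom_nat_pos (l + c - 1) l (by omega)
    have h2 : ((l + c - 1 : ℕ) : ℚ) = (l:ℚ) + c - 1 := by
      rw [Nat.cast_sub (by omega)]; push_cast; ring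
    rw [h2] at h1; exact ne_of_gt h1
  induction N with
  | zero => simp [div_self hD]
  | succ N ih =>
    rw [Finset.prod_range_succ, ih]
    have hd : ((c:ℚ) + N) ≠ 0 := by positivity
    have harg : (l:ℚ) + c + ((N+1 : ℕ):ℚ) - 1 = ((l:ℚ) + c + N - 1) + 1 := by push_cast; ring
    rw [harg]
    have key := qbinom_succ ((l:ℚ) + c + N - 1) l
    have harg2 : (l:ℚ) + c + N - 1 + 1 = (l:ℚ) + c + N := by ring
    rw [harg2] at key ⊢
    rw [div_mul_div_comm, div_eq_div_iff (by exact mul_ne_zero hD hd) hD]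
    linear_combination (-(qbinom ((l:ℚ) + c - 1) l)) * key

lemma col_prod_lam (l i a b : ℕ) (hia : i < a) (hab : a ≤ b) :
    ∏ j ∈ Ico a b, (((l:ℚ) + j - i) / ((j:ℚ) - i))
      = qbinom ((l:ℚ) + b - 1 - i) l / qbinom ((l:ℚ) + a - 1 - i) l := by
  rw [Finset.prod_Ico_eq_prod_range]
  have hstep : ∀ k ∈ range (b - a),
      ((l:ℚ) + ((a + k : ℕ):ℚ) - i) / (((a + k : ℕ):ℚ) - i)
        = ((l:ℚ) + ((a - i : ℕ):ℚ) + k) / (((a - i : ℕ):ℚ) + k) := by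
    intro k _
    have h1 : ((a + k : ℕ):ℚ) - i = ((a - i : ℕ):ℚ) + k := by
      rw [Nat.cast_sub (le_of_lt hia)]; push_cast; ring
    rw [h1]; congr 1
    rw [Nat.cast_sub (le_of_lt hia)]; push_cast; ring
  rw [Finset.prod_congr rfl hstep, core_prod l (a - i) (by omega) (b - a)]
  congr 2
  · rw [Nat.cast_sub (le_of_lt hia), Nat.cast_sub hab]; ring
  · rw [Nat.cast_sub (le_of_lt hia)]; ring

lemma col_prod_mu (l j a b : ℕ) (hab : a ≤ b) (hbj : b ≤ j) :
    ∏ i ∈ Ico a b, (((l:ℚ) + j - i) / ((j:ℚ) - i))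
      = qbinom ((l:ℚ) + j - a) l / qbinom ((l:ℚ) + j - b) l := by
  rw [Finset.prod_Ico_eq_prod_range]
  rw [← Finset.prod_range_reflect]
  have hstep : ∀ k ∈ range (b - a),
      ((l:ℚ) + j - ((a + (b - a - 1 - k) :ℕ):ℚ)) / ((j:ℚ) - ((a + (b - a - 1 - k):ℕ):ℚ))
        = ((l:ℚ) + ((j - b + 1 : ℕ):ℚ) + k) / (((j - b + 1 : ℕ):ℚ) + k) := by
    intro k hk
    have hk' : k < b - a := Finset.mem_range.mp hk
    have h1 : (j:ℚ) - ((a + (b - a - 1 - k):ℕ):ℚ) = ((j - b + 1 : ℕ):ℚ) + k := by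
      have e1 : (a + (b - a - 1 - k)) + ((j - b + 1) + k) = j := by omega
      have e2 : ((a + (b - a - 1 - k) :ℕ):ℚ) + (((j - b + 1:ℕ):ℚ) + k) = (j:ℚ) := by
        exact_mod_cast congrArg (Nat.cast : ℕ → ℚ) e1
      linarith
    rw [h1]; congr 1; linarith
  rw [Finset.prod_congr rfl hstep, core_prod l (j - b + 1) (by omega) (b - a)]
  congr 2
  · have e1 : ((j - b + 1) + (b - a)) = (j - a) + 1 := by omega
    have e2 : (((j - b + 1):ℕ):ℚ) + ((b - a :ℕ):ℚ) = ((j - a:ℕ):ℚ) + 1 := by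
      exact_mod_cast congrArg (Nat.cast : ℕ → ℚ) e1
    have e3 : ((j - a :ℕ):ℚ) = (j:ℚ) - a := by rw [Nat.cast_sub (by omega)]
    rw [e3] at e2; linarith
  · have e3 : ((j - b :ℕ):ℚ) = (j:ℚ) - b := by rw [Nat.cast_sub hbj]
    push_cast [e3]; ring

/-- The factor of the Weyl dimension product, as a function of natural indices. -/
def Ffun (r s n : ℕ) (lam : Fin r → ℕ) (mu : Fin s → ℕ) (i j : ℕ) : ℚ :=
  ((nextFn r lam i : ℚ) - (nextFn s mu (n-1-i) : ℚ)
      - ((nextFn r lam j : ℚ) - (nextFn s mu (n-1-j) : ℚ)) + (j:ℚ) - (i:ℚ)) / ((j:ℚ) - (i:ℚ))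

lemma weyl_tri (r : ℕ) (lam : Fin r → ℕ) :
    weylDim r lam = ∏ j ∈ range r, ∏ i ∈ range j,
      (((nextFn r lam i : ℕ):ℚ) - ((nextFn r lam j : ℕ):ℚ) + (j:ℚ) - (i:ℚ)) / ((j:ℚ) - (i:ℚ)) := by
  rw [← pair_prod]
  unfold weylDim
  refine Finset.prod_congr rfl fun q _ => ?_
  rw [nextFn_fin r lam q.1, nextFn_fin r lam q.2]

/-- For a positive integer `n` and partitions `λ`, `μ` with `|λ| = |μ|` and
`r + s ≤ n`, the specialization `dim X_{λ,μ}(n)` of the interpolated dimension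
polynomial equals the Weyl dimension `∏_{1≤i<j≤n} (a_i−a_j+j−i)/(j−i)` of the
irreducible `GL_n`-representation with highest weight `a = [λ,μ]_n`. -/
theorem stmt_5 (r s n : ℕ) (lam : Fin r → ℕ) (mu : Fin s → ℕ)
    (hlam : Antitone lam) (hmu : Antitone mu)
    (hsize : ∑ i, lam i = ∑ j, mu j) (hn : r + s ≤ n) (hpos : 0 < n) :
    dimX r s lam mu (n : ℚ) =
      ∏ q ∈ Finset.univ.filter (fun q : Fin n × Fin n => q.1 < q.2),
        ((hw r s n lam mu q.1 : ℚ) - (hw r s n lam mu q.2 : ℚ) +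
            ((q.2 : ℕ) : ℚ) - ((q.1 : ℕ) : ℚ)) /
          (((q.2 : ℕ) : ℚ) - ((q.1 : ℕ) : ℚ)) := by
  have hrs : r ≤ n - s := by omega
  have hsn : s ≤ n := by omega
  -- Step 1: rewrite the RHS as a double product of `Ffun` over triangles.
  have hRHS : (∏ q ∈ Finset.univ.filter (fun q : Fin n × Fin n => q.1 < q.2),
        ((hw r s n lam mu q.1 : ℚ) - (hw r s n lam mu q.2 : ℚ) +
            ((q.2 : ℕ) : ℚ) - ((q.1 : ℕ) : ℚ)) /
          (((q.2 : ℕ) : ℚ) - ((q.1 : ℕ) : ℚ)))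
      = ∏ j ∈ range n, ∏ i ∈ range j, Ffun r s n lam mu i j := by
    rw [← pair_prod n (Ffun r s n lam mu)]
    refine Finset.prod_congr rfl fun q _ => ?_
    simp only [Ffun, hw, Int.cast_sub, extZ_cast]
  rw [hRHS]
  -- Step 2: split the outer product into the three ranges.
  have hsplit : ((∏ j ∈ range r, ∏ i ∈ range j, Ffun r s n lam mu i j) *
        (∏ j ∈ Ico r (n-s), ∏ i ∈ range j, Ffun r s n lam mu i j)) *
        (∏ j ∈ Ico (n-s) n, ∏ i ∈ range j, Ffun r s n lam mu i j)
      = ∏ j ∈ range n, ∏ i ∈ range j, Ffun r s n lam mu i j := by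
    simp only [Finset.range_eq_Ico]
    rw [Finset.prod_Ico_consecutive (fun j => ∏ i ∈ Ico 0 j, Ffun r s n lam mu i j)
        (Nat.zero_le r) hrs,
      Finset.prod_Ico_consecutive (fun j => ∏ i ∈ Ico 0 j, Ffun r s n lam mu i j)
        (Nat.zero_le (n-s)) (Nat.sub_le n s)]
  rw [← hsplit]
  -- Block 1 : both indices < r
  have hB1 : ∏ j ∈ range r, ∏ i ∈ range j, Ffun r s n lam mu i j = weylDim r lam := by
    rw [weyl_tri]
    refine Finset.prod_congr rfl fun j hj => Finset.prod_congr rfl fun i hi => ?_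
    have hj' : j < r := Finset.mem_range.mp hj
    have hi' : i < j := Finset.mem_range.mp hi
    unfold Ffun
    rw [nextFn_ge s mu (n-1-i) (by omega), nextFn_ge s mu (n-1-j) (by omega)]
    push_cast; ring_nf
  -- Middle block : j ∈ [r, n-s)
  have hMid : ∏ j ∈ Ico r (n-s), ∏ i ∈ range j, Ffun r s n lam mu i j
      = ∏ i : Fin r,
          qbinom ((n:ℚ) + (lam i : ℚ) - ((i : ℕ) + 1) - (s : ℚ)) (lam i) /
            qbinom ((lam i : ℚ) + (r : ℚ) - ((i : ℕ) + 1)) (lam i) := by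
    have h1 : ∀ j ∈ Ico r (n-s), ∏ i ∈ range j, Ffun r s n lam mu i j
        = ∏ i ∈ range r, Ffun r s n lam mu i j := by
      intro j hj
      obtain ⟨hj1, hj2⟩ := Finset.mem_Ico.mp hj
      rw [Finset.range_eq_Ico,
        ← Finset.prod_Ico_consecutive (fun i => Ffun r s n lam mu i j) (Nat.zero_le r) hj1,
        ← Finset.range_eq_Ico]
      have h2 : ∏ i ∈ Ico r j, Ffun r s n lam mu i j = 1 := by
        apply Finset.prod_eq_one
        intro i hi
        obtain ⟨hi1, hi2⟩ := Finset.mem_Ico.mp hi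
        unfold Ffun
        rw [nextFn_ge r lam i hi1, nextFn_ge r lam j (by omega),
          nextFn_ge s mu (n-1-i) (by omega), nextFn_ge s mu (n-1-j) (by omega)]
        have : (i:ℚ) < j := by exact_mod_cast hi2
        rw [show ((0:ℕ):ℚ) - ((0:ℕ):ℚ) - (((0:ℕ):ℚ) - ((0:ℕ):ℚ)) + (j:ℚ) - (i:ℚ)
            = (j:ℚ) - (i:ℚ) by push_cast; ring]
        exact div_self (by linarith)
      rw [h2, mul_one]
    rw [Finset.prod_congr rfl h1, Finset.prod_comm]
    have h3 : ∀ i ∈ range r, ∏ j ∈ Ico r (n-s), Ffun r s n lam mu i j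
        = qbinom (((nextFn r lam i : ℕ):ℚ) + ((n-s:ℕ):ℚ) - 1 - i) (nextFn r lam i) /
            qbinom (((nextFn r lam i : ℕ):ℚ) + (r:ℚ) - 1 - i) (nextFn r lam i) := by
      intro i hi
      have hi' : i < r := Finset.mem_range.mp hi
      have h4 : ∀ j ∈ Ico r (n-s), Ffun r s n lam mu i j
          = (((nextFn r lam i : ℕ):ℚ) + (j:ℚ) - (i:ℚ)) / ((j:ℚ) - (i:ℚ)) := by
        intro j hj
        obtain ⟨hj1, hj2⟩ := Finset.mem_Ico.mp hj
        unfold Ffun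
        rw [nextFn_ge r lam j hj1, nextFn_ge s mu (n-1-i) (by omega),
          nextFn_ge s mu (n-1-j) (by omega)]
        congr 1
        push_cast; ring
      rw [Finset.prod_congr rfl h4, col_prod_lam (nextFn r lam i) i r (n-s) hi' hrs]
    rw [Finset.prod_congr rfl h3,
      ← Fin.prod_univ_eq_prod_range (fun i =>
        qbinom (((nextFn r lam i : ℕ):ℚ) + ((n-s:ℕ):ℚ) - 1 - i) (nextFn r lam i) /
          qbinom (((nextFn r lam i : ℕ):ℚ) + (r:ℚ) - 1 - i) (nextFn r lam i)) r]
    refine Finset.prod_congr rfl fun i _ => ?_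
    rw [nextFn_fin r lam i]
    congr 2
    · rw [Nat.cast_sub hsn]; ring
    · ring
  -- Last block split
  have hLast : ∏ j ∈ Ico (n-s) n, ∏ i ∈ range j, Ffun r s n lam mu i j
      = (∏ j ∈ Ico (n-s) n, ∏ i ∈ range r, Ffun r s n lam mu i j) *
        (∏ j ∈ Ico (n-s) n, ∏ i ∈ Ico r (n-s), Ffun r s n lam mu i j) *
        (∏ j ∈ Ico (n-s) n, ∏ i ∈ Ico (n-s) j, Ffun r s n lam mu i j) := by
    rw [← Finset.prod_mul_distrib, ← Finset.prod_mul_distrib]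
    refine Finset.prod_congr rfl fun j hj => ?_
    obtain ⟨hj1, hj2⟩ := Finset.mem_Ico.mp hj
    rw [Finset.range_eq_Ico,
      ← Finset.prod_Ico_consecutive (fun i => Ffun r s n lam mu i j) (Nat.zero_le (n-s)) hj1,
      ← Finset.prod_Ico_consecutive (fun i => Ffun r s n lam mu i j) (Nat.zero_le r) hrs,
      ← Finset.range_eq_Ico]
  -- Block 3 : i < r, j ∈ [n-s, n)
  have hB3 : ∏ j ∈ Ico (n-s) n, ∏ i ∈ range r, Ffun r s n lam mu i j
      = ∏ i : Fin r, ∏ k : Fin s,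
          ((n:ℚ) + 1 + (lam i : ℚ) + (mu k : ℚ) - ((i:ℕ) + 1) - ((k:ℕ) + 1)) /
            ((n:ℚ) + 1 - ((i:ℕ) + 1) - ((k:ℕ) + 1)) := by
    rw [Finset.prod_Ico_eq_prod_range]
    rw [show n - (n - s) = s from by omega]
    rw [← Finset.prod_range_reflect]
    rw [Finset.prod_comm]
    rw [← Fin.prod_univ_eq_prod_range (fun i => ∏ k ∈ range s,
      Ffun r s n lam mu i ((n-s) + (s - 1 - k))) r]
    refine Finset.prod_congr rfl fun i _ => ?_
    rw [← Fin.prod_univ_eq_prod_range (fun k =>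
      Ffun r s n lam mu i ((n-s) + (s - 1 - k))) s]
    refine Finset.prod_congr rfl fun k _ => ?_
    have hi' : (i:ℕ) < r := i.isLt
    have hk' : (k:ℕ) < s := k.isLt
    unfold Ffun
    rw [nextFn_fin r lam i]
    rw [nextFn_ge r lam ((n-s) + (s - 1 - k)) (by omega)]
    rw [nextFn_ge s mu (n - 1 - (i:ℕ)) (by omega)]
    rw [show n - 1 - ((n-s) + (s - 1 - (k:ℕ))) = (k:ℕ) from by omega]
    rw [show nextFn s mu (k:ℕ) = mu k from by simp [nextFn, hk']]
    have hcast : (((n-s) + (s - 1 - (k:ℕ)) : ℕ) : ℚ) = (n:ℚ) - 1 - (k:ℕ) := by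
      have e1 : ((n-s) + (s - 1 - (k:ℕ))) + (1 + (k:ℕ)) = n := by omega
      have e2 : (((n-s) + (s - 1 - (k:ℕ)) :ℕ):ℚ) + (1 + ((k:ℕ):ℚ)) = (n:ℚ) := by
        exact_mod_cast congrArg (Nat.cast : ℕ → ℚ) e1
      linarith
    rw [hcast]
    congr 1 <;> push_cast <;> ring
  -- Block 5 : i ∈ [r, n-s), j ∈ [n-s, n)
  have hB5 : ∏ j ∈ Ico (n-s) n, ∏ i ∈ Ico r (n-s), Ffun r s n lam mu i j
      = ∏ k : Fin s,
          qbinom ((n:ℚ) + (mu k : ℚ) - ((k:ℕ) + 1) - (r:ℚ)) (mu k) /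
            qbinom ((mu k : ℚ) + (s:ℚ) - ((k:ℕ) + 1)) (mu k) := by
    have h1 : ∀ j ∈ Ico (n-s) n, ∏ i ∈ Ico r (n-s), Ffun r s n lam mu i j
        = qbinom (((nextFn s mu (n-1-j) : ℕ):ℚ) + (j:ℚ) - r) (nextFn s mu (n-1-j)) /
            qbinom (((nextFn s mu (n-1-j) : ℕ):ℚ) + (j:ℚ) - ((n-s:ℕ):ℚ)) (nextFn s mu (n-1-j)) := by
      intro j hj
      obtain ⟨hj1, hj2⟩ := Finset.mem_Ico.mp hj
      have h2 : ∀ i ∈ Ico r (n-s), Ffun r s n lam mu i j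
          = (((nextFn s mu (n-1-j) : ℕ):ℚ) + (j:ℚ) - (i:ℚ)) / ((j:ℚ) - (i:ℚ)) := by
        intro i hi
        obtain ⟨hi1, hi2⟩ := Finset.mem_Ico.mp hi
        unfold Ffun
        rw [nextFn_ge r lam i hi1, nextFn_ge r lam j (by omega),
          nextFn_ge s mu (n-1-i) (by omega)]
        congr 1
        push_cast; ring
      rw [Finset.prod_congr rfl h2,
        col_prod_mu (nextFn s mu (n-1-j)) j r (n-s) hrs hj1]
    rw [Finset.prod_congr rfl h1]
    rw [Finset.prod_Ico_eq_prod_range]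
    rw [show n - (n - s) = s from by omega]
    rw [← Finset.prod_range_reflect]
    rw [← Fin.prod_univ_eq_prod_range (fun k =>
      qbinom (((nextFn s mu (n-1-((n-s) + (s-1-k))) : ℕ):ℚ) + ((((n-s) + (s-1-k):ℕ)):ℚ) - r)
          (nextFn s mu (n-1-((n-s) + (s-1-k)))) /
        qbinom (((nextFn s mu (n-1-((n-s) + (s-1-k))) : ℕ):ℚ) + ((((n-s) + (s-1-k):ℕ)):ℚ) - ((n-s:ℕ):ℚ))
          (nextFn s mu (n-1-((n-s) + (s-1-k))))) s]
    refine Finset.prod_congr rfl fun k _ => ?_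
    have hk' : (k:ℕ) < s := k.isLt
    rw [show n - 1 - ((n-s) + (s - 1 - (k:ℕ))) = (k:ℕ) from by omega]
    rw [show nextFn s mu (k:ℕ) = mu k from by simp [nextFn, hk']]
    have hcast : (((n-s) + (s - 1 - (k:ℕ)) : ℕ) : ℚ) = (n:ℚ) - 1 - (k:ℕ) := by
      have e1 : ((n-s) + (s - 1 - (k:ℕ))) + (1 + (k:ℕ)) = n := by omega
      have e2 : (((n-s) + (s - 1 - (k:ℕ)) :ℕ):ℚ) + (1 + ((k:ℕ):ℚ)) = (n:ℚ) := by
        exact_mod_cast congrArg (Nat.cast : ℕ → ℚ) e1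
      linarith
    rw [hcast, Nat.cast_sub hsn]
    congr 2 <;> ring
  -- Block 6 : both indices in [n-s, n)
  have hB6 : ∏ j ∈ Ico (n-s) n, ∏ i ∈ Ico (n-s) j, Ffun r s n lam mu i j
      = weylDim s mu := by
    rw [Finset.prod_Ico_eq_prod_range]
    rw [show n - (n - s) = s from by omega]
    have h1 : ∀ b ∈ range s, ∏ i ∈ Ico (n-s) ((n-s) + b), Ffun r s n lam mu i ((n-s)+b)
        = ∏ a ∈ range b, Ffun r s n lam mu ((n-s)+a) ((n-s)+b) := by
      intro b _
      rw [Finset.prod_Ico_eq_prod_range]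
      rw [show (n-s) + b - (n-s) = b from by omega]
    rw [Finset.prod_congr rfl h1]
    have h2 : ∀ b ∈ range s, ∀ a ∈ range b,
        Ffun r s n lam mu ((n-s)+a) ((n-s)+b)
          = (fun i j => (((nextFn s mu i : ℕ):ℚ) - ((nextFn s mu j : ℕ):ℚ) + (j:ℚ) - (i:ℚ))
              / ((j:ℚ) - (i:ℚ))) (s-1-b) (s-1-a) := by
      intro b hb a ha
      have hb' : b < s := Finset.mem_range.mp hb
      have ha' : a < b := Finset.mem_range.mp ha
      unfold Ffun
      simp only []
      rw [nextFn_ge r lam ((n-s)+a) (by omega), nextFn_ge r lam ((n-s)+b) (by omega)]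
      rw [show n - 1 - ((n-s)+a) = s-1-a from by omega,
        show n - 1 - ((n-s)+b) = s-1-b from by omega]
      have hc1 : (((n-s) + a : ℕ):ℚ) + ((s:ℚ) - 1 - a) = (n:ℚ) - 1 := by
        have e1 : ((n-s) + a) + (s - a) = n := by omega
        have e2 : (((n-s) + a :ℕ):ℚ) + ((s - a :ℕ):ℚ) = (n:ℚ) := by
          exact_mod_cast congrArg (Nat.cast : ℕ → ℚ) e1
        rw [Nat.cast_sub (by omega : a ≤ s)] at e2
        linarith
      have hc2 : (((n-s) + b : ℕ):ℚ) + ((s:ℚ) - 1 - b) = (n:ℚ) - 1 := by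
        have e1 : ((n-s) + b) + (s - b) = n := by omega
        have e2 : (((n-s) + b :ℕ):ℚ) + ((s - b :ℕ):ℚ) = (n:ℚ) := by
          exact_mod_cast congrArg (Nat.cast : ℕ → ℚ) e1
        rw [Nat.cast_sub (by omega : b ≤ s)] at e2
        linarith
      have hc3 : ((s - 1 - a : ℕ):ℚ) = (s:ℚ) - 1 - a := by
        rw [show s - 1 - a = s - (1 + a) from by omega, Nat.cast_sub (by omega)]
        push_cast; ring
      have hc4 : ((s - 1 - b : ℕ):ℚ) = (s:ℚ) - 1 - b := by
        rw [show s - 1 - b = s - (1 + b) from by omega, Nat.cast_sub (by omega)]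
        push_cast; ring
      rw [hc3, hc4]
      congr 1 <;> linarith
    rw [Finset.prod_congr rfl (fun b hb => Finset.prod_congr rfl (h2 b hb))]
    rw [← tri_reflect s (fun i j => (((nextFn s mu i : ℕ):ℚ) - ((nextFn s mu j : ℕ):ℚ)
        + (j:ℚ) - (i:ℚ)) / ((j:ℚ) - (i:ℚ)))]
    rw [← weyl_tri s mu]
  rw [hB1, hMid, hLast, hB3, hB5, hB6]
  unfold dimX
  ring
end

section
/- Let C_{λ,n}(q) = q^{(λ,λ)/2} ∏_{α>0} (1 − q^{(λ+ρ,α)}) / ∏_{j≥1} (1−q^j)^{n−1} for a dominant weight λ of sl_n in the root lattice. Then for fixed partitions λ, μ with |λ|=|μ|, of lengths r, s, as n → ∞ the coefficients C_{[λ,μ]_n, n}(q) converge coefficientwise (as formal power series in q) to C_{λ,μ,∞}(q) = q^{(λ²+μ²)/2} ∏_{j≥2}(1−q^j)^{−(j−1)} ∏_{1≤i<j≤r} (1−q^{λ_i−λ_j+j−i})/(1−q^{j−i}) ∏_{1≤i<j≤s} (1−q^{μ_i−μ_j+j−i})/(1−q^{j−i}) ∏_{i=1}^r ∏_{k=0}^{λ_i−1}(1−q^{r+1+k−i})^{−1}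 ∏_{i=1}^s ∏_{k=0}^{μ_i−1}(1−q^{s+1+k−i})^{−1}, where λ² = ∑λ_i² and μ² = ∑μ_i². -/
namespace Stmt10

open PowerSeries

/-- Extension of `λ : Fin r → ℕ` by zero (as integers). -/
def extZ (r : ℕ) (lam : Fin r → ℕ) (k : ℕ) : ℤ :=
  if h : k < r then (lam ⟨k, h⟩ : ℤ) else 0

/-- The `sl_n`-weight `[λ,μ]_n = (λ_1,…,λ_r,0,…,0,−μ_s,…,−μ_1)`. -/
def hw (r s n : ℕ) (lam : Fin r → ℕ) (mu : Fin s → ℕ) (i : Fin n) : ℤ :=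
  extZ r lam i - extZ s mu (n - 1 - (i : ℕ))

/-- `C_{[λ,μ]_n, n}(q) = q^{(a,a)/2} ∏_{1≤i<j≤n} (1−q^{a_i−a_j+j−i}) / ∏_{j≥1}(1−q^j)^{n−1}`
for `a = [λ,μ]_n`, with the infinite product in the denominator truncated at level `d`
(which does not change the coefficients of `q^e` for `e ≤ d`). -/
noncomputable def Cn (r s : ℕ) (lam : Fin r → ℕ) (mu : Fin s → ℕ) (n d : ℕ) :
    PowerSeries ℚ :=
  (PowerSeries.X : PowerSeries ℚ) ^ ((∑ i : Fin n, (hw r s n lam mu i) ^ 2).toNat / 2) *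
    (∏ q ∈ Finset.univ.filter (fun q : Fin n × Fin n => q.1 < q.2),
      (1 - (PowerSeries.X : PowerSeries ℚ) ^
        ((hw r s n lam mu q.1 - hw r s n lam mu q.2 + ((q.2 : ℕ) : ℤ) - ((q.1 : ℕ) : ℤ)).toNat))) *
    ((∏ j ∈ Finset.Icc 1 d, (1 - (PowerSeries.X : PowerSeries ℚ) ^ j))⁻¹) ^ (n - 1)

/-- The stable limit
`C_{λ,μ,∞}(q) = q^{(λ²+μ²)/2} ∏_{j≥2}(1−q^j)^{−(j−1)}
  ∏_{1≤i<j≤r} (1−q^{λ_i−λ_j+j−i})/(1−q^{j−i}) ∏_{1≤i<j≤s} (1−q^{μ_i−μ_j+j−i})/(1−q^{j−i})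
  ∏_{i=1}^r ∏_{k=0}^{λ_i−1} (1−q^{r+1+k−i})^{−1} ∏_{i=1}^s ∏_{k=0}^{μ_i−1} (1−q^{s+1+k−i})^{−1}`,
with the infinite product `∏_{j≥2}` truncated at level `d` (which does not change the
coefficients of `q^e` for `e ≤ d`). -/
noncomputable def Cinf (r s : ℕ) (lam : Fin r → ℕ) (mu : Fin s → ℕ) (d : ℕ) :
    PowerSeries ℚ :=
  (PowerSeries.X : PowerSeries ℚ) ^ ((∑ i, (lam i) ^ 2 + ∑ j, (mu j) ^ 2) / 2) *
    (∏ j ∈ Finset.Icc 2 d, ((1 - (PowerSeries.X : PowerSeries ℚ) ^ j)⁻¹) ^ (j - 1)) *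
    (∏ q ∈ Finset.univ.filter (fun q : Fin r × Fin r => q.1 < q.2),
      (1 - (PowerSeries.X : PowerSeries ℚ) ^ (lam q.1 - lam q.2 + ((q.2 : ℕ) - (q.1 : ℕ)))) *
        (1 - (PowerSeries.X : PowerSeries ℚ) ^ ((q.2 : ℕ) - (q.1 : ℕ)))⁻¹) *
    (∏ q ∈ Finset.univ.filter (fun q : Fin s × Fin s => q.1 < q.2),
      (1 - (PowerSeries.X : PowerSeries ℚ) ^ (mu q.1 - mu q.2 + ((q.2 : ℕ) - (q.1 : ℕ)))) *
        (1 - (PowerSeries.X : PowerSeries ℚ) ^ ((q.2 : ℕ) - (q.1 : ℕ)))⁻¹) *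
    (∏ i : Fin r, ∏ k ∈ Finset.range (lam i),
      (1 - (PowerSeries.X : PowerSeries ℚ) ^ (r + k - (i : ℕ)))⁻¹) *
    (∏ i : Fin s, ∏ k ∈ Finset.range (mu i),
      (1 - (PowerSeries.X : PowerSeries ℚ) ^ (s + k - (i : ℕ)))⁻¹)

/-! ### Auxiliary machinery -/

open Finset

noncomputable section ProofAux

/-- Congruence of power series modulo `X^(d+1)`. -/
def MOD (d : ℕ) (A B : PowerSeries ℚ) : Prop := (PowerSeries.X : PowerSeries ℚ)^(d+1) ∣ A - B

lemma MOD.refl (d : ℕ) (A : PowerSeries ℚ) : MOD d A A := by unfold MOD; simp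

lemma MOD.mul {d : ℕ} {A B C D : PowerSeries ℚ} (h1 : MOD d A B) (h2 : MOD d C D) :
    MOD d (A*C) (B*D) := by
  obtain ⟨u, hu⟩ := h1; obtain ⟨v, hv⟩ := h2
  refine ⟨u*C + B*v, ?_⟩
  have : A*C - B*D = (A-B)*C + B*(C-D) := by ring
  rw [this, hu, hv]; ring

lemma MOD.one_sub {d e : ℕ} (h : d < e) : MOD d (1 - (X:PowerSeries ℚ)^e) 1 := by
  refine ⟨-(X:PowerSeries ℚ)^(e-(d+1)), ?_⟩
  have h2 : (1 - (X:PowerSeries ℚ)^e) - 1 = -(X^(d+1) * X^(e-(d+1))) := by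
    rw [← pow_add]
    have : d + 1 + (e - (d+1)) = e := by omega
    rw [this]; ring
  rw [h2]; ring

lemma MOD.prod {d : ℕ} {ι : Type*} (t : Finset ι) (f g : ι → PowerSeries ℚ)
    (h : ∀ i ∈ t, MOD d (f i) (g i)) : MOD d (∏ i ∈ t, f i) (∏ i ∈ t, g i) := by
  classical
  induction t using Finset.induction with
  | empty => exact MOD.refl d 1
  | @insert a u hx ih =>
    rw [Finset.prod_insert hx, Finset.prod_insert hx]
    exact (h a (Finset.mem_insert_self a u)).mul (ih fun i hi => h i (Finset.mem_insert_of_mem hi))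

lemma MOD.pow {d : ℕ} {A B : PowerSeries ℚ} (h : MOD d A B) (k : ℕ) : MOD d (A^k) (B^k) := by
  induction k with
  | zero => exact MOD.refl d 1
  | succ k ih => rw [pow_succ, pow_succ]; exact ih.mul h

lemma MOD.coeff_eq {d : ℕ} {A B : PowerSeries ℚ} (h : MOD d A B) :
    PowerSeries.coeff (R := ℚ) d A = PowerSeries.coeff (R := ℚ) d B := by
  have := (PowerSeries.X_pow_dvd_iff.mp h) d (by omega)
  rw [map_sub] at this
  linarith

lemma MOD.cancel {d : ℕ} {A B W : PowerSeries ℚ} (hW : constantCoeff (R := ℚ) W ≠ 0)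
    (h : MOD d (A*W) (B*W)) : MOD d A B := by
  obtain ⟨u, hu⟩ := h
  refine ⟨u * W⁻¹, ?_⟩
  have h2 : A*W - B*W = (A-B)*W := by ring
  rw [h2] at hu
  have h3 : (A - B) * (W * W⁻¹) = X^(d+1) * (u * W⁻¹) := by rw [← mul_assoc, hu]; ring
  rwa [PowerSeries.mul_inv_cancel _ hW, mul_one] at h3

lemma MOD.trans {d : ℕ} {A B C : PowerSeries ℚ} (h1 : MOD d A B) (h2 : MOD d B C) :
    MOD d A C := by
  obtain ⟨u, hu⟩ := h1; obtain ⟨v, hv⟩ := h2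
  exact ⟨u + v, by rw [mul_add, ← hu, ← hv]; ring⟩

lemma MOD.symm {d : ℕ} {A B : PowerSeries ℚ} (h : MOD d A B) : MOD d B A := by
  obtain ⟨u, hu⟩ := h; exact ⟨-u, by rw [mul_neg, ← hu]; ring⟩

lemma MOD.congr {d : ℕ} {A B A' B' : PowerSeries ℚ} (h : MOD d A B) (hA : A = A')
    (hB : B = B') : MOD d A' B' := hA ▸ hB ▸ h

/-! ### Basic series -/

/-- `f e = 1 - X^e`. -/
def f (e : ℕ) : PowerSeries ℚ := 1 - (PowerSeries.X : PowerSeries ℚ)^e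

/-- `T K = ∏_{j=1}^K (1 - X^j)`. -/
def T (K : ℕ) : PowerSeries ℚ := ∏ j ∈ Icc 1 K, f j

lemma MOD_f_one {d e : ℕ} (h : d < e) : MOD d (f e) 1 := MOD.one_sub h

lemma T_Ioc (K : ℕ) : T K = ∏ c ∈ Ioc 0 K, f c := by rw [T, ← Finset.Icc_add_one_left_eq_Ioc]; rfl

lemma TT_mod {d K : ℕ} (h : d ≤ K) : MOD d (∏ c ∈ Ioc 0 K, f c) (T d) := by
  rw [← Finset.prod_Ioc_consecutive _ (Nat.zero_le d) h, ← T_Ioc]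
  have h1 : MOD d (∏ c ∈ Ioc d K, f c) 1 := by
    have := MOD.prod (Ioc d K) f (fun _ => 1)
      (fun c hc => MOD_f_one (mem_Ioc.mp hc).1)
    rwa [Finset.prod_const_one] at this
  exact MOD.congr ((MOD.refl d (T d)).mul h1) rfl (mul_one _)

lemma cc_f {e : ℕ} (h : 1 ≤ e) : constantCoeff (R := ℚ) (f e) = 1 := by
  unfold f
  rw [map_sub, map_one, map_pow, constantCoeff_X, zero_pow (by omega), sub_zero]

lemma f_inv_mul {e : ℕ} (h : 1 ≤ e) : (f e)⁻¹ * f e = 1 :=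
  PowerSeries.inv_mul_cancel _ (by rw [cc_f h]; exact one_ne_zero)

lemma cc_T (K : ℕ) : constantCoeff (R := ℚ) (T K) = 1 := by
  rw [T, map_prod]
  rw [Finset.prod_congr rfl (fun j hj => cc_f (mem_Icc.mp hj).1)]
  exact Finset.prod_const_one

lemma T_inv_mul (K : ℕ) : (T K)⁻¹ * T K = 1 :=
  PowerSeries.inv_mul_cancel _ (by rw [cc_T]; exact one_ne_zero)

/-! ### Pair sets -/

def pairsLT (A : Finset ℕ) : Finset (ℕ × ℕ) := (A ×ˢ A).filter (fun p => p.1 < p.2)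

lemma mem_pairsLT {A : Finset ℕ} {p : ℕ × ℕ} :
    p ∈ pairsLT A ↔ p.1 ∈ A ∧ p.2 ∈ A ∧ p.1 < p.2 := by
  unfold pairsLT; simp [Finset.mem_filter, Finset.mem_product, and_assoc]

lemma finPairs_prod {M : Type*} [CommMonoid M] (n : ℕ) (F : ℕ → ℕ → M) :
    ∏ q ∈ Finset.univ.filter (fun q : Fin n × Fin n => q.1 < q.2), F q.1 q.2
      = ∏ p ∈ pairsLT (range n), F p.1 p.2 := by
  refine Finset.prod_bij' (fun q _ => ((q.1 : ℕ), (q.2 : ℕ)))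
    (fun p hp => (⟨p.1, ?_⟩, ⟨p.2, ?_⟩)) ?_ ?_ ?_ ?_ ?_
  · exact (mem_range.mp (mem_pairsLT.mp hp).1)
  · exact (mem_range.mp (mem_pairsLT.mp hp).2.1)
  · intro q hq
    simp only [Finset.mem_filter, Finset.mem_univ, true_and] at hq
    exact mem_pairsLT.mpr ⟨mem_range.mpr q.1.isLt, mem_range.mpr q.2.isLt, hq⟩
  · intro p hp
    simp only [Finset.mem_filter, Finset.mem_univ, true_and]
    exact (mem_pairsLT.mp hp).2.2
  · intro q hq; simp
  · intro p hp; simp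
  · intro q hq; rfl

lemma prod_pairsLT {M : Type*} [CommMonoid M] (A : Finset ℕ) (F : ℕ → ℕ → M) :
    ∏ p ∈ pairsLT A, F p.1 p.2 = ∏ i ∈ A, ∏ j ∈ A.filter (fun j => i < j), F i j := by
  unfold pairsLT
  rw [Finset.prod_filter]
  exact (Finset.prod_product' A A fun i j => if i < j then F i j else 1).trans
    (Finset.prod_congr rfl fun i _ => (Finset.prod_filter _ _).symm)

lemma pairs_decomp {M : Type*} [CommMonoid M] (a b n : ℕ) (ha : a ≤ b) (hb : b ≤ n)
    (F : ℕ → ℕ → M) :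
    ∏ p ∈ pairsLT (range n), F p.1 p.2 =
      (∏ p ∈ pairsLT (range a), F p.1 p.2) *
      ((∏ p ∈ range a ×ˢ Ico a b, F p.1 p.2) *
      ((∏ p ∈ range a ×ˢ Ico b n, F p.1 p.2) *
      ((∏ p ∈ pairsLT (Ico a b), F p.1 p.2) *
      ((∏ p ∈ Ico a b ×ˢ Ico b n, F p.1 p.2) *
      (∏ p ∈ pairsLT (Ico b n), F p.1 p.2))))) := by
  have e : pairsLT (range n) =
      pairsLT (range a) ∪ ((range a ×ˢ Ico a b) ∪ ((range a ×ˢ Ico b n) ∪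
        (pairsLT (Ico a b) ∪ ((Ico a b ×ˢ Ico b n) ∪ pairsLT (Ico b n))))) := by
    ext p
    simp only [mem_pairsLT, mem_union, Finset.mem_product, mem_range, mem_Ico]
    omega
  have d5 : Disjoint (Ico a b ×ˢ Ico b n) (pairsLT (Ico b n)) := by
    rw [Finset.disjoint_left]
    intro p hp hq
    simp only [Finset.mem_product, mem_Ico] at hp
    simp only [mem_pairsLT, mem_Ico] at hq
    omega
  have d4 : Disjoint (pairsLT (Ico a b)) ((Ico a b ×ˢ Ico b n) ∪ pairsLT (Ico b n)) := by
    rw [Finset.disjoint_left]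
    intro p hp hq
    simp only [mem_pairsLT, mem_Ico] at hp
    simp only [mem_union, mem_pairsLT, Finset.mem_product, mem_Ico] at hq
    omega
  have d3 : Disjoint (range a ×ˢ Ico b n)
      (pairsLT (Ico a b) ∪ ((Ico a b ×ˢ Ico b n) ∪ pairsLT (Ico b n))) := by
    rw [Finset.disjoint_left]
    intro p hp hq
    simp only [Finset.mem_product, mem_range, mem_Ico] at hp
    simp only [mem_union, mem_pairsLT, Finset.mem_product, mem_Ico] at hq
    omega
  have d2 : Disjoint (range a ×ˢ Ico a b) ((range a ×ˢ Ico b n) ∪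
      (pairsLT (Ico a b) ∪ ((Ico a b ×ˢ Ico b n) ∪ pairsLT (Ico b n)))) := by
    rw [Finset.disjoint_left]
    intro p hp hq
    simp only [Finset.mem_product, mem_range, mem_Ico] at hp
    simp only [mem_union, mem_pairsLT, Finset.mem_product, mem_range, mem_Ico] at hq
    omega
  have d1 : Disjoint (pairsLT (range a)) ((range a ×ˢ Ico a b) ∪ ((range a ×ˢ Ico b n) ∪
      (pairsLT (Ico a b) ∪ ((Ico a b ×ˢ Ico b n) ∪ pairsLT (Ico b n))))) := by
    rw [Finset.disjoint_left]
    intro p hp hq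
    simp only [mem_pairsLT, mem_range] at hp
    simp only [mem_union, mem_pairsLT, Finset.mem_product, mem_range, mem_Ico] at hq
    omega
  rw [e, Finset.prod_union d1, Finset.prod_union d2, Finset.prod_union d3,
    Finset.prod_union d4, Finset.prod_union d5]

lemma prod_Ico_shift {M : Type*} [CommMonoid M] (g : ℕ → M) {a b o i : ℕ} (h : i < o + a)
    (hab : a ≤ b) :
    ∏ j ∈ Ico a b, g (o + j - i) = ∏ c ∈ Ioc (o + a - i - 1) (o + b - i - 1), g c := by
  refine Finset.prod_nbij' (fun j => o + j - i) (fun c => c + i - o) ?_ ?_ ?_ ?_ ?_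
  · intro j hj; simp only [mem_Ico] at hj; simp only [mem_Ioc]; omega
  · intro c hc; simp only [mem_Ioc] at hc; simp only [mem_Ico]; omega
  · intro j hj; simp only [mem_Ico] at hj; omega
  · intro c hc; simp only [mem_Ioc] at hc; omega
  · intro j hj; rfl

lemma prod_Ico_shift_neg {M : Type*} [CommMonoid M] (g : ℕ → M) {a b o : ℕ} (h : b ≤ o)
    (hab : a ≤ b) :
    ∏ i ∈ Ico a b, g (o - i) = ∏ c ∈ Ioc (o - b) (o - a), g c := by
  refine Finset.prod_nbij' (fun i => o - i) (fun c => o - c) ?_ ?_ ?_ ?_ ?_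
  · intro j hj; simp only [mem_Ico] at hj; simp only [mem_Ioc]; omega
  · intro c hc; simp only [mem_Ioc] at hc; simp only [mem_Ico]; omega
  · intro j hj; simp only [mem_Ico] at hj; omega
  · intro c hc; simp only [mem_Ioc] at hc; omega
  · intro j hj; rfl

/-! ### Exponents -/

def eN (r : ℕ) (lam : Fin r → ℕ) (k : ℕ) : ℕ := if h : k < r then lam ⟨k, h⟩ else 0

lemma extZ_eq (r : ℕ) (lam : Fin r → ℕ) (k : ℕ) : extZ r lam k = (eN r lam k : ℤ) := by
  unfold extZ eN; split <;> simp

lemma eN_pos (r : ℕ) (lam : Fin r → ℕ) {k : ℕ} (h : k < r) : eN r lam k = lam ⟨k, h⟩ := dif_pos h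
lemma eN_zero (r : ℕ) (lam : Fin r → ℕ) {k : ℕ} (h : r ≤ k) : eN r lam k = 0 := dif_neg (by omega)

lemma eN_anti {r : ℕ} {lam : Fin r → ℕ} (hlam : Antitone lam) {i j : ℕ} (h : i ≤ j) :
    eN r lam j ≤ eN r lam i := by
  unfold eN
  rcases lt_or_ge j r with hj | hj
  · rw [dif_pos hj, dif_pos (lt_of_le_of_lt h hj)]
    exact hlam (by simpa using h)
  · rw [dif_neg (by omega)]; omega

def E (r s : ℕ) (lam : Fin r → ℕ) (mu : Fin s → ℕ) (n i j : ℕ) : ℕ :=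
  (((eN r lam i : ℤ) - (eN s mu (n-1-i) : ℤ)) - ((eN r lam j : ℤ) - (eN s mu (n-1-j) : ℤ))
    + (j : ℤ) - (i : ℤ)).toNat

lemma hwE (r s n : ℕ) (lam : Fin r → ℕ) (mu : Fin s → ℕ) (q : Fin n × Fin n) :
    (hw r s n lam mu q.1 - hw r s n lam mu q.2 + ((q.2 : ℕ) : ℤ) - ((q.1 : ℕ) : ℤ)).toNat
      = E r s lam mu n q.1 q.2 := by
  unfold hw E
  rw [extZ_eq, extZ_eq, extZ_eq, extZ_eq]

section Evals
variable {r s n : ℕ} {lam : Fin r → ℕ} {mu : Fin s → ℕ}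

lemma E_ll (hlam : Antitone lam) (hrs : r + s ≤ n) {i j : ℕ} (hij : i < j) (hj : j < r) :
    E r s lam mu n i j = (eN r lam i - eN r lam j) + (j - i) := by
  unfold E
  have h1 : eN s mu (n-1-i) = 0 := eN_zero _ _ (by omega)
  have h2 : eN s mu (n-1-j) = 0 := eN_zero _ _ (by omega)
  have h3 := eN_anti hlam (le_of_lt hij) (lam := lam)
  omega

lemma E_lm (hrs : r + s ≤ n) {i j : ℕ} (hi : i < r) (hj1 : r ≤ j) (hj2 : j < n - s) :
    E r s lam mu n i j = eN r lam i + j - i := by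
  unfold E
  have h1 : eN s mu (n-1-i) = 0 := eN_zero _ _ (by omega)
  have h2 : eN s mu (n-1-j) = 0 := eN_zero _ _ (by omega)
  have h3 : eN r lam j = 0 := eN_zero _ _ hj1
  omega

lemma E_lh {d : ℕ} (hn : d + r + s + 1 ≤ n) {i j : ℕ} (hi : i < r) (hj1 : n - s ≤ j)
    (hj2 : j < n) : d < E r s lam mu n i j := by
  unfold E
  have h1 : eN s mu (n-1-i) = 0 := eN_zero _ _ (by omega)
  have h3 : eN r lam j = 0 := eN_zero _ _ (by omega)
  omega

lemma E_mm (hrs : r + s ≤ n) {i j : ℕ} (hi1 : r ≤ i) (hij : i < j) (hj2 : j < n - s) :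
    E r s lam mu n i j = j - i := by
  unfold E
  have h1 : eN s mu (n-1-i) = 0 := eN_zero _ _ (by omega)
  have h2 : eN s mu (n-1-j) = 0 := eN_zero _ _ (by omega)
  have h3 : eN r lam i = 0 := eN_zero _ _ hi1
  have h4 : eN r lam j = 0 := eN_zero _ _ (by omega)
  omega

lemma E_mh (hrs : r + s ≤ n) {i j : ℕ} (hi1 : r ≤ i) (hi2 : i < n - s) (hj1 : n - s ≤ j)
    (hj2 : j < n) : E r s lam mu n i j = eN s mu (n-1-j) + j - i := by
  unfold E
  have h1 : eN s mu (n-1-i) = 0 := eN_zero _ _ (by omega)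
  have h3 : eN r lam i = 0 := eN_zero _ _ hi1
  have h4 : eN r lam j = 0 := eN_zero _ _ (by omega)
  omega

lemma E_hh (hmu : Antitone mu) (hrs : r + s + 1 ≤ n) {i j : ℕ} (hi1 : n - s ≤ i) (hij : i < j)
    (hj2 : j < n) :
    E r s lam mu n i j = (eN s mu (n-1-j) - eN s mu (n-1-i)) + (j - i) := by
  unfold E
  have h3 : eN r lam i = 0 := eN_zero _ _ (by omega)
  have h4 : eN r lam j = 0 := eN_zero _ _ (by omega)
  have h5 := eN_anti hmu (show n-1-j ≤ n-1-i by omega) (lam := mu)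
  omega

end Evals

/-! ### Named pieces -/

def QN (r : ℕ) (lam : Fin r → ℕ) : PowerSeries ℚ :=
  ∏ q ∈ Finset.univ.filter (fun q : Fin r × Fin r => q.1 < q.2),
    f (lam q.1 - lam q.2 + ((q.2 : ℕ) - (q.1 : ℕ)))

def QD (r : ℕ) : PowerSeries ℚ :=
  ∏ q ∈ Finset.univ.filter (fun q : Fin r × Fin r => q.1 < q.2), f ((q.2 : ℕ) - (q.1 : ℕ))

def Hh (r : ℕ) (lam : Fin r → ℕ) : PowerSeries ℚ :=
  ∏ i : Fin r, ∏ k ∈ Finset.range (lam i), f (r + k - (i : ℕ))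

def Pi2 (d : ℕ) : PowerSeries ℚ := ∏ j ∈ Icc 2 d, f j ^ (j - 1)

def Pn (r s : ℕ) (lam : Fin r → ℕ) (mu : Fin s → ℕ) (n : ℕ) : PowerSeries ℚ :=
  ∏ p ∈ pairsLT (range n), f (E r s lam mu n p.1 p.2)

/-! ### Block computations -/

section Blocks
variable {r s d n : ℕ} {lam : Fin r → ℕ} {mu : Fin s → ℕ}

lemma A1_eq (hlam : Antitone lam) (hrs : r + s ≤ n) :
    ∏ p ∈ pairsLT (range r), f (E r s lam mu n p.1 p.2) = QN r lam := by
  have h1 : ∀ p ∈ pairsLT (range r),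
      f (E r s lam mu n p.1 p.2)
        = (fun i j => f (eN r lam i - eN r lam j + (j - i))) p.1 p.2 := by
    intro p hp
    obtain ⟨hp1, hp2, hp3⟩ := mem_pairsLT.mp hp
    simp only
    rw [E_ll hlam hrs hp3 (mem_range.mp hp2)]
  calc ∏ p ∈ pairsLT (range r), f (E r s lam mu n p.1 p.2)
      = ∏ p ∈ pairsLT (range r), (fun i j => f (eN r lam i - eN r lam j + (j - i))) p.1 p.2 :=
        Finset.prod_congr rfl h1
    _ = ∏ q ∈ Finset.univ.filter (fun q : Fin r × Fin r => q.1 < q.2),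
          (fun i j => f (eN r lam i - eN r lam j + (j - i))) (q.1 : ℕ) (q.2 : ℕ) :=
        (finPairs_prod r (fun i j => f (eN r lam i - eN r lam j + (j - i)))).symm
    _ = QN r lam := by
        unfold QN
        refine Finset.prod_congr rfl fun q hq => ?_
        simp only
        rw [eN_pos r lam q.1.isLt, eN_pos r lam q.2.isLt]

lemma A6_eq (hmu : Antitone mu) (hrs : r + s + 1 ≤ n) :
    ∏ p ∈ pairsLT (Ico (n-s) n), f (E r s lam mu n p.1 p.2) = QN s mu := by
  have step1 : ∏ p ∈ pairsLT (Ico (n-s) n), f (E r s lam mu n p.1 p.2)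
      = ∏ q ∈ pairsLT (range s), f (eN s mu q.1 - eN s mu q.2 + (q.2 - q.1)) := by
    refine Finset.prod_nbij' (fun p => (n-1-p.2, n-1-p.1)) (fun q => (n-1-q.2, n-1-q.1))
      ?_ ?_ ?_ ?_ ?_
    · intro p hp
      obtain ⟨hp1, hp2, hp3⟩ := mem_pairsLT.mp hp
      simp only [mem_Ico] at hp1 hp2
      rw [mem_pairsLT]
      dsimp only
      simp only [mem_range]
      omega
    · intro q hq
      obtain ⟨hq1, hq2, hq3⟩ := mem_pairsLT.mp hq
      simp only [mem_range] at hq1 hq2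
      rw [mem_pairsLT]
      dsimp only
      simp only [mem_Ico]
      omega
    · intro p hp
      obtain ⟨hp1, hp2, hp3⟩ := mem_pairsLT.mp hp
      simp only [mem_Ico] at hp1 hp2
      rw [Prod.ext_iff]
      constructor <;> simp only <;> omega
    · intro q hq
      obtain ⟨hq1, hq2, hq3⟩ := mem_pairsLT.mp hq
      simp only [mem_range] at hq1 hq2
      rw [Prod.ext_iff]
      constructor <;> simp only <;> omega
    · intro p hp
      obtain ⟨hp1, hp2, hp3⟩ := mem_pairsLT.mp hp
      simp only [mem_Ico] at hp1 hp2
      rw [E_hh hmu hrs hp1.1 hp3 hp2.2]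
      dsimp only
      exact congrArg f (by omega)
  rw [step1]
  calc ∏ q ∈ pairsLT (range s), f (eN s mu q.1 - eN s mu q.2 + (q.2 - q.1))
      = ∏ p ∈ pairsLT (range s), (fun i j => f (eN s mu i - eN s mu j + (j - i))) p.1 p.2 := rfl
    _ = ∏ q ∈ Finset.univ.filter (fun q : Fin s × Fin s => q.1 < q.2),
          (fun i j => f (eN s mu i - eN s mu j + (j - i))) (q.1 : ℕ) (q.2 : ℕ) :=
        (finPairs_prod s (fun i j => f (eN s mu i - eN s mu j + (j - i)))).symm
    _ = QN s mu := by
        unfold QN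
        refine Finset.prod_congr rfl fun q hq => ?_
        simp only
        rw [eN_pos s mu q.1.isLt, eN_pos s mu q.2.isLt]

lemma A3_mod (hn : d + r + s + 1 ≤ n) :
    MOD d (∏ p ∈ range r ×ˢ Ico (n-s) n, f (E r s lam mu n p.1 p.2)) 1 := by
  refine MOD.congr (MOD.prod (range r ×ˢ Ico (n-s) n) (fun p => f (E r s lam mu n p.1 p.2))
    (fun _ => 1) fun p hp => ?_) rfl Finset.prod_const_one
  simp only [Finset.mem_product, mem_range, mem_Ico] at hp
  exact MOD_f_one (E_lh hn hp.1 hp.2.1 hp.2.2)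

lemma A4_eq (hrs : r + s ≤ n) :
    ∏ p ∈ pairsLT (Ico r (n-s)), f (E r s lam mu n p.1 p.2)
      = ∏ L ∈ range (n-s-r), ∏ c ∈ Ioc 0 L, f c := by
  rw [show ∏ p ∈ pairsLT (Ico r (n-s)), f (E r s lam mu n p.1 p.2)
      = ∏ p ∈ pairsLT (Ico r (n-s)), (fun i j => f (E r s lam mu n i j)) p.1 p.2 from rfl,
    prod_pairsLT (Ico r (n-s)) (fun i j => f (E r s lam mu n i j))]
  have h1 : ∀ i ∈ Ico r (n-s),
      ∏ j ∈ (Ico r (n-s)).filter (fun j => i < j), f (E r s lam mu n i j)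
        = ∏ c ∈ Ioc 0 (n-s-1-i), f c := by
    intro i hi
    simp only [mem_Ico] at hi
    have hf : (Ico r (n-s)).filter (fun j => i < j) = Ico (i+1) (n-s) := by
      ext j
      simp only [Finset.mem_filter, mem_Ico]
      omega
    rw [hf]
    have h2 : ∀ j ∈ Ico (i+1) (n-s), f (E r s lam mu n i j) = f (0 + j - i) := by
      intro j hj
      simp only [mem_Ico] at hj
      rw [E_mm hrs hi.1 hj.1 hj.2]
      exact congrArg f (by omega)
    rw [Finset.prod_congr rfl h2,
      prod_Ico_shift f (a := i+1) (b := n-s) (o := 0) (i := i) (by omega) (by omega)]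
    have e1 : 0 + (i+1) - i - 1 = 0 := by omega
    have e2 : 0 + (n-s) - i - 1 = n-s-1-i := by omega
    rw [e1, e2]
  rw [Finset.prod_congr rfl h1]
  refine Finset.prod_nbij' (fun i => n-s-1-i) (fun L => n-s-1-L) ?_ ?_ ?_ ?_ ?_
  · intro i hi; simp only [mem_Ico] at hi; simp only [mem_range]; omega
  · intro L hL; simp only [mem_range] at hL; simp only [mem_Ico]; omega
  · intro i hi; simp only [mem_Ico] at hi; omega
  · intro L hL; simp only [mem_range] at hL; omega
  · intro i hi; simp only [mem_Ico] at hi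
    have e1 : n-s-1-i = n-s-1-i := rfl
    rfl

end Blocks

lemma QD_eq (r : ℕ) : QD r = ∏ i ∈ range r, ∏ c ∈ Ioc 0 (r - i - 1), f c := by
  unfold QD
  calc ∏ q ∈ Finset.univ.filter (fun q : Fin r × Fin r => q.1 < q.2), f ((q.2 : ℕ) - (q.1 : ℕ))
      = ∏ q ∈ Finset.univ.filter (fun q : Fin r × Fin r => q.1 < q.2),
          (fun i j => f (j - i)) (q.1 : ℕ) (q.2 : ℕ) := rfl
    _ = ∏ p ∈ pairsLT (range r), (fun i j => f (j - i)) p.1 p.2 :=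
        finPairs_prod r (fun i j => f (j - i))
    _ = ∏ i ∈ range r, ∏ j ∈ (range r).filter (fun j => i < j), f (j - i) :=
        prod_pairsLT (range r) (fun i j => f (j - i))
    _ = ∏ i ∈ range r, ∏ c ∈ Ioc 0 (r - i - 1), f c := by
        refine Finset.prod_congr rfl fun i hi => ?_
        simp only [mem_range] at hi
        have hf : (range r).filter (fun j => i < j) = Ico (i+1) r := by
          ext j; simp only [Finset.mem_filter, mem_range, mem_Ico]; omega
        rw [hf, Finset.prod_congr rfl
            (fun j (hj : j ∈ Ico (i+1) r) => congrArg f (show j - i = 0 + j - i by omega)),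
          prod_Ico_shift f (a := i+1) (b := r) (o := 0) (i := i) (by omega) (by omega)]
        have e1 : 0 + (i+1) - i - 1 = 0 := by omega
        have e2 : 0 + r - i - 1 = r - i - 1 := by omega
        rw [e1, e2]

lemma Hh_eq (r : ℕ) (lam : Fin r → ℕ) :
    Hh r lam = ∏ i ∈ range r, ∏ c ∈ Ioc (r - i - 1) (eN r lam i + r - i - 1), f c := by
  unfold Hh
  have h0 : ∀ i : Fin r, ∏ k ∈ Finset.range (lam i), f (r + k - (i:ℕ))
      = (fun t => ∏ c ∈ Ioc (r - t - 1) (eN r lam t + r - t - 1), f c) (i:ℕ) := by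
    intro i
    simp only
    rw [show lam i = eN r lam (i:ℕ) from (eN_pos r lam i.isLt).symm, ← Nat.Ico_zero_eq_range,
      prod_Ico_shift f (a := 0) (b := eN r lam (i:ℕ)) (o := r) (i := (i:ℕ))
        (by have := i.isLt; omega) (Nat.zero_le _)]
    have e1 : r + 0 - (i:ℕ) - 1 = r - (i:ℕ) - 1 := by omega
    have e2 : r + eN r lam (i:ℕ) - (i:ℕ) - 1 = eN r lam (i:ℕ) + r - (i:ℕ) - 1 := by omega
    rw [e1, e2]
  rw [Finset.prod_congr rfl (fun i _ => h0 i),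
    Fin.prod_univ_eq_prod_range (fun t => ∏ c ∈ Ioc (r - t - 1) (eN r lam t + r - t - 1), f c) r]

section Assembles
variable {r s d n : ℕ} {lam : Fin r → ℕ} {mu : Fin s → ℕ}

lemma lam_assemble (hrs : r + s ≤ n) :
    QD r * Hh r lam * ∏ p ∈ range r ×ˢ Ico r (n-s), f (E r s lam mu n p.1 p.2)
      = ∏ i ∈ range r, ∏ c ∈ Ioc 0 (eN r lam i + (n-s) - i - 1), f c := by
  have hB2 : ∏ p ∈ range r ×ˢ Ico r (n-s), f (E r s lam mu n p.1 p.2)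
      = ∏ i ∈ range r, ∏ c ∈ Ioc (eN r lam i + r - i - 1) (eN r lam i + (n-s) - i - 1), f c := by
    rw [show ∏ p ∈ range r ×ˢ Ico r (n-s), f (E r s lam mu n p.1 p.2)
        = ∏ p ∈ range r ×ˢ Ico r (n-s), (fun i j => f (E r s lam mu n i j)) p.1 p.2 from rfl,
      Finset.prod_product' (range r) (Ico r (n-s)) (fun i j => f (E r s lam mu n i j))]
    refine Finset.prod_congr rfl fun i hi => ?_
    simp only [mem_range] at hi
    have hbody : ∀ j ∈ Ico r (n-s), f (E r s lam mu n i j) = f (eN r lam i + j - i) := by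
      intro j hj
      simp only [mem_Ico] at hj
      rw [E_lm hrs hi hj.1 hj.2]
    rw [Finset.prod_congr rfl hbody,
      prod_Ico_shift f (a := r) (b := n-s) (o := eN r lam i) (i := i) (by omega) (by omega)]
  rw [QD_eq, Hh_eq, hB2, ← Finset.prod_mul_distrib, ← Finset.prod_mul_distrib]
  refine Finset.prod_congr rfl fun i hi => ?_
  simp only [mem_range] at hi
  rw [Finset.prod_Ioc_consecutive f (by omega) (by omega),
    Finset.prod_Ioc_consecutive f (by omega) (by omega)]

lemma mu_assemble (hrs : r + s + 1 ≤ n) :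
    QD s * Hh s mu * ∏ p ∈ Ico r (n-s) ×ˢ Ico (n-s) n, f (E r s lam mu n p.1 p.2)
      = ∏ u ∈ range s, ∏ c ∈ Ioc 0 (eN s mu u + (n-1-u) - r), f c := by
  have hB5 : ∏ p ∈ Ico r (n-s) ×ˢ Ico (n-s) n, f (E r s lam mu n p.1 p.2)
      = ∏ u ∈ range s,
          ∏ c ∈ Ioc (eN s mu u + s - u - 1) (eN s mu u + (n-1-u) - r), f c := by
    rw [show ∏ p ∈ Ico r (n-s) ×ˢ Ico (n-s) n, f (E r s lam mu n p.1 p.2)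
        = ∏ p ∈ Ico r (n-s) ×ˢ Ico (n-s) n, (fun i j => f (E r s lam mu n i j)) p.1 p.2 from rfl,
      Finset.prod_product_right' (Ico r (n-s)) (Ico (n-s) n)
        (fun i j => f (E r s lam mu n i j))]
    have hinner : ∀ j ∈ Ico (n-s) n,
        ∏ i ∈ Ico r (n-s), f (E r s lam mu n i j)
          = ∏ c ∈ Ioc (eN s mu (n-1-j) + j - (n-s)) (eN s mu (n-1-j) + j - r), f c := by
      intro j hj
      simp only [mem_Ico] at hj
      have hbody : ∀ i ∈ Ico r (n-s), f (E r s lam mu n i j)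
          = f (eN s mu (n-1-j) + j - i) := by
        intro i hi
        simp only [mem_Ico] at hi
        rw [E_mh (by omega) hi.1 hi.2 hj.1 hj.2]
      rw [Finset.prod_congr rfl hbody,
        prod_Ico_shift_neg f (a := r) (b := n-s) (o := eN s mu (n-1-j) + j)
          (by omega) (by omega)]
    rw [Finset.prod_congr rfl hinner]
    refine Finset.prod_nbij' (fun j => n-1-j) (fun u => n-1-u) ?_ ?_ ?_ ?_ ?_
    · intro j hj; simp only [mem_Ico] at hj; simp only [mem_range]; omega
    · intro u hu; simp only [mem_range] at hu; simp only [mem_Ico]; omega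
    · intro j hj; simp only [mem_Ico] at hj; omega
    · intro u hu; simp only [mem_range] at hu; omega
    · intro j hj
      simp only [mem_Ico] at hj
      have e1 : eN s mu (n-1-j) + j - (n-s) = eN s mu (n-1-j) + s - (n-1-j) - 1 := by omega
      have e2 : eN s mu (n-1-j) + j - r = eN s mu (n-1-j) + (n-1-(n-1-j)) - r := by omega
      rw [e1, e2]
  rw [QD_eq, Hh_eq, hB5, ← Finset.prod_mul_distrib, ← Finset.prod_mul_distrib]
  refine Finset.prod_congr rfl fun u hu => ?_
  simp only [mem_range] at hu
  rw [Finset.prod_Ioc_consecutive f (by omega) (by omega),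
    Finset.prod_Ioc_consecutive f (by omega) (by omega)]

end Assembles

lemma rangeT (d : ℕ) : (∏ L ∈ range d, ∏ c ∈ Ioc 0 L, f c) * (Pi2 d * T d) = T d ^ d := by
  rcases Nat.eq_zero_or_pos d with hd | hd
  · subst hd; simp [Pi2, T]
  have h1 : Pi2 d = ∏ e ∈ Ioc 0 d, f e ^ (e - 1) := by
    rw [Pi2, show (2:ℕ) = 1 + 1 from rfl, Finset.Icc_add_one_left_eq_Ioc,
      ← Finset.prod_Ioc_consecutive (fun e => f e ^ (e - 1)) (Nat.zero_le 1) hd,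
      Nat.Ioc_succ_singleton, Finset.prod_singleton]
    norm_num
  have h2 : Pi2 d * T d = ∏ e ∈ Ioc 0 d, f e ^ e := by
    rw [h1, T_Ioc, ← Finset.prod_mul_distrib]
    refine Finset.prod_congr rfl fun e he => ?_
    simp only [mem_Ioc] at he
    rw [← pow_succ]
    congr 1
    omega
  have h3 : (∏ L ∈ range d, ∏ e ∈ Ioc L d, f e) = ∏ e ∈ Ioc 0 d, f e ^ e := by
    rw [Finset.prod_comm' (s := range d) (t := fun L => Ioc L d) (t' := Ioc 0 d)
      (s' := fun e => range e)
      (fun L e => by simp only [mem_range, mem_Ioc]; omega)]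
    exact Finset.prod_congr rfl fun e he => by rw [Finset.prod_const, card_range]
  calc (∏ L ∈ range d, ∏ c ∈ Ioc 0 L, f c) * (Pi2 d * T d)
      = (∏ L ∈ range d, ∏ c ∈ Ioc 0 L, f c) * (∏ L ∈ range d, ∏ e ∈ Ioc L d, f e) := by
        rw [h2, h3]
    _ = ∏ L ∈ range d, ((∏ c ∈ Ioc 0 L, f c) * ∏ e ∈ Ioc L d, f e) :=
        (Finset.prod_mul_distrib).symm
    _ = ∏ L ∈ range d, T d := Finset.prod_congr rfl fun L hL => by
        rw [Finset.prod_Ioc_consecutive f (Nat.zero_le L) (le_of_lt (mem_range.mp hL)), T_Ioc]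
    _ = T d ^ d := by rw [Finset.prod_const, card_range]

section MainMod
variable {r s d n : ℕ} {lam : Fin r → ℕ} {mu : Fin s → ℕ}

lemma main_mod (hlam : Antitone lam) (hmu : Antitone mu) (hn : d + r + s + 1 ≤ n) :
    MOD d (Pn r s lam mu n * (QD r * QD s * Hh r lam * Hh s mu * Pi2 d * T d))
          (QN r lam * QN s mu * T d ^ n) := by
  have hrs : r + s ≤ n := by omega
  have hrs1 : r + s + 1 ≤ n := by omega
  set B2 := ∏ p ∈ range r ×ˢ Ico r (n-s), f (E r s lam mu n p.1 p.2) with hB2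
  set B3 := ∏ p ∈ range r ×ˢ Ico (n-s) n, f (E r s lam mu n p.1 p.2) with hB3
  set B5 := ∏ p ∈ Ico r (n-s) ×ˢ Ico (n-s) n, f (E r s lam mu n p.1 p.2) with hB5
  have hd' : Pn r s lam mu n
      = QN r lam * (B2 * (B3 * ((∏ L ∈ range (n-s-r), ∏ c ∈ Ioc 0 L, f c) *
          (B5 * QN s mu)))) := by
    rw [Pn, ← A1_eq (n := n) (mu := mu) hlam hrs, ← A6_eq (lam := lam) hmu hrs1,
      ← A4_eq (lam := lam) (mu := mu) hrs, hB2, hB3, hB5]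
    exact pairs_decomp r (n-s) n (by omega) (by omega) (fun i j => f (E r s lam mu n i j))
  have hsplit : (∏ L ∈ range (n-s-r), ∏ c ∈ Ioc 0 L, f c)
      = (∏ L ∈ range d, ∏ c ∈ Ioc 0 L, f c) * (∏ L ∈ Ico d (n-s-r), ∏ c ∈ Ioc 0 L, f c) :=
    (Finset.prod_range_mul_prod_Ico _ (by omega)).symm
  have m2 : MOD d (QD r * Hh r lam * B2) (T d ^ r) := by
    rw [hB2, lam_assemble (mu := mu) hrs]
    refine MOD.congr (MOD.prod (range r) _ (fun _ => T d) fun i hi => TT_mod ?_) rfl ?_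
    · simp only [mem_range] at hi
      omega
    · rw [Finset.prod_const, card_range]
  have m5 : MOD d (QD s * Hh s mu * B5) (T d ^ s) := by
    rw [hB5, mu_assemble (lam := lam) hrs1]
    refine MOD.congr (MOD.prod (range s) _ (fun _ => T d) fun u hu => TT_mod ?_) rfl ?_
    · simp only [mem_range] at hu
      omega
    · rw [Finset.prod_const, card_range]
  have m3 : MOD d B3 1 := by rw [hB3]; exact A3_mod hn
  have mI : MOD d (∏ L ∈ Ico d (n-s-r), ∏ c ∈ Ioc 0 L, f c) (T d ^ (n-s-r-d)) := by
    refine MOD.congr (MOD.prod (Ico d (n-s-r)) _ (fun _ => T d)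
      fun L hL => TT_mod (mem_Ico.mp hL).1) rfl ?_
    rw [Finset.prod_const, Nat.card_Ico]
  have mR : MOD d ((∏ L ∈ range d, ∏ c ∈ Ioc 0 L, f c) * (Pi2 d * T d)) (T d ^ d) :=
    MOD.congr (MOD.refl d (T d ^ d)) (rangeT d).symm rfl
  have comb : MOD d
      ((QN r lam * QN s mu) * (B3 * ((QD r * Hh r lam * B2) * ((QD s * Hh s mu * B5) *
        (((∏ L ∈ range d, ∏ c ∈ Ioc 0 L, f c) * (Pi2 d * T d)) *
          (∏ L ∈ Ico d (n-s-r), ∏ c ∈ Ioc 0 L, f c))))))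
      ((QN r lam * QN s mu) * (1 * ((T d ^ r) * ((T d ^ s) * ((T d ^ d) *
        (T d ^ (n-s-r-d))))))) :=
    (MOD.refl _ _).mul (m3.mul (m2.mul (m5.mul (mR.mul mI))))
  refine MOD.congr comb ?_ ?_
  · rw [hd', hsplit]; ring
  · have hn2 : r + (s + (d + (n-s-r-d))) = n := by omega
    rw [one_mul, ← pow_add, ← pow_add, ← pow_add, hn2, mul_assoc]

end MainMod

/-! ### Bridges between `Cn`, `Cinf` and the normalized products -/

lemma T_def (d : ℕ) : T d = ∏ j ∈ Finset.Icc 1 d, (1 - (PowerSeries.X : PowerSeries ℚ)^j) := rfl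

lemma inv_pow_T (d n : ℕ) (hn : 1 ≤ n) : ((T d)⁻¹)^(n-1) * T d ^ n = T d := by
  have h1 : T d ^ n = T d ^ (n-1) * T d := by
    rw [← pow_succ]
    congr 1
    omega
  rw [h1, ← mul_assoc, ← mul_pow, T_inv_mul, one_pow, one_mul]

section Bridge
variable {r s d n : ℕ} {lam : Fin r → ℕ} {mu : Fin s → ℕ}

lemma PF_eq :
    (∏ q ∈ Finset.univ.filter (fun q : Fin n × Fin n => q.1 < q.2),
      (1 - (PowerSeries.X : PowerSeries ℚ) ^
        ((hw r s n lam mu q.1 - hw r s n lam mu q.2 + ((q.2 : ℕ) : ℤ) - ((q.1 : ℕ) : ℤ)).toNat)))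
      = Pn r s lam mu n := by
  rw [Pn]
  calc ∏ q ∈ Finset.univ.filter (fun q : Fin n × Fin n => q.1 < q.2),
      (1 - (PowerSeries.X : PowerSeries ℚ) ^
        ((hw r s n lam mu q.1 - hw r s n lam mu q.2 + ((q.2 : ℕ) : ℤ) - ((q.1 : ℕ) : ℤ)).toNat))
      = ∏ q ∈ Finset.univ.filter (fun q : Fin n × Fin n => q.1 < q.2),
        (fun i j => f (E r s lam mu n i j)) (q.1 : ℕ) (q.2 : ℕ) := by
        refine Finset.prod_congr rfl fun q hq => ?_
        rw [hwE r s n lam mu q]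
        rfl
    _ = ∏ p ∈ pairsLT (range n), (fun i j => f (E r s lam mu n i j)) p.1 p.2 :=
        finPairs_prod n (fun i j => f (E r s lam mu n i j))
    _ = ∏ p ∈ pairsLT (range n), f (E r s lam mu n p.1 p.2) := rfl

lemma Cn_bridge (hn : 1 ≤ n) :
    Cn r s lam mu n d * (T d ^ n * (QD r * QD s * Hh r lam * Hh s mu * Pi2 d))
      = (PowerSeries.X : PowerSeries ℚ) ^ ((∑ i : Fin n, (hw r s n lam mu i) ^ 2).toNat / 2) *
        (Pn r s lam mu n * (QD r * QD s * Hh r lam * Hh s mu * Pi2 d * T d)) := by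
  unfold Cn
  rw [PF_eq, ← T_def]
  calc (PowerSeries.X : PowerSeries ℚ) ^ ((∑ i : Fin n, (hw r s n lam mu i) ^ 2).toNat / 2) *
        Pn r s lam mu n * ((T d)⁻¹)^(n-1) *
        (T d ^ n * (QD r * QD s * Hh r lam * Hh s mu * Pi2 d))
      = (PowerSeries.X : PowerSeries ℚ) ^ ((∑ i : Fin n, (hw r s n lam mu i) ^ 2).toNat / 2) *
        (Pn r s lam mu n * (QD r * QD s * Hh r lam * Hh s mu * Pi2 d *
          (((T d)⁻¹)^(n-1) * T d ^ n))) := by ring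
    _ = _ := by rw [inv_pow_T d n hn]

lemma Cinf_bridge :
    Cinf r s lam mu d * (QD r * QD s * Hh r lam * Hh s mu * Pi2 d)
      = (PowerSeries.X : PowerSeries ℚ) ^ ((∑ i, (lam i) ^ 2 + ∑ j, (mu j) ^ 2) / 2) *
        (QN r lam * QN s mu) := by
  have c1 : (∏ j ∈ Finset.Icc 2 d, ((1 - (PowerSeries.X : PowerSeries ℚ) ^ j)⁻¹) ^ (j - 1))
      * Pi2 d = 1 := by
    rw [Pi2, ← Finset.prod_mul_distrib]
    rw [Finset.prod_congr rfl (fun j hj => ?_)]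
    · exact Finset.prod_const_one
    · simp only [mem_Icc] at hj
      show ((f j)⁻¹) ^ (j - 1) * (f j) ^ (j - 1) = 1
      rw [← mul_pow, f_inv_mul (by omega), one_pow]
  have c2 : (∏ q ∈ Finset.univ.filter (fun q : Fin r × Fin r => q.1 < q.2),
      (1 - (PowerSeries.X : PowerSeries ℚ) ^ (lam q.1 - lam q.2 + ((q.2 : ℕ) - (q.1 : ℕ)))) *
        (1 - (PowerSeries.X : PowerSeries ℚ) ^ ((q.2 : ℕ) - (q.1 : ℕ)))⁻¹) * QD r
      = QN r lam := by
    rw [QD, QN, ← Finset.prod_mul_distrib]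
    refine Finset.prod_congr rfl fun q hq => ?_
    simp only [Finset.mem_filter, Finset.mem_univ, true_and] at hq
    have h1 : 1 ≤ (q.2 : ℕ) - (q.1 : ℕ) := by
      have := (Fin.lt_iff_val_lt_val).mp hq
      omega
    show f (lam q.1 - lam q.2 + ((q.2 : ℕ) - (q.1 : ℕ))) *
      (f ((q.2 : ℕ) - (q.1 : ℕ)))⁻¹ * f ((q.2 : ℕ) - (q.1 : ℕ)) = _
    rw [mul_assoc, f_inv_mul h1, mul_one]
  have c3 : (∏ q ∈ Finset.univ.filter (fun q : Fin s × Fin s => q.1 < q.2),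
      (1 - (PowerSeries.X : PowerSeries ℚ) ^ (mu q.1 - mu q.2 + ((q.2 : ℕ) - (q.1 : ℕ)))) *
        (1 - (PowerSeries.X : PowerSeries ℚ) ^ ((q.2 : ℕ) - (q.1 : ℕ)))⁻¹) * QD s
      = QN s mu := by
    rw [QD, QN, ← Finset.prod_mul_distrib]
    refine Finset.prod_congr rfl fun q hq => ?_
    simp only [Finset.mem_filter, Finset.mem_univ, true_and] at hq
    have h1 : 1 ≤ (q.2 : ℕ) - (q.1 : ℕ) := by
      have := (Fin.lt_iff_val_lt_val).mp hq
      omega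
    show f (mu q.1 - mu q.2 + ((q.2 : ℕ) - (q.1 : ℕ))) *
      (f ((q.2 : ℕ) - (q.1 : ℕ)))⁻¹ * f ((q.2 : ℕ) - (q.1 : ℕ)) = _
    rw [mul_assoc, f_inv_mul h1, mul_one]
  have c4 : (∏ i : Fin r, ∏ k ∈ Finset.range (lam i),
      (1 - (PowerSeries.X : PowerSeries ℚ) ^ (r + k - (i : ℕ)))⁻¹) * Hh r lam = 1 := by
    rw [Hh, ← Finset.prod_mul_distrib]
    rw [Finset.prod_congr rfl (fun i (hi : i ∈ Finset.univ) => ?_)]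
    · exact Finset.prod_const_one
    · rw [← Finset.prod_mul_distrib]
      rw [Finset.prod_congr rfl (fun k hk => ?_)]
      · exact Finset.prod_const_one
      · show (f (r + k - (i : ℕ)))⁻¹ * f (r + k - (i : ℕ)) = 1
        exact f_inv_mul (by have := i.isLt; omega)
  have c5 : (∏ i : Fin s, ∏ k ∈ Finset.range (mu i),
      (1 - (PowerSeries.X : PowerSeries ℚ) ^ (s + k - (i : ℕ)))⁻¹) * Hh s mu = 1 := by
    rw [Hh, ← Finset.prod_mul_distrib]
    rw [Finset.prod_congr rfl (fun i (hi : i ∈ Finset.univ) => ?_)]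
    · exact Finset.prod_const_one
    · rw [← Finset.prod_mul_distrib]
      rw [Finset.prod_congr rfl (fun k hk => ?_)]
      · exact Finset.prod_const_one
      · show (f (s + k - (i : ℕ)))⁻¹ * f (s + k - (i : ℕ)) = 1
        exact f_inv_mul (by have := i.isLt; omega)
  unfold Cinf
  calc _ = (PowerSeries.X : PowerSeries ℚ) ^ ((∑ i, (lam i) ^ 2 + ∑ j, (mu j) ^ 2) / 2) *
      (((∏ j ∈ Finset.Icc 2 d, ((1 - (PowerSeries.X : PowerSeries ℚ) ^ j)⁻¹) ^ (j - 1)) * Pi2 d) *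
      (((∏ q ∈ Finset.univ.filter (fun q : Fin r × Fin r => q.1 < q.2),
        (1 - (PowerSeries.X : PowerSeries ℚ) ^ (lam q.1 - lam q.2 + ((q.2 : ℕ) - (q.1 : ℕ)))) *
          (1 - (PowerSeries.X : PowerSeries ℚ) ^ ((q.2 : ℕ) - (q.1 : ℕ)))⁻¹) * QD r) *
      (((∏ q ∈ Finset.univ.filter (fun q : Fin s × Fin s => q.1 < q.2),
        (1 - (PowerSeries.X : PowerSeries ℚ) ^ (mu q.1 - mu q.2 + ((q.2 : ℕ) - (q.1 : ℕ)))) *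
          (1 - (PowerSeries.X : PowerSeries ℚ) ^ ((q.2 : ℕ) - (q.1 : ℕ)))⁻¹) * QD s) *
      (((∏ i : Fin r, ∏ k ∈ Finset.range (lam i),
        (1 - (PowerSeries.X : PowerSeries ℚ) ^ (r + k - (i : ℕ)))⁻¹) * Hh r lam) *
      ((∏ i : Fin s, ∏ k ∈ Finset.range (mu i),
        (1 - (PowerSeries.X : PowerSeries ℚ) ^ (s + k - (i : ℕ)))⁻¹) * Hh s mu))))) := by
        ring
    _ = _ := by rw [c1, c2, c3, c4, c5]; ring

end Bridge

/-! ### The exponent of `X` -/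

section Expo
variable {r s n : ℕ} {lam : Fin r → ℕ} {mu : Fin s → ℕ}

lemma exp_eq (hrs : r + s + 1 ≤ n) :
    (∑ i : Fin n, (hw r s n lam mu i) ^ 2).toNat / 2
      = (∑ i, (lam i) ^ 2 + ∑ j, (mu j) ^ 2) / 2 := by
  suffices h : (∑ i : Fin n, (hw r s n lam mu i) ^ 2)
      = ((∑ i, (lam i) ^ 2 + ∑ j, (mu j) ^ 2 : ℕ) : ℤ) by
    rw [h, Int.toNat_natCast]
  have h0 : ∀ i : Fin n, (hw r s n lam mu i) ^ 2
      = (fun k => ((eN r lam k : ℤ) - (eN s mu (n-1-k) : ℤ)) ^ 2) (i : ℕ) := by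
    intro i
    rw [hw, extZ_eq, extZ_eq]
  rw [Finset.sum_congr rfl (fun i _ => h0 i),
    Fin.sum_univ_eq_sum_range (fun k => ((eN r lam k : ℤ) - (eN s mu (n-1-k) : ℤ)) ^ 2) n,
    range_eq_Ico,
    ← Finset.sum_Ico_consecutive (fun k => ((eN r lam k : ℤ) - (eN s mu (n-1-k) : ℤ)) ^ 2)
      (Nat.zero_le r) (show r ≤ n by omega),
    ← Finset.sum_Ico_consecutive (fun k => ((eN r lam k : ℤ) - (eN s mu (n-1-k) : ℤ)) ^ 2)
      (show r ≤ n - s by omega) (show n - s ≤ n by omega)]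
  have hmid : ∑ k ∈ Ico r (n-s), ((eN r lam k : ℤ) - (eN s mu (n-1-k) : ℤ)) ^ 2 = 0 := by
    refine Finset.sum_eq_zero fun k hk => ?_
    simp only [mem_Ico] at hk
    rw [eN_zero r lam hk.1, eN_zero s mu (by omega)]
    norm_num
  have hleft : ∑ k ∈ Ico 0 r, ((eN r lam k : ℤ) - (eN s mu (n-1-k) : ℤ)) ^ 2
      = ((∑ i, (lam i) ^ 2 : ℕ) : ℤ) := by
    have : ∀ k ∈ Ico 0 r, ((eN r lam k : ℤ) - (eN s mu (n-1-k) : ℤ)) ^ 2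
        = (fun t => (((eN r lam t) ^ 2 : ℕ) : ℤ)) k := by
      intro k hk
      simp only [mem_Ico] at hk
      rw [eN_zero s mu (by omega)]
      push_cast
      ring
    rw [Finset.sum_congr rfl this, ← range_eq_Ico,
      Fin.sum_univ_eq_sum_range (fun t => (((eN r lam t) ^ 2 : ℕ) : ℤ)) r |>.symm]
    rw [show (∑ i : Fin r, (fun t => (((eN r lam t) ^ 2 : ℕ) : ℤ)) (i : ℕ))
        = ∑ i : Fin r, (((lam i) ^ 2 : ℕ) : ℤ) from
      Finset.sum_congr rfl fun i _ => by simp only; rw [eN_pos r lam i.isLt]]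
    push_cast
    ring
  have hright : ∑ k ∈ Ico (n-s) n, ((eN r lam k : ℤ) - (eN s mu (n-1-k) : ℤ)) ^ 2
      = ((∑ j, (mu j) ^ 2 : ℕ) : ℤ) := by
    have h1 : ∑ k ∈ Ico (n-s) n, ((eN r lam k : ℤ) - (eN s mu (n-1-k) : ℤ)) ^ 2
        = ∑ u ∈ range s, (((eN s mu u) ^ 2 : ℕ) : ℤ) := by
      refine Finset.sum_nbij' (fun k => n-1-k) (fun u => n-1-u) ?_ ?_ ?_ ?_ ?_
      · intro k hk; simp only [mem_Ico] at hk; simp only [mem_range]; omega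
      · intro u hu; simp only [mem_range] at hu; simp only [mem_Ico]; omega
      · intro k hk; simp only [mem_Ico] at hk; omega
      · intro u hu; simp only [mem_range] at hu; omega
      · intro k hk
        simp only [mem_Ico] at hk
        rw [eN_zero r lam (by omega)]
        push_cast
        ring
    rw [h1, Fin.sum_univ_eq_sum_range (fun t => (((eN s mu t) ^ 2 : ℕ) : ℤ)) s |>.symm,
      show (∑ i : Fin s, (fun t => (((eN s mu t) ^ 2 : ℕ) : ℤ)) (i : ℕ))
        = ∑ i : Fin s, (((mu i) ^ 2 : ℕ) : ℤ) from
      Finset.sum_congr rfl fun i _ => by simp only; rw [eN_pos s mu i.isLt]]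
    push_cast
    ring
  rw [hmid, hleft, hright]
  push_cast
  ring

end Expo

/-! ### Constant coefficients -/

lemma cc_QD (r : ℕ) : constantCoeff (R := ℚ) (QD r) = 1 := by
  rw [QD, map_prod]
  rw [Finset.prod_congr rfl (fun q hq => ?_)]
  · exact Finset.prod_const_one
  · simp only [Finset.mem_filter, Finset.mem_univ, true_and] at hq
    exact cc_f (by have := (Fin.lt_iff_val_lt_val).mp hq; omega)

lemma cc_Hh (r : ℕ) (lam : Fin r → ℕ) : constantCoeff (R := ℚ) (Hh r lam) = 1 := by
  rw [Hh, map_prod]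
  rw [Finset.prod_congr rfl (fun i (hi : i ∈ Finset.univ) => ?_)]
  · exact Finset.prod_const_one
  · rw [map_prod]
    rw [Finset.prod_congr rfl (fun k hk => cc_f (by have := i.isLt; omega))]
    exact Finset.prod_const_one

lemma cc_Pi2 (d : ℕ) : constantCoeff (R := ℚ) (Pi2 d) = 1 := by
  rw [Pi2, map_prod]
  rw [Finset.prod_congr rfl (fun j hj => ?_)]
  · exact Finset.prod_const_one
  · simp only [mem_Icc] at hj
    rw [map_pow, cc_f (by omega), one_pow]

end ProofAux

/-- For fixed partitions `λ, μ` with `|λ| = |μ|`, the coefficients of the series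
`C_{[λ,μ]_n, n}(q)` stabilize as `n → ∞` to the coefficients of `C_{λ,μ,∞}(q)`:
for every degree `d` there is `N` such that for all `n ≥ N` the `q^d`-coefficients
agree. -/
theorem stmt_10 (r s : ℕ) (lam : Fin r → ℕ) (mu : Fin s → ℕ)
    (hlam : Antitone lam) (hmu : Antitone mu) (hsize : ∑ i, lam i = ∑ j, mu j) :
    ∀ d : ℕ, ∃ N : ℕ, ∀ n ≥ N,
      PowerSeries.coeff (R := ℚ) d (Cn r s lam mu n d) =
        PowerSeries.coeff (R := ℚ) d (Cinf r s lam mu d) := by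
  intro d
  refine ⟨d + r + s + 1, fun n hn => ?_⟩
  have hn1 : 1 ≤ n := by omega
  have hrs1 : r + s + 1 ≤ n := by omega
  have hcc : constantCoeff (R := ℚ) (T d ^ n * (QD r * QD s * Hh r lam * Hh s mu * Pi2 d)) ≠ 0 := by
    rw [map_mul, map_pow, cc_T, map_mul, map_mul, map_mul, map_mul, cc_QD, cc_QD,
      cc_Hh, cc_Hh, cc_Pi2]
    norm_num
  have hmod : MOD d
      (Cn r s lam mu n d * (T d ^ n * (QD r * QD s * Hh r lam * Hh s mu * Pi2 d)))
      (Cinf r s lam mu d * (T d ^ n * (QD r * QD s * Hh r lam * Hh s mu * Pi2 d))) := by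
    refine MOD.congr
      ((MOD.refl d ((PowerSeries.X : PowerSeries ℚ) ^
          ((∑ i : Fin n, (hw r s n lam mu i) ^ 2).toNat / 2))).mul
        (main_mod hlam hmu hn)) (Cn_bridge hn1).symm ?_
    rw [exp_eq hrs1]
    calc (PowerSeries.X : PowerSeries ℚ) ^ ((∑ i, (lam i) ^ 2 + ∑ j, (mu j) ^ 2) / 2) *
        (QN r lam * QN s mu * T d ^ n)
        = ((PowerSeries.X : PowerSeries ℚ) ^ ((∑ i, (lam i) ^ 2 + ∑ j, (mu j) ^ 2) / 2) *
          (QN r lam * QN s mu)) * T d ^ n := by ring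
      _ = (Cinf r s lam mu d * (QD r * QD s * Hh r lam * Hh s mu * Pi2 d)) * T d ^ n := by
          rw [Cinf_bridge]
      _ = Cinf r s lam mu d * (T d ^ n * (QD r * QD s * Hh r lam * Hh s mu * Pi2 d)) := by
          ring
  exact (MOD.cancel hcc hmod).coeff_eq

end Stmt10
end
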